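/- arXiv:2306.11851 — 10 statements merged into one kernel-verified Lean document; each statement's English description precedes it below -/
import Mathlib

section
/- Let a : [0,1] → ℝ be continuous on [0,1] and differentiable on (0,1], with a(0) = 0 and a(x) > 0 for every x ∈ (0,1], and let K > 0 be such that x·|a'(x)| ≤ K·a(x) for all x ∈ (0,1]. Then for every γ ≥ K the function x ↦ x^γ / a(x) is non-decreasing on (0,1]. -/
open Set Filter MeasureTheory Topology

/-- If `a` is continuous on `[0,1]`, differentiable on `(0,1]` with
derivative `a'`, `a 0 = 0`, `a > 0` on `(0,1]`, `K > 0` and `x * |a' x| ≤ K * a x` on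
`(0,1]`, then for every `γ ≥ K` the function `x ↦ x ^ γ / a x` is non-decreasing
on `(0,1]`. -/
theorem xpow_div_a_monotoneOn
    (a a' : ℝ → ℝ) (K : ℝ)
    (ha_cont : ContinuousOn a (Set.Icc 0 1))
    (ha_deriv : ∀ x ∈ Set.Ioc (0:ℝ) 1, HasDerivWithinAt a (a' x) (Set.Ioc 0 1) x)
    (ha_zero : a 0 = 0)
    (ha_pos : ∀ x ∈ Set.Ioc (0:ℝ) 1, 0 < a x)
    (hK_pos : 0 < K)
    (hbound : ∀ x ∈ Set.Ioc (0:ℝ) 1, x * |a' x| ≤ K * a x)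
    (γ : ℝ) (hγ : K ≤ γ) :
    MonotoneOn (fun x : ℝ => x ^ γ / a x) (Set.Ioc (0:ℝ) 1) := by
  have hint : interior (Set.Ioc (0:ℝ) 1) = Set.Ioo 0 1 := interior_Ioc
  apply monotoneOn_of_hasDerivWithinAt_nonneg (f' := fun x =>
    (γ * x ^ (γ - 1) * a x - x ^ γ * a' x) / (a x) ^ 2) (convex_Ioc 0 1)
  · -- continuity
    apply ContinuousOn.div
    · exact fun x hx => (Real.continuousAt_rpow_const x γ (Or.inl hx.1.ne')).continuousWithinAt
    · exact ha_cont.mono (Set.Ioc_subset_Icc_self)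
    · exact fun x hx => (ha_pos x hx).ne'
  · intro x hx
    rw [hint] at hx ⊢
    have hx' : x ∈ Set.Ioc (0:ℝ) 1 := ⟨hx.1, hx.2.le⟩
    have hxa : HasDerivAt a (a' x) x := by
      have := (ha_deriv x hx').hasDerivAt (Ioc_mem_nhds hx.1 hx.2)
      exact this
    have hp : HasDerivAt (fun y : ℝ => y ^ γ) (γ * x ^ (γ - 1)) x := by
      have := Real.hasDerivAt_rpow_const (x := x) (p := γ) (Or.inl hx.1.ne')
      simpa [mul_comm] using this
    exact ((hp.div hxa (ha_pos x hx').ne').hasDerivWithinAt)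
  · intro x hx
    rw [hint] at hx
    have hx' : x ∈ Set.Ioc (0:ℝ) 1 := ⟨hx.1, hx.2.le⟩
    have hax := ha_pos x hx'
    apply div_nonneg _ (sq_nonneg _)
    have hxγ : x ^ γ = x ^ (γ - 1) * x := by
      rw [← Real.rpow_add_one hx.1.ne']; ring_nf
    have hb : x * a' x ≤ γ * a x := by
      calc x * a' x ≤ x * |a' x| := by
            exact mul_le_mul_of_nonneg_left (le_abs_self _) hx.1.le
        _ ≤ K * a x := hbound x hx'
        _ ≤ γ * a x := mul_le_mul_of_nonneg_right hγ hax.le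
    have hpow : (0:ℝ) ≤ x ^ (γ - 1) := Real.rpow_nonneg hx.1.le _
    have : γ * x ^ (γ - 1) * a x - x ^ γ * a' x
        = x ^ (γ - 1) * (γ * a x - x * a' x) := by rw [hxγ]; ring
    rw [this]
    exact mul_nonneg hpow (sub_nonneg.2 hb)
end

section
/- Let a : [0,1] → ℝ be continuous on [0,1] and differentiable on (0,1], with a(0) = 0 and a(x) > 0 for every x ∈ (0,1], and let K > 0 be such that x·|a'(x)| ≤ K·a(x) for all x ∈ (0,1]. Then for every γ > K one has lim_{x→0⁺} x^γ / a(x) = 0. -/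
open Set Filter MeasureTheory Topology

/-- If `a` is continuous on `[0,1]`, differentiable on `(0,1]` with
derivative `a'`, `a 0 = 0`, `a > 0` on `(0,1]`, `K > 0` and `x * |a' x| ≤ K * a x` on
`(0,1]`, then for every `γ > K` one has `x ^ γ / a x → 0` as `x → 0⁺`. -/
theorem xpow_div_a_tendsto_zero
    (a a' : ℝ → ℝ) (K : ℝ)
    (ha_cont : ContinuousOn a (Set.Icc 0 1))
    (ha_deriv : ∀ x ∈ Set.Ioc (0:ℝ) 1, HasDerivWithinAt a (a' x) (Set.Ioc 0 1) x)
    (ha_zero : a 0 = 0)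
    (ha_pos : ∀ x ∈ Set.Ioc (0:ℝ) 1, 0 < a x)
    (hK_pos : 0 < K)
    (hbound : ∀ x ∈ Set.Ioc (0:ℝ) 1, x * |a' x| ≤ K * a x)
    (γ : ℝ) (hγ : K < γ) :
    Filter.Tendsto (fun x : ℝ => x ^ γ / a x) (nhdsWithin 0 (Set.Ioi 0)) (nhds 0) := by
  have ha1 : 0 < a 1 := ha_pos 1 ⟨one_pos, le_refl 1⟩
  set f : ℝ → ℝ := fun x => a x * x ^ (-K) with hf
  set f' : ℝ → ℝ := fun x => a' x * x ^ (-K) + a x * (-K * x ^ (-K - 1)) with hf'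
  have hint : interior (Set.Ioc (0:ℝ) 1) = Set.Ioo 0 1 := interior_Ioc
  -- derivative of f at interior points
  have hderiv : ∀ x ∈ Set.Ioo (0:ℝ) 1, HasDerivAt f (f' x) x := by
    intro x hx
    have hmem : Set.Ioc (0:ℝ) 1 ∈ 𝓝 x := by
      have : Set.Ioo (0:ℝ) 1 ∈ 𝓝 x := isOpen_Ioo.mem_nhds hx
      exact Filter.mem_of_superset this Set.Ioo_subset_Ioc_self
    have h1 : HasDerivAt a (a' x) x :=
      (ha_deriv x ⟨hx.1, hx.2.le⟩).hasDerivAt hmem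
    have h2 : HasDerivAt (fun x : ℝ => x ^ (-K)) (-K * x ^ (-K - 1)) x := by
      have := Real.hasDerivAt_rpow_const (p := -K) (Or.inl hx.1.ne')
      simpa using this
    exact h1.mul h2
  have hanti : AntitoneOn f (Set.Ioc 0 1) := by
    apply antitoneOn_of_hasDerivWithinAt_nonpos (f' := f') (convex_Ioc 0 1)
    · exact (ha_cont.mono (Set.Ioc_subset_Icc_self)).mul
        (continuousOn_id.rpow_const (fun x hx => Or.inl hx.1.ne'))
    · intro x hx
      rw [hint] at hx
      exact (hderiv x hx).hasDerivWithinAt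
    · intro x hx
      rw [hint] at hx
      have hx0 : (0:ℝ) < x := hx.1
      have hb := hbound x ⟨hx.1, hx.2.le⟩
      have hxK : x ^ (-K) = x * x ^ (-K - 1) := by
        nth_rewrite 1 [show -K = 1 + (-K - 1) by ring]
        rw [Real.rpow_add hx0, Real.rpow_one]
      have hpow : (0:ℝ) < x ^ (-K - 1) := Real.rpow_pos_of_pos hx0 _
      have key : x * a' x ≤ K * a x :=
        le_trans (by nlinarith [le_abs_self (a' x)]) hb
      have : f' x = x ^ (-K - 1) * (x * a' x - K * a x) := by
        simp only [hf', hxK]; ring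
      rw [this]
      exact mul_nonpos_of_nonneg_of_nonpos hpow.le (by linarith)
  -- lower bound a x ≥ a 1 * x ^ K
  have hlow : ∀ x ∈ Set.Ioc (0:ℝ) 1, a 1 * x ^ K ≤ a x := by
    intro x hx
    have := hanti hx (Set.right_mem_Ioc.2 one_pos) hx.2
    have h1 : f 1 = a 1 := by simp [hf]
    have hxK : (0:ℝ) < x ^ K := Real.rpow_pos_of_pos hx.1 _
    have h2 : f x * x ^ K = a x := by
      simp only [hf]
      rw [mul_assoc, ← Real.rpow_add hx.1]
      simp
    calc a 1 * x ^ K = f 1 * x ^ K := by rw [h1]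
      _ ≤ f x * x ^ K := by nlinarith [this]
      _ = a x := h2
  -- upper bound and squeeze
  have hγK : (0:ℝ) < γ - K := by linarith
  have hg : Filter.Tendsto (fun x : ℝ => x ^ (γ - K) / a 1)
      (nhdsWithin 0 (Set.Ioi 0)) (nhds 0) := by
    have : Filter.Tendsto (fun x : ℝ => x ^ (γ - K)) (nhds 0) (nhds 0) := by
      have hc : ContinuousAt (fun x : ℝ => x ^ (γ - K)) 0 :=
        Real.continuousAt_rpow_const 0 _ (Or.inr hγK.le)
      have := hc.tendsto
      rwa [Real.zero_rpow hγK.ne'] at this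
    simpa using ((this.mono_left nhdsWithin_le_nhds).div_const (a 1))
  apply squeeze_zero' ?_ ?_ hg
  · filter_upwards [Ioc_mem_nhdsGT_of_mem (Set.left_mem_Ico.2 one_pos)] with x hx
    exact div_nonneg (Real.rpow_nonneg hx.1.le _) (ha_pos x hx).le
  · filter_upwards [Ioc_mem_nhdsGT_of_mem (Set.left_mem_Ico.2 one_pos)] with x hx
    have hx0 : (0:ℝ) < x := hx.1
    have hax : 0 < a x := ha_pos x hx
    have hl := hlow x hx
    have hxKpos : (0:ℝ) < x ^ K := Real.rpow_pos_of_pos hx0 _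
    have h1 : x ^ γ / a x ≤ x ^ γ / (a 1 * x ^ K) :=
      div_le_div_of_nonneg_left (Real.rpow_nonneg hx0.le _) (by positivity) hl
    have h2 : x ^ γ / (a 1 * x ^ K) = x ^ (γ - K) / a 1 := by
      rw [show γ = (γ - K) + K by ring, Real.rpow_add hx0]
      field_simp
      ring
    linarith [h1, h2 ▸ h1]
end

section
/- Assume a is weakly degenerate (WD). Let y : (0,1] → ℝ be twice differentiable on (0,1] and suppose that the function x ↦ a(x)·y''(x) extends to a continuously differentiable function on [0,1]. Then lim_{δ→0⁺} δ·a(δ)·(y''(δ))² = 0. -/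
open Set Filter MeasureTheory Topology

/-- `a` is weakly degenerate at `0` (WD): `a ∈ C[0,1] ∩ C¹(0,1]`, `a 0 = 0`,
`a > 0` on `(0,1]`, and the degeneracy constant `K` satisfies `K ∈ (0,1)` together
with `x * |a' x| ≤ K * a x` on `(0,1]`. -/
structure IsWeaklyDegenerate (a a' : ℝ → ℝ) (K : ℝ) : Prop where
  cont : ContinuousOn a (Set.Icc 0 1)
  deriv : ∀ x ∈ Set.Ioc (0:ℝ) 1, HasDerivWithinAt a (a' x) (Set.Ioc 0 1) x
  deriv_cont : ContinuousOn a' (Set.Ioc 0 1)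
  zero : a 0 = 0
  pos : ∀ x ∈ Set.Ioc (0:ℝ) 1, 0 < a x
  K_pos : 0 < K
  K_lt_one : K < 1
  bound : ∀ x ∈ Set.Ioc (0:ℝ) 1, x * |a' x| ≤ K * a x

/-- `a` is strongly degenerate at `0` (SD): `a ∈ C¹[0,1]`, `a 0 = 0`, `a > 0` on
`(0,1]`, and the degeneracy constant `K` satisfies `K ∈ [1,2)` together with
`x * |a' x| ≤ K * a x` on `(0,1]`. -/
structure IsStronglyDegenerate (a a' : ℝ → ℝ) (K : ℝ) : Prop where
  deriv : ∀ x ∈ Set.Icc (0:ℝ) 1, HasDerivWithinAt a (a' x) (Set.Icc 0 1) x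
  deriv_cont : ContinuousOn a' (Set.Icc 0 1)
  zero : a 0 = 0
  pos : ∀ x ∈ Set.Ioc (0:ℝ) 1, 0 < a x
  K_ge_one : 1 ≤ K
  K_lt_two : K < 2
  bound : ∀ x ∈ Set.Ioc (0:ℝ) 1, x * |a' x| ≤ K * a x

section
variable (a a' : ℝ → ℝ) (K : ℝ)

theorem lower_bound_WD
    (hcont : ContinuousOn a (Set.Icc 0 1))
    (hderiv : ∀ x ∈ Set.Ioc (0:ℝ) 1, HasDerivWithinAt a (a' x) (Set.Ioc 0 1) x)
    (hpos : ∀ x ∈ Set.Ioc (0:ℝ) 1, 0 < a x)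
    (hbound : ∀ x ∈ Set.Ioc (0:ℝ) 1, x * |a' x| ≤ K * a x) :
    ∀ x ∈ Set.Ioc (0:ℝ) 1, a 1 * x ^ K ≤ a x := by
  set F : ℝ → ℝ := fun x => Real.log (a x) - K * Real.log x with hF
  have hint : interior (Set.Ioc (0:ℝ) 1) = Set.Ioo 0 1 := interior_Ioc
  have hanti : AntitoneOn F (Set.Ioc 0 1) := by
    apply antitoneOn_of_hasDerivWithinAt_nonpos (convex_Ioc 0 1)
      (f' := fun x => a' x / a x - K * (1 / x))
    · exact ((Real.continuousOn_log.comp (hcont.mono Set.Ioc_subset_Icc_self)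
        (fun x hx => (hpos x hx).ne')).sub
        (continuousOn_const.mul (Real.continuousOn_log.mono (fun x hx => hx.1.ne'))))
    · intro x hx
      rw [hint] at hx
      have hx' : x ∈ Set.Ioc (0:ℝ) 1 := ⟨hx.1, hx.2.le⟩
      have hmem : Set.Ioc (0:ℝ) 1 ∈ 𝓝 x := mem_nhds_iff.2 ⟨Set.Ioo 0 1, Set.Ioo_subset_Ioc_self,
        isOpen_Ioo, hx⟩
      have hda : HasDerivAt a (a' x) x := (hderiv x hx').hasDerivAt hmem
      have h1 : HasDerivAt (fun t => Real.log (a t)) (a' x / a x) x :=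
        hda.log (hpos x hx').ne'
      have h2 : HasDerivAt (fun t => K * Real.log t) (K * (1 / x)) x := by
        simpa using (Real.hasDerivAt_log hx.1.ne').const_mul K
      exact ((h1.sub h2).hasDerivWithinAt)
    · intro x hx
      rw [hint] at hx
      have hx' : x ∈ Set.Ioc (0:ℝ) 1 := ⟨hx.1, hx.2.le⟩
      have hax := hpos x hx'
      have h := hbound x hx'
      have h2 : a' x ≤ K * a x / x := by
        rw [le_div_iff₀ hx.1]
        calc a' x * x ≤ |a' x| * x := by
              apply mul_le_mul_of_nonneg_right (le_abs_self _) hx.1.le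
          _ = x * |a' x| := mul_comm _ _
          _ ≤ K * a x := h
      have : a' x / a x ≤ K * (1 / x) := by
        rw [div_le_iff₀ hax]
        calc a' x ≤ K * a x / x := h2
          _ = K * (1 / x) * a x := by ring
      linarith
  intro x hx
  have hle := hanti hx (Set.right_mem_Ioc.2 one_pos) hx.2
  -- F 1 ≤ F x
  have hF1 : F 1 = Real.log (a 1) := by simp [hF]
  have hFx : F x = Real.log (a x) - K * Real.log x := rfl
  have ha1 : 0 < a 1 := hpos 1 (Set.right_mem_Ioc.2 one_pos)
  have hax : 0 < a x := hpos x hx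
  have hlog : Real.log (a 1 * x ^ K) ≤ Real.log (a x) := by
    rw [Real.log_mul ha1.ne' (Real.rpow_pos_of_pos hx.1 K).ne', Real.log_rpow hx.1]
    rw [hF1, hFx] at hle
    linarith
  have hpow : 0 < a 1 * x ^ K := mul_pos ha1 (Real.rpow_pos_of_pos hx.1 K)
  exact (Real.log_le_log_iff hpow hax).1 hlog

end


/-- if `a` is (WD), `y` is twice differentiable on `(0,1]` and
`x ↦ a x * y'' x` extends to a `C¹` function `g` on `[0,1]`, then
`δ * a δ * (y'' δ)² → 0` as `δ → 0⁺`. -/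
theorem lim_delta_a_ysecond_sq_WD
    (a a' : ℝ → ℝ) (K : ℝ) (hWD : IsWeaklyDegenerate a a' K)
    (y y' y'' g g' : ℝ → ℝ)
    (hy' : ∀ x ∈ Set.Ioc (0:ℝ) 1, HasDerivWithinAt y (y' x) (Set.Ioc 0 1) x)
    (hy'' : ∀ x ∈ Set.Ioc (0:ℝ) 1, HasDerivWithinAt y' (y'' x) (Set.Ioc 0 1) x)
    (hg_eq : ∀ x ∈ Set.Ioc (0:ℝ) 1, g x = a x * y'' x)
    (hg_deriv : ∀ x ∈ Set.Icc (0:ℝ) 1, HasDerivWithinAt g (g' x) (Set.Icc 0 1) x)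
    (hg'_cont : ContinuousOn g' (Set.Icc 0 1)) :
    Filter.Tendsto (fun δ : ℝ => δ * a δ * (y'' δ) ^ 2)
      (nhdsWithin 0 (Set.Ioi 0)) (nhds 0) := by
  have hlb := lower_bound_WD a a' K hWD.cont hWD.deriv hWD.pos hWD.bound
  have ha1 : 0 < a 1 := hWD.pos 1 (Set.right_mem_Ioc.2 one_pos)
  -- bound for g
  have hgcont : ContinuousOn g (Set.Icc 0 1) := fun x hx =>
    (hg_deriv x hx).continuousWithinAt
  obtain ⟨M, hM⟩ := (isCompact_Icc).exists_bound_of_continuousOn hgcont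
  have hM0 : 0 ≤ M := le_trans (norm_nonneg _) (hM 0 (by simp))
  -- upper bound function
  have htend : Filter.Tendsto (fun δ : ℝ => M ^ 2 / a 1 * δ ^ (1 - K))
      (nhdsWithin 0 (Set.Ioi 0)) (nhds 0) := by
    have h0 : Filter.Tendsto (fun δ : ℝ => δ ^ (1 - K)) (nhdsWithin 0 (Set.Ioi 0)) (nhds 0) := by
      have h := (Real.continuousAt_rpow_const 0 (1 - K)
        (Or.inr (by linarith [hWD.K_lt_one]))).continuousWithinAt (s := Set.Ioi 0)
      rw [ContinuousWithinAt, Real.zero_rpow (by linarith [hWD.K_lt_one] : (1:ℝ) - K ≠ 0)] at h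
      exact h
    simpa using (h0.const_mul (M ^ 2 / a 1))
  apply squeeze_zero' (g := fun δ : ℝ => M ^ 2 / a 1 * δ ^ (1 - K)) _ _ htend
  · filter_upwards [Ioo_mem_nhdsGT_of_mem (by norm_num : (0:ℝ) ∈ Set.Ico 0 1)] with δ hδ
    have haδ : 0 < a δ := hWD.pos δ ⟨hδ.1, hδ.2.le⟩
    exact mul_nonneg (mul_nonneg hδ.1.le haδ.le) (sq_nonneg _)
  · filter_upwards [Ioo_mem_nhdsGT_of_mem (by norm_num : (0:ℝ) ∈ Set.Ico 0 1)] with δ hδ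
    have hδ' : δ ∈ Set.Ioc (0:ℝ) 1 := ⟨hδ.1, hδ.2.le⟩
    have haδ : 0 < a δ := hWD.pos δ hδ'
    have hy2 : y'' δ = g δ / a δ := by rw [hg_eq δ hδ']; field_simp
    rw [hy2]
    have hgb : g δ ^ 2 ≤ M ^ 2 := by
      have := hM δ (Set.Ioc_subset_Icc_self hδ')
      calc g δ ^ 2 = |g δ| ^ 2 := (sq_abs _).symm
        _ ≤ M ^ 2 := by
            apply pow_le_pow_left₀ (abs_nonneg _) _ 2
            simpa using this
    have key : δ / a δ ≤ δ ^ (1 - K) / a 1 := by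
      have h := hlb δ hδ'
      have hpow : 0 < a 1 * δ ^ K := mul_pos ha1 (Real.rpow_pos_of_pos hδ.1 K)
      rw [div_le_div_iff₀ haδ ha1]
      have hsplit : δ ^ (1 - K) * δ ^ K = δ := by
        rw [← Real.rpow_add hδ.1]; norm_num
      calc δ * a 1 = δ ^ (1 - K) * δ ^ K * a 1 := by rw [hsplit]
        _ = δ ^ (1 - K) * (a 1 * δ ^ K) := by ring
        _ ≤ δ ^ (1 - K) * a δ := by
            apply mul_le_mul_of_nonneg_left h (Real.rpow_pos_of_pos hδ.1 _).le
      -- goal done?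
    calc δ * a δ * (g δ / a δ) ^ 2 = (δ / a δ) * g δ ^ 2 := by field_simp
      _ ≤ (δ ^ (1 - K) / a 1) * M ^ 2 := by
          exact mul_le_mul key hgb (sq_nonneg _) (div_nonneg (Real.rpow_nonneg hδ.1.le _) ha1.le)
      _ = M ^ 2 / a 1 * δ ^ (1 - K) := by ring
end

section
/- Assume a is strongly degenerate (SD). Let y : (0,1] → ℝ be differentiable with y' locally absolutely continuous on (0,1], y' ∈ L²(0,1), and √a·y'' ∈ L²(0,1). Then lim_{δ→0⁺} δ·y'(δ) = 0. -/
open Set Filter MeasureTheory Topology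

lemma sd_lower_bound (a a' : ℝ → ℝ) (K : ℝ) (hSD : IsStronglyDegenerate a a' K) :
    ∀ x ∈ Set.Ioc (0:ℝ) 1, a 1 * x ^ 2 ≤ a x := by
  have hacont : ContinuousOn a (Set.Icc 0 1) :=
    fun t ht => (hSD.deriv t ht).continuousWithinAt
  intro x hx
  obtain ⟨hx0, hx1⟩ := hx
  set g : ℝ → ℝ := fun t => a t * t ^ (-K) with hg_def
  have hg : AntitoneOn g (Set.Icc x 1) := by
    have hderiv : ∀ t ∈ Set.Ioo x 1,
        HasDerivAt g (a' t * t ^ (-K) + a t * (-K * t ^ (-K - 1))) t := by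
      intro t ht
      have ht0 : 0 < t := hx0.trans ht.1
      have hat : HasDerivAt a (a' t) t := by
        refine (hSD.deriv t ⟨ht0.le, ht.2.le⟩).hasDerivAt ?_
        exact Icc_mem_nhds ht0 ht.2
      have hrp : HasDerivAt (fun u : ℝ => u ^ (-K)) (-K * t ^ (-K - 1)) t :=
        Real.hasDerivAt_rpow_const (Or.inl ht0.ne')
      exact hat.mul hrp
    apply antitoneOn_of_deriv_nonpos (convex_Icc x 1)
    · apply ContinuousOn.mul (hacont.mono (Icc_subset_Icc hx0.le le_rfl))
      intro t ht
      exact (Real.continuousAt_rpow_const t (-K)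
        (Or.inl (hx0.trans_le ht.1).ne')).continuousWithinAt
    · intro t ht
      rw [interior_Icc] at ht
      exact (hderiv t ht).differentiableAt.differentiableWithinAt
    · intro t ht
      rw [interior_Icc] at ht
      have ht0 : 0 < t := hx0.trans ht.1
      rw [(hderiv t ht).deriv]
      have hkey : t ^ (-K) = t ^ (-K - 1) * t := by
        rw [← Real.rpow_add_one ht0.ne' (-K - 1)]; ring_nf
      have hb := hSD.bound t ⟨ht0, ht.2.le⟩
      have hb' : t * a' t ≤ K * a t := le_trans (by
        have := le_abs_self (a' t)
        nlinarith) hb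
      have hnn : (0:ℝ) ≤ t ^ (-K - 1) := Real.rpow_nonneg ht0.le _
      rw [hkey]
      nlinarith
  have h1x : g 1 ≤ g x := hg ⟨le_rfl, hx1⟩ ⟨hx1, le_rfl⟩ hx1
  have hg1 : g 1 = a 1 := by simp [hg_def]
  rw [hg1] at h1x
  have hxK : (0:ℝ) < x ^ K := Real.rpow_pos_of_pos hx0 K
  have h2 : a 1 * x ^ K ≤ a x := by
    have := mul_le_mul_of_nonneg_right h1x hxK.le
    rwa [hg_def, mul_assoc, ← Real.rpow_add hx0, neg_add_cancel, Real.rpow_zero,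
      mul_one] at this
  have h3 : x ^ (2:ℝ) ≤ x ^ K :=
    Real.rpow_le_rpow_of_exponent_ge hx0 hx1 hSD.K_lt_two.le
  have h4 : x ^ 2 = x ^ (2:ℝ) := by
    rw [← Real.rpow_natCast x 2]; norm_num
  have hA : 0 < a 1 := hSD.pos 1 ⟨one_pos, le_rfl⟩
  have h5 : a 1 * x ^ (2:ℝ) ≤ a 1 * x ^ K := mul_le_mul_of_nonneg_left h3 hA.le
  rw [h4]; linarith

set_option maxHeartbeats 1600000 in
/-- if `a` is (SD), `y` is differentiable on `(0,1]` with `y'`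
locally absolutely continuous on `(0,1]` (with a.e. derivative `y''`),
`y' ∈ L²(0,1)` and `√a·y'' ∈ L²(0,1)`, then `δ * y' δ → 0` as `δ → 0⁺`. -/
theorem lim_delta_yprime_SD
    (a a' : ℝ → ℝ) (K : ℝ) (hSD : IsStronglyDegenerate a a' K)
    (y y' y'' : ℝ → ℝ)
    (hy' : ∀ x ∈ Set.Ioc (0:ℝ) 1, HasDerivWithinAt y (y' x) (Set.Ioc 0 1) x)
    (hy'AC : ∀ x ∈ Set.Ioc (0:ℝ) 1, ∀ z ∈ Set.Ioc (0:ℝ) 1,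
      y' z - y' x = ∫ t in x..z, y'' t)
    (hy''loc : ∀ x ∈ Set.Ioc (0:ℝ) 1, MeasureTheory.IntegrableOn y'' (Set.Icc x 1))
    (hy'meas : MeasureTheory.AEStronglyMeasurable y'
      (MeasureTheory.volume.restrict (Set.Ioo 0 1)))
    (hy'L2 : MeasureTheory.IntegrableOn (fun x => (y' x) ^ 2) (Set.Ioo 0 1))
    (hy''meas : MeasureTheory.AEStronglyMeasurable y''
      (MeasureTheory.volume.restrict (Set.Ioo 0 1)))
    (hayL2 : MeasureTheory.IntegrableOn (fun x => a x * (y'' x) ^ 2) (Set.Ioo 0 1)) :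
    Filter.Tendsto (fun δ : ℝ => δ * y' δ) (nhdsWithin 0 (Set.Ioi 0)) (nhds 0) := by
  have hA : 0 < a 1 := hSD.pos 1 ⟨one_pos, le_rfl⟩
  have hlow := sd_lower_bound a a' K hSD
  set M := ∫ x in Set.Ioo (0:ℝ) 1, (y' x) ^ 2 with hM_def
  set N := ∫ x in Set.Ioo (0:ℝ) 1, a x * (y'' x) ^ 2 with hN_def
  have hM0 : 0 ≤ M :=
    setIntegral_nonneg measurableSet_Ioo fun x _ => sq_nonneg _
  have hN0 : 0 ≤ N :=
    setIntegral_nonneg measurableSet_Ioo fun x hx =>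
      mul_nonneg (hSD.pos x ⟨hx.1, hx.2.le⟩).le (sq_nonneg _)
  set C : ℝ := 1 + M / 2 + N / (2 * a 1) with hC_def
  -- y' is integrable on (0,1)
  have hy'int : MeasureTheory.IntegrableOn y' (Set.Ioo (0:ℝ) 1) := by
    apply MeasureTheory.Integrable.mono'
      (g := fun x => 1 + (y' x) ^ 2) ?_ hy'meas ?_
    · exact (MeasureTheory.integrableOn_const
        (measure_Ioo_lt_top.ne)).add hy'L2
    · filter_upwards with x
      rw [Real.norm_eq_abs]
      nlinarith [sq_nonneg (|y' x| - 1), sq_abs (y' x)]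
  have key : ∀ δ : ℝ, δ ∈ Set.Ioo (0:ℝ) (1/2) → |δ * y' δ| ≤ Real.sqrt δ * C := by
    intro δ hδ
    obtain ⟨hδ0, hδh⟩ := hδ
    set b := 2 * δ with hb_def
    have hδb : δ < b := by rw [hb_def]; linarith
    have hb1 : b < 1 := by rw [hb_def]; linarith
    have hsub : Set.Ioc δ b ⊆ Set.Ioo (0:ℝ) 1 :=
      fun t ht => ⟨hδ0.trans ht.1, lt_of_le_of_lt ht.2 hb1⟩
    have hsub' : Set.Icc δ b ⊆ Set.Ioc (0:ℝ) 1 :=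
      fun t ht => ⟨hδ0.trans_le ht.1, le_trans ht.2 hb1.le⟩
    set s := Real.sqrt δ with hs_def
    have hs0 : 0 < s := Real.sqrt_pos.2 hδ0
    have hs2 : s ^ 2 = δ := Real.sq_sqrt hδ0.le
    -- integrability facts
    have hy'ii : IntervalIntegrable y' volume δ b := by
      rw [intervalIntegrable_iff_integrableOn_Ioc_of_le hδb.le]
      exact hy'int.mono_set hsub
    have hy'sqii : IntervalIntegrable (fun z => (y' z) ^ 2) volume δ b := by
      rw [intervalIntegrable_iff_integrableOn_Ioc_of_le hδb.le]
      exact hy'L2.mono_set hsub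
    have hy''i : MeasureTheory.IntegrableOn y'' (Set.Ioc δ b) :=
      (hy''loc δ ⟨hδ0, by linarith⟩).mono_set
        (fun t ht => ⟨ht.1.le, le_trans ht.2 hb1.le⟩)
    have hy''ii : IntervalIntegrable y'' volume δ b := by
      rw [intervalIntegrable_iff_integrableOn_Ioc_of_le hδb.le]; exact hy''i
    have hayii : IntervalIntegrable (fun t => a t * (y'' t) ^ 2) volume δ b := by
      rw [intervalIntegrable_iff_integrableOn_Ioc_of_le hδb.le]
      exact hayL2.mono_set hsub
    -- the primitive of y''
    set F : ℝ → ℝ := fun z => ∫ t in δ..z, y'' t with hF_def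
    have hFii : IntervalIntegrable F volume δ b := by
      apply ContinuousOn.intervalIntegrable
      apply intervalIntegral.continuousOn_primitive_interval
      rw [Set.uIcc_of_le hδb.le]
      exact (hy''loc δ ⟨hδ0, by linarith⟩).mono_set
        (fun t ht => ⟨ht.1, le_trans ht.2 hb1.le⟩)
    -- the identity δ * y' δ = ∫ y' - ∫ F
    have hid : δ * y' δ = (∫ z in δ..b, y' z) - ∫ z in δ..b, F z := by
      have h1 : (∫ z in δ..b, y' δ) = δ * y' δ := by
        rw [intervalIntegral.integral_const]
        have hbd : b - δ = δ := by rw [hb_def]; ring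
        rw [hbd, smul_eq_mul]
      have hrep : ∀ z ∈ Set.uIcc δ b, y' δ = y' z - F z := by
        intro z hz
        rw [Set.uIcc_of_le hδb.le] at hz
        have := hy'AC δ ⟨hδ0, by linarith⟩ z (hsub' hz)
        simp only [hF_def]
        linarith
      calc δ * y' δ = ∫ z in δ..b, y' δ := h1.symm
        _ = ∫ z in δ..b, (y' z - F z) :=
            intervalIntegral.integral_congr hrep
        _ = (∫ z in δ..b, y' z) - ∫ z in δ..b, F z :=
            intervalIntegral.integral_sub hy'ii hFii
    -- Term 1 bound
    have hT1 : |∫ z in δ..b, y' z| ≤ s / 2 + s * M / 2 := by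
      have habs : |∫ z in δ..b, y' z| ≤ ∫ z in δ..b, |y' z| :=
        intervalIntegral.abs_integral_le_integral_abs hδb.le
      have hmono : (∫ z in δ..b, |y' z|) ≤
          ∫ z in δ..b, (1 / (2 * s) + s * (y' z) ^ 2 / 2) := by
        apply intervalIntegral.integral_mono_on hδb.le hy'ii.abs
          ((intervalIntegrable_const).add ((hy'sqii.const_mul s).div_const 2))
        intro z _
        have h1 : 2 * s * |y' z| ≤ 1 + s ^ 2 * (y' z) ^ 2 := by
          nlinarith [sq_nonneg (s * |y' z| - 1), sq_abs (y' z)]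
        rw [div_add_div _ _ (by positivity : (2:ℝ) * s ≠ 0) (by norm_num : (2:ℝ) ≠ 0),
          le_div_iff₀ (by positivity)]
        nlinarith
      have hcomp : (∫ z in δ..b, (1 / (2 * s) + s * (y' z) ^ 2 / 2)) ≤
          s / 2 + s * M / 2 := by
        rw [intervalIntegral.integral_add intervalIntegrable_const
          ((hy'sqii.const_mul s).div_const 2), intervalIntegral.integral_const]
        have hbd : b - δ = δ := by rw [hb_def]; ring
        have hints : (∫ z in δ..b, s * (y' z) ^ 2 / 2) =
            s / 2 * ∫ z in Set.Ioc δ b, (y' z) ^ 2 := by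
          rw [intervalIntegral.integral_of_le hδb.le, ← integral_const_mul]
          congr 1; ext z; ring
        have hle : (∫ z in Set.Ioc δ b, (y' z) ^ 2) ≤ M := by
          apply setIntegral_mono_set hy'L2
          · filter_upwards with z using sq_nonneg _
          · exact hsub.eventuallyLE
        have hδs : δ / (2 * s) = s / 2 := by
          rw [eq_div_iff (by norm_num : (2:ℝ) ≠ 0)]
          field_simp
          nlinarith
        rw [hints, hbd, smul_eq_mul, mul_one_div, hδs]
        nlinarith
      linarith
    -- Term 2 bound
    have hT2 : |∫ z in δ..b, F z| ≤ s / 2 + s * N / (2 * a 1) := by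
      have hFb : ∀ z ∈ Set.uIoc δ b, ‖F z‖ ≤ ∫ t in δ..b, |y'' t| := by
        intro z hz
        rw [Set.uIoc_of_le hδb.le] at hz
        rw [Real.norm_eq_abs]
        calc |F z| ≤ ∫ t in δ..z, |y'' t| :=
              intervalIntegral.abs_integral_le_integral_abs hz.1.le
          _ ≤ ∫ t in δ..b, |y'' t| := by
              rw [intervalIntegral.integral_of_le hz.1.le,
                intervalIntegral.integral_of_le hδb.le]
              apply setIntegral_mono_set hy''i.abs
              · filter_upwards with t using abs_nonneg _
              · exact (Set.Ioc_subset_Ioc_right hz.2).eventuallyLE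
      have hstep := intervalIntegral.norm_integral_le_of_norm_le_const hFb
      rw [Real.norm_eq_abs] at hstep
      have hbd : |b - δ| = δ := by rw [hb_def]; rw [abs_of_nonneg (by linarith)]; ring
      rw [hbd] at hstep
      -- now bound ∫ |y''|
      have hy''b : (∫ t in δ..b, |y'' t|) ≤ 1 / (2 * s) + s * N / (2 * a 1 * δ) := by
        have hmono : (∫ t in δ..b, |y'' t|) ≤
            ∫ t in δ..b, (1 / (2 * δ * s) +
              (δ * s) * (a t * (y'' t) ^ 2) / (2 * a 1 * δ ^ 2)) := by
          apply intervalIntegral.integral_mono_on hδb.le hy''ii.abs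
            ((intervalIntegrable_const).add ((hayii.const_mul (δ * s)).div_const _))
          intro t ht
          have ht01 : t ∈ Set.Ioc (0:ℝ) 1 := hsub' ht
          have hat : a 1 * t ^ 2 ≤ a t := hlow t ht01
          have htδ : δ ≤ t := ht.1
          have haδ : a 1 * δ ^ 2 ≤ a t := by
            nlinarith [mul_le_mul_of_nonneg_left (pow_le_pow_left₀ hδ0.le htδ 2) hA.le]
          have hamgm : |y'' t| ≤ 1 / (2 * δ * s) + (δ * s) * (y'' t) ^ 2 / 2 := by
            have h1 : 2 * (δ * s) * |y'' t| ≤ 1 + (δ * s) ^ 2 * (y'' t) ^ 2 := by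
              nlinarith [sq_nonneg ((δ * s) * |y'' t| - 1), sq_abs (y'' t)]
            rw [div_add_div _ _ (by positivity : (2:ℝ) * δ * s ≠ 0)
              (by norm_num : (2:ℝ) ≠ 0), le_div_iff₀ (by positivity)]
            nlinarith
          have hsq : (δ * s) * (y'' t) ^ 2 / 2 ≤
              (δ * s) * (a t * (y'' t) ^ 2) / (2 * a 1 * δ ^ 2) := by
            rw [div_le_div_iff₀ (by norm_num) (by positivity)]
            have := mul_le_mul_of_nonneg_left haδ (sq_nonneg (y'' t))
            nlinarith [mul_nonneg (mul_nonneg hδ0.le hs0.le) (sq_nonneg (y'' t))]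
          linarith
        have hcomp : (∫ t in δ..b, (1 / (2 * δ * s) +
            (δ * s) * (a t * (y'' t) ^ 2) / (2 * a 1 * δ ^ 2))) ≤
            1 / (2 * s) + s * N / (2 * a 1 * δ) := by
          rw [intervalIntegral.integral_add intervalIntegrable_const
            ((hayii.const_mul (δ * s)).div_const _), intervalIntegral.integral_const]
          have hbd : b - δ = δ := by rw [hb_def]; ring
          have hints : (∫ t in δ..b, (δ * s) * (a t * (y'' t) ^ 2) / (2 * a 1 * δ ^ 2)) =
              (δ * s) / (2 * a 1 * δ ^ 2) * ∫ t in Set.Ioc δ b, a t * (y'' t) ^ 2 := by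
            rw [intervalIntegral.integral_of_le hδb.le, ← integral_const_mul]
            congr 1; ext t; ring
          have hle : (∫ t in Set.Ioc δ b, a t * (y'' t) ^ 2) ≤ N := by
            apply setIntegral_mono_set hayL2
            · apply (ae_restrict_iff' measurableSet_Ioo).2
              filter_upwards with t ht
              exact mul_nonneg (hSD.pos t ⟨ht.1, ht.2.le⟩).le (sq_nonneg _)
            · exact hsub.eventuallyLE
          have hpos : (0:ℝ) < (δ * s) / (2 * a 1 * δ ^ 2) := by positivity
          have h1 : δ • (1 / (2 * δ * s)) = 1 / (2 * s) := by
            rw [smul_eq_mul]; field_simp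
          have h2 : (δ * s) / (2 * a 1 * δ ^ 2) * N = s * N / (2 * a 1 * δ) := by
            field_simp
          have h3 := mul_le_mul_of_nonneg_left hle hpos.le
          rw [hbd, hints, h1]
          linarith [h2, h3]
        linarith
      have hfin : (1 / (2 * s) + s * N / (2 * a 1 * δ)) * δ =
          s / 2 + s * N / (2 * a 1) := by
        have hδss : δ = s * s := by nlinarith
        rw [hδss]
        field_simp
      calc |∫ z in δ..b, F z| ≤ (∫ t in δ..b, |y'' t|) * δ := hstep
        _ ≤ (1 / (2 * s) + s * N / (2 * a 1 * δ)) * δ :=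
            mul_le_mul_of_nonneg_right hy''b hδ0.le
        _ = s / 2 + s * N / (2 * a 1) := hfin
    -- combine
    have : |δ * y' δ| ≤ (s / 2 + s * M / 2) + (s / 2 + s * N / (2 * a 1)) := by
      rw [hid]
      calc |(∫ z in δ..b, y' z) - ∫ z in δ..b, F z| ≤
          |∫ z in δ..b, y' z| + |∫ z in δ..b, F z| := abs_sub _ _
        _ ≤ (s / 2 + s * M / 2) + (s / 2 + s * N / (2 * a 1)) := add_le_add hT1 hT2
    have hC : s * C = (s / 2 + s * M / 2) + (s / 2 + s * N / (2 * a 1)) := by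
      rw [hC_def]
      field_simp
      ring
    rw [hC]
    exact this
  -- squeeze
  have hg0 : Filter.Tendsto (fun δ : ℝ => Real.sqrt δ * C)
      (nhdsWithin 0 (Set.Ioi 0)) (nhds 0) := by
    have h1 : Filter.Tendsto Real.sqrt (nhdsWithin 0 (Set.Ioi 0)) (nhds 0) := by
      have := (Real.continuous_sqrt.tendsto 0).mono_left
        (nhdsWithin_le_nhds (s := Set.Ioi (0:ℝ)))
      simpa using this
    simpa using h1.mul_const C
  apply squeeze_zero_norm' _ hg0
  filter_upwards [Ioo_mem_nhdsGT_of_mem (by norm_num : (0:ℝ) ∈ Set.Ico (0:ℝ) (1/2))]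
    with δ hδ
  rw [Real.norm_eq_abs]
  exact key δ hδ
end

section
/- Assume a is strongly degenerate (SD). Let y : (0,1] → ℝ be differentiable with y' locally absolutely continuous on (0,1], y' ∈ L²(0,1), √a·y'' ∈ L²(0,1), and suppose that the function x ↦ a(x)·y''(x) coincides with a function in H²(0,1) whose continuous representative vanishes at x = 0, i.e. (a·y'')(0) = 0. Then lim_{δ→0⁺} y'(δ)·(a·y'')(δ) = 0. -/
open Set Filter MeasureTheory Topology

theorem lim_yprime_ayss_SD
    (a a' : ℝ → ℝ) (K : ℝ) (hSD : IsStronglyDegenerate a a' K)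
    (y y' y'' g g' g'' : ℝ → ℝ)
    (hy' : ∀ x ∈ Set.Ioc (0:ℝ) 1, HasDerivWithinAt y (y' x) (Set.Ioc 0 1) x)
    (hy'AC : ∀ x ∈ Set.Ioc (0:ℝ) 1, ∀ z ∈ Set.Ioc (0:ℝ) 1,
      y' z - y' x = ∫ t in x..z, y'' t)
    (hy''loc : ∀ x ∈ Set.Ioc (0:ℝ) 1, MeasureTheory.IntegrableOn y'' (Set.Icc x 1))
    (hy'meas : MeasureTheory.AEStronglyMeasurable y'
      (MeasureTheory.volume.restrict (Set.Ioo 0 1)))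
    (hy'L2 : MeasureTheory.IntegrableOn (fun x => (y' x) ^ 2) (Set.Ioo 0 1))
    (hy''meas : MeasureTheory.AEStronglyMeasurable y''
      (MeasureTheory.volume.restrict (Set.Ioo 0 1)))
    (hayL2 : MeasureTheory.IntegrableOn (fun x => a x * (y'' x) ^ 2) (Set.Ioo 0 1))
    -- `x ↦ a x * y'' x` coincides on `(0,1]` with a function `g ∈ H²(0,1)`;
    -- `g` is `C¹` on `[0,1]` with derivative `g'`, `g'` is absolutely continuous with
    -- a.e. derivative `g'' ∈ L²(0,1)`, and the continuous representative satisfies `g 0 = 0`.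
    (hg_eq : ∀ x ∈ Set.Ioc (0:ℝ) 1, g x = a x * y'' x)
    (hg_deriv : ∀ x ∈ Set.Icc (0:ℝ) 1, HasDerivWithinAt g (g' x) (Set.Icc 0 1) x)
    (hg'AC : ∀ x ∈ Set.Icc (0:ℝ) 1, ∀ z ∈ Set.Icc (0:ℝ) 1,
      g' z - g' x = ∫ t in x..z, g'' t)
    (hg''L1 : MeasureTheory.IntegrableOn g'' (Set.Ioo 0 1))
    (hg''L2 : MeasureTheory.IntegrableOn (fun x => (g'' x) ^ 2) (Set.Ioo 0 1))
    (hg0 : g 0 = 0) :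
    Filter.Tendsto (fun δ : ℝ => y' δ * (a δ * y'' δ)) (nhdsWithin 0 (Set.Ioi 0)) (nhds 0) := by
  have ha1 : 0 < a 1 := hSD.pos 1 ⟨zero_lt_one, le_refl 1⟩
  have hK2 : K < 2 := hSD.K_lt_two
  -- the constant C bounding |g'| on [0,1]
  set C : ℝ := |g' 1| + ∫ x in Set.Ioo (0:ℝ) 1, |g'' x| with hCdef
  have hC0 : 0 ≤ C :=
    add_nonneg (abs_nonneg _) (integral_nonneg fun x => abs_nonneg _)
  -- |g'| ≤ C on [0,1]
  have hg'bd : ∀ t ∈ Icc (0:ℝ) 1, |g' t| ≤ C := by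
    intro t ht
    have h1 : g' 1 - g' t = ∫ s in t..1, g'' s :=
      hg'AC t ht 1 (right_mem_Icc.mpr zero_le_one)
    have h2 : |∫ s in t..1, g'' s| ≤ ∫ s in t..1, |g'' s| := by
      simpa [Real.norm_eq_abs] using
        intervalIntegral.norm_integral_le_integral_norm (f := g'') (μ := volume) ht.2
    have h3 : (∫ s in t..1, |g'' s|) ≤ ∫ x in Set.Ioo (0:ℝ) 1, |g'' x| := by
      rw [intervalIntegral.integral_of_le ht.2]
      refine setIntegral_mono_set hg''L1.abs ?_ ?_
      · exact Filter.Eventually.of_forall fun x => abs_nonneg _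
      · rw [MeasureTheory.ae_le_set]
        refine measure_mono_null (fun x hx => ?_) (Real.volume_singleton (a := 1))
        simp only [mem_diff, mem_Ioc, mem_Ioo, not_and, not_lt, mem_singleton_iff] at hx ⊢
        rcases hx with ⟨⟨hxt, hx1⟩, hx2⟩
        by_contra hne
        have hx0 : 0 < x := lt_of_le_of_lt ht.1 hxt
        exact hne (le_antisymm hx1 (hx2 hx0))
    have h4 : g' t = g' 1 - ∫ s in t..1, g'' s := by linarith
    calc |g' t| ≤ |g' 1| + |∫ s in t..1, g'' s| := by
          rw [h4]; exact abs_sub _ _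
      _ ≤ C := by rw [hCdef]; linarith
  -- |g x| ≤ C x on [0,1]
  have hgbd : ∀ x ∈ Icc (0:ℝ) 1, |g x| ≤ C * x := by
    intro x hx
    have := Convex.norm_image_sub_le_of_norm_hasDerivWithin_le hg_deriv
      (fun t ht => by simpa [Real.norm_eq_abs] using hg'bd t ht)
      (convex_Icc 0 1) (left_mem_Icc.mpr zero_le_one) hx
    simpa [hg0, Real.norm_eq_abs, abs_of_nonneg hx.1] using this
  -- lower bound a x ≥ a 1 * x ^ K
  have hacont : ContinuousOn a (Icc 0 1) := fun t ht =>
    (hSD.deriv t ht).continuousWithinAt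
  have halow : ∀ x ∈ Set.Ioc (0:ℝ) 1, a 1 * x ^ K ≤ a x := by
    intro x hx
    have hFanti : AntitoneOn (fun t => a t / t ^ K) (Icc x 1) := by
      have hderivF : ∀ t ∈ interior (Icc x 1),
          HasDerivAt (fun t => a t / t ^ K)
            ((a' t * t ^ K - a t * (K * t ^ (K - 1))) / (t ^ K) ^ 2) t := by
        intro t ht
        rw [interior_Icc] at ht
        have ht0 : 0 < t := lt_trans hx.1 ht.1
        have haD : HasDerivAt a (a' t) t :=
          (hSD.deriv t ⟨ht0.le, ht.2.le⟩).hasDerivAt (Icc_mem_nhds ht0 ht.2)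
        have hrD : HasDerivAt (fun s : ℝ => s ^ K) (K * t ^ (K - 1)) t :=
          Real.hasDerivAt_rpow_const (Or.inl ht0.ne')
        exact haD.div hrD (Real.rpow_pos_of_pos ht0 K).ne'
      apply antitoneOn_of_deriv_nonpos (convex_Icc x 1)
      · refine ContinuousOn.div (hacont.mono ?_) ?_ ?_
        · exact Icc_subset_Icc hx.1.le le_rfl
        · intro t ht
          have ht0 : 0 < t := lt_of_lt_of_le hx.1 ht.1
          exact (Real.continuousAt_rpow_const t K (Or.inl ht0.ne')).continuousWithinAt
        · intro t ht
          have ht0 : 0 < t := lt_of_lt_of_le hx.1 ht.1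
          exact (Real.rpow_pos_of_pos ht0 K).ne'
      · intro t ht
        exact (hderivF t ht).differentiableAt.differentiableWithinAt
      · intro t ht
        rw [(hderivF t ht).deriv]
        rw [interior_Icc] at ht
        have ht0 : 0 < t := lt_trans hx.1 ht.1
        apply div_nonpos_of_nonpos_of_nonneg _ (sq_nonneg _)
        have hb := hSD.bound t ⟨ht0, ht.2.le⟩
        have h1 : a' t * t ≤ K * a t := by
          calc a' t * t ≤ |a' t| * t :=
              mul_le_mul_of_nonneg_right (le_abs_self _) ht0.le
            _ = t * |a' t| := by ring
            _ ≤ K * a t := hb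
        have htK : t ^ K = t ^ (K - 1) * t := by
          rw [← Real.rpow_add_one ht0.ne' (K - 1)]; ring_nf
        have htK1 : 0 ≤ t ^ (K - 1) := (Real.rpow_pos_of_pos ht0 _).le
        rw [htK]
        nlinarith [mul_le_mul_of_nonneg_left h1 htK1]
    have h1m : (1:ℝ) ∈ Icc x 1 := right_mem_Icc.mpr hx.2
    have hxm : x ∈ Icc x 1 := left_mem_Icc.mpr hx.2
    have h := hFanti hxm h1m hx.2
    simp only [Real.one_rpow, div_one] at h
    exact (le_div_iff₀ (Real.rpow_pos_of_pos hx.1 K)).mp h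
  -- pointwise bound on y''
  have hy''bd : ∀ t ∈ Set.Ioc (0:ℝ) 1, |y'' t| ≤ (C / a 1) * t ^ (1 - K) := by
    intro t ht
    have hat : 0 < a t := hSD.pos t ht
    have hyt : y'' t = g t / a t := by
      rw [hg_eq t ht, mul_div_cancel_left₀ _ hat.ne']
    have htK : 0 < t ^ K := Real.rpow_pos_of_pos ht.1 K
    have h1 : |g t| ≤ C * t := hgbd t ⟨ht.1.le, ht.2⟩
    have h2 : a 1 * t ^ K ≤ a t := halow t ht
    have h3 : |g t| / a t ≤ (C * t) / (a 1 * t ^ K) :=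
      div_le_div₀ (mul_nonneg hC0 ht.1.le) h1 (by positivity) h2
    rw [hyt, abs_div, abs_of_pos hat]
    refine h3.trans (le_of_eq ?_)
    rw [Real.rpow_sub ht.1, Real.rpow_one]
    field_simp
  -- the bound B on |y'|
  set B : ℝ := |y' 1| + (C / a 1) * (1 / (2 - K)) with hBdef
  have hy'bd : ∀ x ∈ Set.Ioc (0:ℝ) 1, |y' x| ≤ B := by
    intro x hx
    have hx1 : x ≤ 1 := hx.2
    have h1 : y' 1 - y' x = ∫ t in x..1, y'' t :=
      hy'AC x hx 1 ⟨zero_lt_one, le_refl 1⟩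
    have hint : IntervalIntegrable y'' volume x 1 := by
      refine IntegrableOn.intervalIntegrable ?_
      rw [uIcc_of_le hx1]; exact hy''loc x hx
    have hintr : IntervalIntegrable (fun t : ℝ => (C / a 1) * t ^ (1 - K))
        volume x 1 :=
      (intervalIntegral.intervalIntegrable_rpow' (by linarith)).const_mul _
    have h2 : |∫ t in x..1, y'' t| ≤ ∫ t in x..1, |y'' t| := by
      simpa [Real.norm_eq_abs] using
        intervalIntegral.norm_integral_le_integral_norm (f := y'') (μ := volume) hx1
    have h3 : (∫ t in x..1, |y'' t|) ≤ ∫ t in x..1, (C / a 1) * t ^ (1 - K) := by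
      refine intervalIntegral.integral_mono_on hx1 hint.abs hintr fun t ht => ?_
      exact hy''bd t ⟨lt_of_lt_of_le hx.1 ht.1, ht.2⟩
    have h4 : (∫ t in x..1, (C / a 1) * t ^ (1 - K))
        = (C / a 1) * ((1 - x ^ (2 - K)) / (2 - K)) := by
      rw [intervalIntegral.integral_const_mul,
        integral_rpow (Or.inl (by linarith : (-1:ℝ) < 1 - K)),
        show (1:ℝ) - K + 1 = 2 - K by ring, Real.one_rpow]
    have h5 : (C / a 1) * ((1 - x ^ (2 - K)) / (2 - K)) ≤ (C / a 1) * (1 / (2 - K)) := by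
      have hCa : 0 ≤ C / a 1 := div_nonneg hC0 ha1.le
      refine mul_le_mul_of_nonneg_left ?_ hCa
      apply div_le_div_of_nonneg_right ?_ (by linarith)
      · exact sub_le_self _ (Real.rpow_nonneg hx.1.le _)
    have h6 : y' x = y' 1 - ∫ t in x..1, y'' t := by linarith
    calc |y' x| ≤ |y' 1| + |∫ t in x..1, y'' t| := by rw [h6]; exact abs_sub _ _
      _ ≤ |y' 1| + (C / a 1) * (1 / (2 - K)) := by linarith
  -- conclusion
  have hgcont : Tendsto (fun δ => B * |g δ|) (𝓝[>] (0:ℝ)) (𝓝 0) := by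
    have h0 : ContinuousWithinAt g (Icc 0 1) 0 :=
      (hg_deriv 0 (left_mem_Icc.mpr zero_le_one)).continuousWithinAt
    have h1 : Tendsto g (𝓝[>] (0:ℝ)) (𝓝 (g 0)) := by
      refine h0.tendsto.mono_left ?_
      rw [← nhdsWithin_Ioc_eq_nhdsGT (zero_lt_one (α := ℝ))]
      exact nhdsWithin_mono _ Ioc_subset_Icc_self
    rw [hg0] at h1
    have := (h1.abs).const_mul B
    simpa using this
  apply squeeze_zero_norm' ?_ hgcont
  filter_upwards [Ioc_mem_nhdsGT_of_mem (left_mem_Ico.mpr zero_lt_one)] with x hx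
  have : |y' x * (a x * y'' x)| ≤ B * |g x| := by
    rw [← hg_eq x hx, abs_mul]
    exact mul_le_mul_of_nonneg_right (hy'bd x hx) (abs_nonneg _)
  simpa only [Real.norm_eq_abs] using this
end

section
/- Assume a is strongly degenerate (SD). Let y : (0,1] → ℝ be differentiable with y' locally absolutely continuous on (0,1], y' ∈ L²(0,1), √a·y'' ∈ L²(0,1), and suppose that the function x ↦ a(x)·y''(x) coincides with a function in H²(0,1) whose continuous representative vanishes at x = 0, i.e. (a·y'')(0) = 0. Then lim_{δ→0⁺} a(δ)·(y'(δ))² = 0. -/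
open Set Filter MeasureTheory Topology

theorem lim_a_yprime_sq_SD
    (a a' : ℝ → ℝ) (K : ℝ) (hSD : IsStronglyDegenerate a a' K)
    (y y' y'' g g' g'' : ℝ → ℝ)
    (hy' : ∀ x ∈ Set.Ioc (0:ℝ) 1, HasDerivWithinAt y (y' x) (Set.Ioc 0 1) x)
    (hy'AC : ∀ x ∈ Set.Ioc (0:ℝ) 1, ∀ z ∈ Set.Ioc (0:ℝ) 1,
      y' z - y' x = ∫ t in x..z, y'' t)
    (hy''loc : ∀ x ∈ Set.Ioc (0:ℝ) 1, MeasureTheory.IntegrableOn y'' (Set.Icc x 1))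
    (hy'meas : MeasureTheory.AEStronglyMeasurable y'
      (MeasureTheory.volume.restrict (Set.Ioo 0 1)))
    (hy'L2 : MeasureTheory.IntegrableOn (fun x => (y' x) ^ 2) (Set.Ioo 0 1))
    (hy''meas : MeasureTheory.AEStronglyMeasurable y''
      (MeasureTheory.volume.restrict (Set.Ioo 0 1)))
    (hayL2 : MeasureTheory.IntegrableOn (fun x => a x * (y'' x) ^ 2) (Set.Ioo 0 1))
    -- `x ↦ a x * y'' x` coincides on `(0,1]` with a function `g ∈ H²(0,1)`;
    -- `g` is `C¹` on `[0,1]` with derivative `g'`, `g'` is absolutely continuous with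
    -- a.e. derivative `g'' ∈ L²(0,1)`, and the continuous representative satisfies `g 0 = 0`.
    (hg_eq : ∀ x ∈ Set.Ioc (0:ℝ) 1, g x = a x * y'' x)
    (hg_deriv : ∀ x ∈ Set.Icc (0:ℝ) 1, HasDerivWithinAt g (g' x) (Set.Icc 0 1) x)
    (hg'AC : ∀ x ∈ Set.Icc (0:ℝ) 1, ∀ z ∈ Set.Icc (0:ℝ) 1,
      g' z - g' x = ∫ t in x..z, g'' t)
    (hg''L1 : MeasureTheory.IntegrableOn g'' (Set.Ioo 0 1))
    (hg''L2 : MeasureTheory.IntegrableOn (fun x => (g'' x) ^ 2) (Set.Ioo 0 1))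
    (hg0 : g 0 = 0) :
    Filter.Tendsto (fun δ : ℝ => a δ * (y' δ) ^ 2) (nhdsWithin 0 (Set.Ioi 0)) (nhds 0) := by
  obtain ⟨haderiv, ha'cont, ha0, hapos, hK1, hK2, habd⟩ := hSD
  have ha1 : 0 < a 1 := hapos 1 ⟨one_pos, le_refl 1⟩
  -- continuity of a at 0 from the right
  have haC : Filter.Tendsto a (nhdsWithin 0 (Set.Ioi 0)) (nhds 0) := by
    have h1 : ContinuousWithinAt a (Set.Icc 0 1) 0 :=
      (haderiv 0 ⟨le_refl 0, zero_le_one⟩).continuousWithinAt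
    have h2 : Filter.Tendsto a (nhdsWithin 0 (Set.Ioc 0 1)) (nhds 0) := by
      have := h1.mono Set.Ioc_subset_Icc_self
      simpa [ContinuousWithinAt, ha0] using this
    rwa [nhdsWithin_Ioc_eq_nhdsGT one_pos] at h2
  -- bound on g'
  set C : ℝ := |g' 1| + ∫ t in Set.Ioo (0:ℝ) 1, |g'' t| with hCdef
  have hg''abs : MeasureTheory.IntegrableOn (fun t => |g'' t|) (Set.Ioo 0 1) := hg''L1.abs
  have habs_mono : ∀ z ∈ Set.Icc (0:ℝ) 1,
      (∫ t in Set.Ioo z 1, |g'' t|) ≤ ∫ t in Set.Ioo (0:ℝ) 1, |g'' t| := by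
    intro z hz
    apply MeasureTheory.setIntegral_mono_set hg''abs
    · filter_upwards with t using abs_nonneg _
    · exact (Set.Ioo_subset_Ioo_left hz.1).eventuallyLE
  have hg'bd : ∀ z ∈ Set.Icc (0:ℝ) 1, |g' z| ≤ C := by
    intro z hz
    have h1 : g' z - g' 1 = ∫ t in (1:ℝ)..z, g'' t :=
      hg'AC 1 ⟨zero_le_one, le_refl 1⟩ z hz
    have h2 : |g' z| ≤ |g' 1| + |∫ t in z..(1:ℝ), g'' t| := by
      have : g' z = g' 1 - ∫ t in z..(1:ℝ), g'' t := by
        rw [intervalIntegral.integral_symm] at h1; linarith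
      rw [this]
      exact (abs_sub _ _).trans (by rfl)
    have h3 : |∫ t in z..(1:ℝ), g'' t| ≤ ∫ t in z..(1:ℝ), |g'' t| :=
      intervalIntegral.abs_integral_le_integral_abs hz.2
    have h4 : (∫ t in z..(1:ℝ), |g'' t|) = ∫ t in Set.Ioo z 1, |g'' t| := by
      rw [intervalIntegral.integral_of_le hz.2, MeasureTheory.integral_Ioc_eq_integral_Ioo]
    calc |g' z| ≤ |g' 1| + |∫ t in z..(1:ℝ), g'' t| := h2
      _ ≤ |g' 1| + ∫ t in Set.Ioo z 1, |g'' t| := by rw [← h4]; linarith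
      _ ≤ C := by rw [hCdef]; linarith [habs_mono z hz]
  have hC0 : 0 ≤ C := le_trans (abs_nonneg _) (hg'bd 1 ⟨zero_le_one, le_refl 1⟩)
  -- bound |g x| ≤ C * x
  have hgbd : ∀ x ∈ Set.Icc (0:ℝ) 1, |g x| ≤ C * x := by
    intro x hx
    have := (convex_Icc (0:ℝ) 1).norm_image_sub_le_of_norm_hasDerivWithin_le hg_deriv
      (fun z hz => by simpa using hg'bd z hz)
      (Set.left_mem_Icc.2 zero_le_one) hx
    simpa [hg0, abs_of_nonneg hx.1] using this
  -- lower bound on a : a 1 * x ^ K ≤ a x on (0,1]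
  have halow : ∀ x ∈ Set.Ioc (0:ℝ) 1, a 1 * x ^ K ≤ a x := by
    have hanti : AntitoneOn (fun x => a x * x ^ (-K)) (Set.Ioc 0 1) := by
      have hderiv : ∀ x ∈ Set.Ioo (0:ℝ) 1,
          HasDerivAt (fun x => a x * x ^ (-K))
            (a' x * x ^ (-K) + a x * (-K * x ^ (-K - 1))) x := by
        intro x hx
        have hax : HasDerivAt a (a' x) x := by
          apply (haderiv x ⟨hx.1.le, hx.2.le⟩).hasDerivAt
          exact Icc_mem_nhds hx.1 hx.2
        have hrx : HasDerivAt (fun x : ℝ => x ^ (-K)) (-K * x ^ (-K - 1)) x :=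
          Real.hasDerivAt_rpow_const (Or.inl hx.1.ne')
        exact hax.mul hrx
      apply antitoneOn_of_deriv_nonpos (convex_Ioc 0 1)
      · intro x hx
        have hx0 : 0 < x := hx.1
        exact ((haderiv x ⟨hx.1.le, hx.2⟩).continuousWithinAt.mono
          Set.Ioc_subset_Icc_self).mul
          ((Real.continuousAt_rpow_const x (-K) (Or.inl hx0.ne')).continuousWithinAt)
      · intro x hx
        rw [interior_Ioc] at hx
        exact ((hderiv x hx).differentiableAt).differentiableWithinAt
      · intro x hx
        rw [interior_Ioc] at hx
        rw [(hderiv x hx).deriv]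
        have hx0 : 0 < x := hx.1
        have hxne : x ≠ 0 := hx0.ne'
        have hsplit : x ^ (-K) = x * x ^ (-K - 1) := by
          rw [show x * x ^ (-K - 1) = x ^ (1:ℝ) * x ^ (-K - 1) by rw [Real.rpow_one],
            ← Real.rpow_add hx0]
          norm_num
        have hpow_pos : (0:ℝ) < x ^ (-K - 1) := Real.rpow_pos_of_pos hx0 _
        have hb : x * a' x ≤ K * a x :=
          le_trans (mul_le_mul_of_nonneg_left (le_abs_self _) hx0.le)
            (habd x ⟨hx0, hx.2.le⟩)
        calc a' x * x ^ (-K) + a x * (-K * x ^ (-K - 1))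
            = (x * a' x - K * a x) * x ^ (-K - 1) := by rw [hsplit]; ring
          _ ≤ 0 := mul_nonpos_of_nonpos_of_nonneg (by linarith) hpow_pos.le
    intro x hx
    have h1 : a x * x ^ (-K) ≥ a 1 * (1:ℝ) ^ (-K) :=
      hanti hx ⟨one_pos, le_refl 1⟩ hx.2
    rw [Real.one_rpow, mul_one] at h1
    have hx0 : 0 < x := hx.1
    have hK : (0:ℝ) < x ^ K := Real.rpow_pos_of_pos hx0 _
    have hinv : x ^ (-K) * x ^ K = 1 := by
      rw [← Real.rpow_add hx0]; simp
    calc a 1 * x ^ K ≤ (a x * x ^ (-K)) * x ^ K :=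
          mul_le_mul_of_nonneg_right h1 hK.le
      _ = a x := by rw [mul_assoc, hinv, mul_one]
  -- bound on y''
  have hy''bd : ∀ x ∈ Set.Ioo (0:ℝ) 1, |y'' x| ≤ (C / a 1) * x ^ (1 - K) := by
    intro x hx
    have hx0 : 0 < x := hx.1
    have hxIoc : x ∈ Set.Ioc (0:ℝ) 1 := ⟨hx.1, hx.2.le⟩
    have hax : 0 < a x := hapos x hxIoc
    have h1 : |y'' x| * a x = |g x| := by
      rw [hg_eq x hxIoc, abs_mul, abs_of_pos hax]; ring
    have h2 : |y'' x| * (a 1 * x ^ K) ≤ C * x := by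
      calc |y'' x| * (a 1 * x ^ K) ≤ |y'' x| * a x :=
            mul_le_mul_of_nonneg_left (halow x hxIoc) (abs_nonneg _)
        _ = |g x| := h1
        _ ≤ C * x := hgbd x ⟨hx0.le, hx.2.le⟩
    have hK : (0:ℝ) < x ^ K := Real.rpow_pos_of_pos hx0 _
    have hxeq : x ^ (1 - K) * x ^ K = x := by
      rw [← Real.rpow_add hx0]; norm_num
    calc |y'' x| ≤ C * x / (a 1 * x ^ K) := by
            rw [le_div_iff₀ (by positivity : (0:ℝ) < a 1 * x ^ K)]; exact h2
      _ = (C / a 1) * x ^ (1 - K) := by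
          rw [div_eq_iff (ne_of_gt (by positivity : (0:ℝ) < a 1 * x ^ K)),
            show C / a 1 * x ^ (1 - K) * (a 1 * x ^ K)
              = C / a 1 * a 1 * (x ^ (1 - K) * x ^ K) by ring,
            hxeq, div_mul_cancel₀ _ (ne_of_gt ha1)]
  -- y'' is integrable on (0,1)
  have hy''int : MeasureTheory.IntegrableOn y'' (Set.Ioo 0 1) := by
    have hdom : MeasureTheory.IntegrableOn (fun x : ℝ => (C / a 1) * x ^ (1 - K))
        (Set.Ioo (0:ℝ) 1) := by
      have h1 : IntervalIntegrable (fun x : ℝ => x ^ (1 - K)) MeasureTheory.volume 0 1 :=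
        intervalIntegral.intervalIntegrable_rpow' (by linarith)
      have h2 : MeasureTheory.IntegrableOn (fun x : ℝ => x ^ (1 - K)) (Set.Ioc (0:ℝ) 1) := by
        rwa [intervalIntegrable_iff_integrableOn_Ioc_of_le zero_le_one] at h1
      exact (h2.mono_set Set.Ioo_subset_Ioc_self).const_mul _
    apply MeasureTheory.Integrable.mono' hdom hy''meas
    filter_upwards [MeasureTheory.ae_restrict_mem measurableSet_Ioo] with x hx
    simpa using hy''bd x hx
  -- bound on y'
  set B : ℝ := |y' 1| + ∫ t in Set.Ioo (0:ℝ) 1, |y'' t| with hBdef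
  have hy''absint : MeasureTheory.IntegrableOn (fun t => |y'' t|) (Set.Ioo 0 1) := hy''int.abs
  have hy'bd : ∀ δ ∈ Set.Ioc (0:ℝ) 1, |y' δ| ≤ B := by
    intro δ hδ
    have h1 : y' δ - y' 1 = ∫ t in (1:ℝ)..δ, y'' t :=
      hy'AC 1 ⟨one_pos, le_refl 1⟩ δ hδ
    have h2 : |y' δ| ≤ |y' 1| + |∫ t in δ..(1:ℝ), y'' t| := by
      have : y' δ = y' 1 - ∫ t in δ..(1:ℝ), y'' t := by
        rw [intervalIntegral.integral_symm] at h1; linarith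
      rw [this]
      exact (abs_sub _ _).trans (by rfl)
    have h3 : |∫ t in δ..(1:ℝ), y'' t| ≤ ∫ t in δ..(1:ℝ), |y'' t| :=
      intervalIntegral.abs_integral_le_integral_abs hδ.2
    have h4 : (∫ t in δ..(1:ℝ), |y'' t|) = ∫ t in Set.Ioo δ 1, |y'' t| := by
      rw [intervalIntegral.integral_of_le hδ.2, MeasureTheory.integral_Ioc_eq_integral_Ioo]
    have h5 : (∫ t in Set.Ioo δ 1, |y'' t|) ≤ ∫ t in Set.Ioo (0:ℝ) 1, |y'' t| := by
      apply MeasureTheory.setIntegral_mono_set hy''absint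
      · filter_upwards with t using abs_nonneg _
      · exact (Set.Ioo_subset_Ioo_left hδ.1.le).eventuallyLE
    rw [hBdef]
    calc |y' δ| ≤ |y' 1| + |∫ t in δ..(1:ℝ), y'' t| := h2
      _ ≤ |y' 1| + ∫ t in Set.Ioo δ 1, |y'' t| := by rw [← h4]; linarith
      _ ≤ |y' 1| + ∫ t in Set.Ioo (0:ℝ) 1, |y'' t| := by linarith
  have hB0 : 0 ≤ B := le_trans (abs_nonneg _) (hy'bd 1 ⟨one_pos, le_refl 1⟩)
  -- conclusion by squeezing
  have hmem : Set.Ioc (0:ℝ) 1 ∈ nhdsWithin (0:ℝ) (Set.Ioi 0) :=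
    Ioc_mem_nhdsGT_of_mem ⟨le_refl 0, one_pos⟩
  apply squeeze_zero'
  · filter_upwards [hmem] with δ hδ
    exact mul_nonneg (hapos δ hδ).le (sq_nonneg _)
  · filter_upwards [hmem] with δ hδ
    have h1 : (y' δ) ^ 2 ≤ B ^ 2 := by
      rw [← sq_abs]
      exact pow_le_pow_left₀ (abs_nonneg _) (hy'bd δ hδ) 2
    calc a δ * (y' δ) ^ 2 ≤ a δ * B ^ 2 :=
          mul_le_mul_of_nonneg_left h1 (hapos δ hδ).le
      _ = B ^ 2 * a δ := by ring
  · have := haC.const_mul (B ^ 2)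
    simpa using this
end

section
/- Assume a is strongly degenerate (SD). Let y : (0,1] → ℝ be differentiable with y' locally absolutely continuous on (0,1], y' ∈ L²(0,1), √a·y'' ∈ L²(0,1), and suppose that the function x ↦ a(x)·y''(x) coincides with a function in H²(0,1) whose continuous representative vanishes at x = 0, i.e. (a·y'')(0) = 0. Then lim_{δ→0⁺} δ·a(δ)·(y''(δ))² = 0. -/
open Set Filter MeasureTheory Topology

/-!
Since `x |a'| ≤ K a` with `K < 2`, the quotient `a x / x²` decreases on `(0,1]`, so
`a x ≥ a 1 · x²` and hence `δ³ / a δ → 0`. On the other hand `g = a y''` is `C¹` with `g 0 = 0`,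
so `g δ / δ → g' 0`. The claim follows from `δ a(δ) y''(δ)² = (g δ / δ)² · δ³ / a δ`.
-/

theorem antitoneOn_div_sq_of_mul_deriv_le {a a' : ℝ → ℝ} {x y : ℝ} (hx : 0 < x)
    (hcont : ContinuousOn a (Icc x y)) (hderiv : ∀ t ∈ Ioo x y, HasDerivAt a (a' t) t)
    (hle : ∀ t ∈ Ioo x y, t * a' t ≤ 2 * a t) :
    AntitoneOn (fun t => a t / t ^ 2) (Icc x y) := by
  refine antitoneOn_of_hasDerivWithinAt_nonpos (convex_Icc x y)
    (f' := fun t => (a' t * t ^ 2 - a t * (2 * t)) / (t ^ 2) ^ 2) ?_ ?_ ?_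
  · exact hcont.div (continuousOn_pow 2) fun t ht => (pow_pos (hx.trans_le ht.1) 2).ne'
  · intro t ht
    rw [interior_Icc] at ht
    have ht0 : t ≠ 0 := (hx.trans ht.1).ne'
    have hsq : HasDerivAt (fun s : ℝ => s ^ 2) (2 * t) t := by simpa using hasDerivAt_pow 2 t
    exact ((hderiv t ht).div hsq (pow_ne_zero 2 ht0)).hasDerivWithinAt
  · intro t ht
    rw [interior_Icc] at ht
    have ht0 : 0 < t := hx.trans ht.1
    have hnum : a' t * t ^ 2 - a t * (2 * t) ≤ 0 := by nlinarith [hle t ht]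
    exact div_nonpos_of_nonpos_of_nonneg hnum (by positivity)

namespace IsStronglyDegenerate

variable {a a' : ℝ → ℝ} {K : ℝ}

theorem mul_sq_le (hSD : IsStronglyDegenerate a a' K) {x : ℝ} (hx : x ∈ Ioc (0 : ℝ) 1) :
    a 1 * x ^ 2 ≤ a x := by
  have hsub : Icc x 1 ⊆ Icc 0 1 := Icc_subset_Icc hx.1.le le_rfl
  have hcont : ContinuousOn a (Icc x 1) := fun t ht =>
    (hSD.deriv t (hsub ht)).continuousWithinAt.mono hsub
  have hanti : AntitoneOn (fun t => a t / t ^ 2) (Icc x 1) := by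
    refine antitoneOn_div_sq_of_mul_deriv_le (a' := a') hx.1 hcont
      (fun t ht => ?_) (fun t ht => ?_)
    · exact (hSD.deriv t (hsub (Ioo_subset_Icc_self ht))).hasDerivAt
        (Icc_mem_nhds (hx.1.trans ht.1) ht.2)
    · have ht : t ∈ Ioc (0 : ℝ) 1 := ⟨hx.1.trans ht.1, ht.2.le⟩
      calc t * a' t ≤ t * |a' t| := mul_le_mul_of_nonneg_left (le_abs_self _) ht.1.le
        _ ≤ K * a t := hSD.bound t ht
        _ ≤ 2 * a t := mul_le_mul_of_nonneg_right hSD.K_lt_two.le (hSD.pos t ht).le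
  have h := hanti ⟨le_rfl, hx.2⟩ ⟨hx.2, le_rfl⟩ hx.2
  simp only [one_pow, div_one] at h
  rwa [le_div_iff₀ (pow_pos hx.1 2)] at h

theorem tendsto_pow_three_div (hSD : IsStronglyDegenerate a a' K) :
    Tendsto (fun δ => δ ^ 3 / a δ) (𝓝[>] 0) (𝓝 0) := by
  have ha1 : 0 < a 1 := hSD.pos 1 ⟨zero_lt_one, le_rfl⟩
  have hlin : Tendsto (fun δ : ℝ => δ / a 1) (𝓝[>] 0) (𝓝 0) := by
    simpa using ((continuous_id.div_const (a 1)).tendsto 0).mono_left nhdsWithin_le_nhds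
  refine squeeze_zero' ?_ ?_ hlin <;> filter_upwards [Ioc_mem_nhdsGT zero_lt_one] with δ hδ
  · exact div_nonneg (pow_nonneg hδ.1.le 3) (hSD.pos δ hδ).le
  · rw [div_le_div_iff₀ (hSD.pos δ hδ) ha1]
    nlinarith [hSD.mul_sq_le hδ, hδ.1]

end IsStronglyDegenerate

theorem tendsto_div_self_nhdsGT_zero {g : ℝ → ℝ} {d : ℝ} (hg : HasDerivWithinAt g d (Ioi 0) 0)
    (hg0 : g 0 = 0) : Tendsto (fun δ => g δ / δ) (𝓝[>] 0) (𝓝 d) := by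
  refine ((hasDerivWithinAt_iff_tendsto_slope' self_notMem_Ioi).1 hg).congr fun δ => ?_
  simp [slope_def_field, hg0]

theorem lim_delta_a_ysecond_sq_SD_general
    (a a' : ℝ → ℝ) (K : ℝ) (hSD : IsStronglyDegenerate a a' K)
    (y'' g g' : ℝ → ℝ)
    -- `x ↦ a x * y'' x` coincides on `(0,1]` with a function `g ∈ H²(0,1)`;
    -- `g` is `C¹` on `[0,1]` with derivative `g'`, `g'` is absolutely continuous with
    -- a.e. derivative `g'' ∈ L²(0,1)`, and the continuous representative satisfies `g 0 = 0`.
    (hg_eq : ∀ x ∈ Set.Ioc (0:ℝ) 1, g x = a x * y'' x)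
    (hg_deriv : ∀ x ∈ Set.Icc (0:ℝ) 1, HasDerivWithinAt g (g' x) (Set.Icc 0 1) x)
    (hg0 : g 0 = 0) :
    Filter.Tendsto (fun δ : ℝ => δ * a δ * (y'' δ) ^ 2) (nhdsWithin 0 (Set.Ioi 0)) (nhds 0) := by
  have hslope : Tendsto (fun δ => g δ / δ) (𝓝[>] 0) (𝓝 (g' 0)) :=
    tendsto_div_self_nhdsGT_zero ((hg_deriv 0 ⟨le_rfl, zero_le_one⟩).mono_of_mem_nhdsWithin
      (Icc_mem_nhdsGT zero_lt_one)) hg0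
  have hlim := (hslope.pow 2).mul hSD.tendsto_pow_three_div
  rw [mul_zero] at hlim
  refine hlim.congr' ?_
  filter_upwards [Ioc_mem_nhdsGT zero_lt_one] with δ hδ
  have ha : a δ ≠ 0 := (hSD.pos δ hδ).ne'
  have hδ0 : δ ≠ 0 := hδ.1.ne'
  rw [hg_eq δ hδ]
  field_simp

theorem lim_delta_a_ysecond_sq_SD
    (a a' : ℝ → ℝ) (K : ℝ) (hSD : IsStronglyDegenerate a a' K)
    (y y' y'' g g' g'' : ℝ → ℝ)
    (hy' : ∀ x ∈ Set.Ioc (0:ℝ) 1, HasDerivWithinAt y (y' x) (Set.Ioc 0 1) x)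
    (hy'AC : ∀ x ∈ Set.Ioc (0:ℝ) 1, ∀ z ∈ Set.Ioc (0:ℝ) 1,
      y' z - y' x = ∫ t in x..z, y'' t)
    (hy''loc : ∀ x ∈ Set.Ioc (0:ℝ) 1, MeasureTheory.IntegrableOn y'' (Set.Icc x 1))
    (hy'meas : MeasureTheory.AEStronglyMeasurable y'
      (MeasureTheory.volume.restrict (Set.Ioo 0 1)))
    (hy'L2 : MeasureTheory.IntegrableOn (fun x => (y' x) ^ 2) (Set.Ioo 0 1))
    (hy''meas : MeasureTheory.AEStronglyMeasurable y''
      (MeasureTheory.volume.restrict (Set.Ioo 0 1)))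
    (hayL2 : MeasureTheory.IntegrableOn (fun x => a x * (y'' x) ^ 2) (Set.Ioo 0 1))
    -- `x ↦ a x * y'' x` coincides on `(0,1]` with a function `g ∈ H²(0,1)`;
    -- `g` is `C¹` on `[0,1]` with derivative `g'`, `g'` is absolutely continuous with
    -- a.e. derivative `g'' ∈ L²(0,1)`, and the continuous representative satisfies `g 0 = 0`.
    (hg_eq : ∀ x ∈ Set.Ioc (0:ℝ) 1, g x = a x * y'' x)
    (hg_deriv : ∀ x ∈ Set.Icc (0:ℝ) 1, HasDerivWithinAt g (g' x) (Set.Icc 0 1) x)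
    (hg'AC : ∀ x ∈ Set.Icc (0:ℝ) 1, ∀ z ∈ Set.Icc (0:ℝ) 1,
      g' z - g' x = ∫ t in x..z, g'' t)
    (hg''L1 : MeasureTheory.IntegrableOn g'' (Set.Ioo 0 1))
    (hg''L2 : MeasureTheory.IntegrableOn (fun x => (g'' x) ^ 2) (Set.Ioo 0 1))
    (hg0 : g 0 = 0) :
    Filter.Tendsto (fun δ : ℝ => δ * a δ * (y'' δ) ^ 2) (nhdsWithin 0 (Set.Ioi 0)) (nhds 0) :=
  lim_delta_a_ysecond_sq_SD_general a a' K hSD y'' g g' hg_eq hg_deriv hg0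
end

section
/- Let a : [0,1] → ℝ be continuous with a(0) = 0 and a(x) > 0 for all x ∈ (0,1], and suppose there exists θ ∈ (0,1) such that the function x ↦ a(x)/x^θ is non-increasing on (0,1]. Then for every function w that is locally absolutely continuous on (0,1], continuous at 0, with w(0) = 0 and ∫₀¹ a(x)·(w'(x))² dx < ∞, the Hardy–Poincaré inequality ∫₀¹ (a(x)/x²)·w(x)² dx ≤ (4/(1−θ)²)·∫₀¹ a(x)·(w'(x))² dx holds. -/
open Set Filter MeasureTheory Topology
open scoped ENNReal

/-- Hardy–Poincaré inequality: if `a` is continuous on `[0,1]` with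
`a 0 = 0`, `a > 0` on `(0,1]`, and `x ↦ a x / x ^ θ` is non-increasing on `(0,1]`
for some `θ ∈ (0,1)`, then every `w` locally absolutely continuous on `(0,1]`
(with a.e. derivative `w'`), continuous at `0` with `w 0 = 0` and
`∫₀¹ a (w')² < ∞`, satisfies
`∫₀¹ (a/x²) w² ≤ (4/(1-θ)²) ∫₀¹ a (w')²`. -/
theorem hardy_poincare
    (a : ℝ → ℝ) (θ : ℝ)
    (ha_cont : ContinuousOn a (Set.Icc 0 1))
    (ha_zero : a 0 = 0)
    (ha_pos : ∀ x ∈ Set.Ioc (0:ℝ) 1, 0 < a x)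
    (hθ : θ ∈ Set.Ioo (0:ℝ) 1)
    (hmono : AntitoneOn (fun x : ℝ => a x / x ^ θ) (Set.Ioc (0:ℝ) 1))
    (w w' : ℝ → ℝ)
    (hwAC : ∀ x ∈ Set.Ioc (0:ℝ) 1, ∀ z ∈ Set.Ioc (0:ℝ) 1,
      w z - w x = ∫ t in x..z, w' t)
    (hw'loc : ∀ x ∈ Set.Ioc (0:ℝ) 1, MeasureTheory.IntegrableOn w' (Set.Icc x 1))
    (hw_cont0 : ContinuousWithinAt w (Set.Ici 0) 0)
    (hw0 : w 0 = 0)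
    (hw'meas : MeasureTheory.AEStronglyMeasurable w'
      (MeasureTheory.volume.restrict (Set.Ioo 0 1)))
    (hawL2 : MeasureTheory.IntegrableOn (fun x => a x * (w' x) ^ 2) (Set.Ioo 0 1)) :
    MeasureTheory.IntegrableOn (fun x => a x / x ^ 2 * (w x) ^ 2) (Set.Ioo 0 1) ∧
    ∫ x in Set.Ioo (0:ℝ) 1, a x / x ^ 2 * (w x) ^ 2 ≤
      4 / (1 - θ) ^ 2 * ∫ x in Set.Ioo (0:ℝ) 1, a x * (w' x) ^ 2 := by
  obtain ⟨hθ0, hθ1⟩ := hθ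
  set p : ℝ := (1 - θ) / 2 with hp_def
  have hp0 : 0 < p := by simp only [hp_def]; linarith
  have hpθ : p + θ = 1 - p := by simp only [hp_def]; ring
  have hp1 : p < 1 := by simp only [hp_def]; linarith
  -- measurability basics
  have haM : AEMeasurable a (volume.restrict (Ioo (0:ℝ) 1)) :=
    (ha_cont.mono Ioo_subset_Icc_self).aemeasurable measurableSet_Ioo
  have hw'M : AEMeasurable w' (volume.restrict (Ioo (0:ℝ) 1)) := hw'meas.aemeasurable
  set χ : ℝ → ℝ≥0∞ := fun t => ENNReal.ofReal (a t * w' t ^ 2 * t ^ p) with hχ_def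
  set F : ℝ → ℝ≥0∞ := fun t => ENNReal.ofReal (a t * w' t ^ 2) with hF_def
  have hrpowM : ∀ c : ℝ, AEMeasurable (fun t : ℝ => t ^ c) (volume.restrict (Ioo (0:ℝ) 1)) := by
    intro c
    refine (ContinuousOn.aemeasurable ?_ measurableSet_Ioo)
    exact ContinuousOn.rpow_const continuousOn_id (fun t ht => Or.inl (ne_of_gt ht.1))
  have hFM : AEMeasurable F (volume.restrict (Ioo (0:ℝ) 1)) :=
    ENNReal.measurable_ofReal.comp_aemeasurable ((haM.mul (hw'M.pow_const 2)))
  have hχM : AEMeasurable χ (volume.restrict (Ioo (0:ℝ) 1)) :=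
    ENNReal.measurable_ofReal.comp_aemeasurable ((haM.mul (hw'M.pow_const 2)).mul (hrpowM p))
  set K : ℝ≥0∞ := ∫⁻ t in Ioo (0:ℝ) 1, F t with hK_def
  have hann : ∀ᵐ t ∂(volume.restrict (Ioo (0:ℝ) 1)), 0 ≤ a t * w' t ^ 2 :=
    (ae_restrict_mem measurableSet_Ioo).mono fun t ht =>
      mul_nonneg (ha_pos t ⟨ht.1, ht.2.le⟩).le (sq_nonneg _)
  have hKeq : K = ENNReal.ofReal (∫ t in Ioo (0:ℝ) 1, a t * w' t ^ 2) :=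
    (ofReal_integral_eq_lintegral_ofReal hawL2 hann).symm
  have hKfin : K ≠ ⊤ := by rw [hKeq]; exact ENNReal.ofReal_ne_top
  -- Step 1: pointwise lower bound on a
  have hlow : ∀ x ∈ Ioc (0:ℝ) 1, ∀ t ∈ Ioc (0:ℝ) x, a x * t ^ θ / x ^ θ ≤ a t := by
    intro x hx t ht
    have ht1 : t ∈ Ioc (0:ℝ) 1 := ⟨ht.1, ht.2.trans hx.2⟩
    have h := hmono ht1 hx ht.2
    have htθ : (0:ℝ) < t ^ θ := Real.rpow_pos_of_pos ht.1 θ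
    calc a x * t ^ θ / x ^ θ = a x / x ^ θ * t ^ θ := by ring
      _ ≤ a t / t ^ θ * t ^ θ := by exact mul_le_mul_of_nonneg_right h htθ.le
      _ = a t := div_mul_cancel₀ _ (ne_of_gt htθ)
  -- Step 2: bound on ∫ t^(-p)/a
  have hJ : ∀ x ∈ Ioc (0:ℝ) 1,
      (∫⁻ t in Ioo 0 x, ENNReal.ofReal (t ^ (-p) / a t)) ≤
        ENNReal.ofReal (x ^ (1 - p) / (p * a x)) := by
    intro x hx
    have hx0 : (0:ℝ) < x := hx.1
    have hax : 0 < a x := ha_pos x hx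
    set c : ℝ := x ^ θ / a x with hc_def
    have hc0 : 0 ≤ c := div_nonneg (Real.rpow_pos_of_pos hx0 θ).le hax.le
    have hr : (-1:ℝ) < -(p + θ) := by simp only [hpθ]; linarith
    have hpt : ∀ t ∈ Ioo (0:ℝ) x, t ^ (-p) / a t ≤ c * t ^ (-(p + θ)) := by
      intro t ht
      have ht0 : 0 < t := ht.1
      have hat : 0 < a t := ha_pos t ⟨ht0, ht.2.le.trans hx.2⟩
      have h2 : a x * t ^ θ ≤ a t * x ^ θ :=
        (div_le_iff₀ (Real.rpow_pos_of_pos hx0 θ)).mp (hlow x hx t ⟨ht0, ht.2.le⟩)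
      have hsplit : t ^ (-(p + θ)) = t ^ (-p) / t ^ θ := by
        rw [← Real.rpow_sub ht0]; ring_nf
      rw [hsplit, hc_def, div_mul_div_comm, div_le_div_iff₀ hat (by positivity)]
      have h3 : (0:ℝ) < t ^ (-p) := Real.rpow_pos_of_pos ht0 _
      nlinarith [h3, h2]
    have hint : IntegrableOn (fun t : ℝ => c * t ^ (-(p + θ))) (Ioo 0 x) := by
      have h1 : IntervalIntegrable (fun t : ℝ => t ^ (-(p + θ))) volume 0 x :=
        intervalIntegral.intervalIntegrable_rpow' hr
      have h2 : IntegrableOn (fun t : ℝ => t ^ (-(p + θ))) (Ioo 0 x) := by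
        rw [intervalIntegrable_iff_integrableOn_Ioo_of_le hx0.le] at h1
        exact h1
      exact h2.const_mul c
    have hcomp : ∫ t in Ioo (0:ℝ) x, c * t ^ (-(p + θ)) = x ^ (1 - p) / (p * a x) := by
      have h1 : ∫ t in Ioo (0:ℝ) x, c * t ^ (-(p + θ))
          = c * ∫ t in (0:ℝ)..x, t ^ (-(p + θ)) := by
        rw [intervalIntegral.integral_of_le hx0.le, integral_Ioc_eq_integral_Ioo,
          MeasureTheory.integral_const_mul]
      rw [h1, integral_rpow (Or.inl hr)]
      have he : -(p + θ) + 1 = p := by rw [hpθ]; ring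
      rw [he, Real.zero_rpow (ne_of_gt hp0)]
      have hxθp : x ^ θ * x ^ p = x ^ (1 - p) := by
        rw [← Real.rpow_add hx0, ← hpθ, add_comm]
      rw [hc_def, sub_zero, ← hxθp]
      field_simp
    calc ∫⁻ t in Ioo (0:ℝ) x, ENNReal.ofReal (t ^ (-p) / a t)
        ≤ ∫⁻ t in Ioo (0:ℝ) x, ENNReal.ofReal (c * t ^ (-(p + θ))) := by
          refine lintegral_mono_ae ((ae_restrict_mem measurableSet_Ioo).mono
            fun t ht => ENNReal.ofReal_le_ofReal (hpt t ht))
      _ = ENNReal.ofReal (∫ t in Ioo (0:ℝ) x, c * t ^ (-(p + θ))) := by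
          rw [ofReal_integral_eq_lintegral_ofReal hint
            ((ae_restrict_mem measurableSet_Ioo).mono fun t ht =>
              mul_nonneg hc0 (Real.rpow_nonneg ht.1.le _))]
      _ ≤ ENNReal.ofReal (x ^ (1 - p) / (p * a x)) := le_of_eq (by rw [hcomp])
  -- Step 3: pointwise bound on w
  have hIJ : ∀ x ∈ Ioc (0:ℝ) 1,
      ENNReal.ofReal (w x ^ 2) ≤
        ENNReal.ofReal (x ^ (1 - p) / (p * a x)) * ∫⁻ t in Ioo 0 x, χ t := by
    intro x hx
    have hx0 : (0:ℝ) < x := hx.1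
    set Iℒ : ℝ≥0∞ := ∫⁻ t in Ioo (0:ℝ) x, χ t with hI_def
    set Jℒ : ℝ≥0∞ := ∫⁻ t in Ioo (0:ℝ) x, ENNReal.ofReal (t ^ (-p) / a t) with hJl_def
    have key : ENNReal.ofReal |w x| ≤ Iℒ ^ (1/2 : ℝ) * Jℒ ^ (1/2 : ℝ) := by
      have hwtend : Tendsto w (𝓝[>] (0:ℝ)) (𝓝 0) := by
        have h := hw_cont0
        rw [ContinuousWithinAt, hw0] at h
        exact h.mono_left (nhdsWithin_mono 0 Ioi_subset_Ici_self)
      have htend : Tendsto (fun ε => ENNReal.ofReal |w x - w ε|) (𝓝[>] (0:ℝ))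
          (𝓝 (ENNReal.ofReal |w x|)) := by
        have hc : Continuous fun z : ℝ => ENNReal.ofReal |w x - z| :=
          ENNReal.continuous_ofReal.comp ((continuous_const.sub continuous_id).abs)
        have h2 := (hc.tendsto 0).comp hwtend
        simpa [Function.comp_def] using h2
      refine le_of_tendsto htend ?_
      filter_upwards [Ioo_mem_nhdsGT_of_mem ⟨le_rfl, hx0⟩] with ε hε
      have hε0 : 0 < ε := hε.1
      have hεx : ε < x := hε.2
      have hε1 : ε ∈ Ioc (0:ℝ) 1 := ⟨hε0, hεx.le.trans hx.2⟩
      have hsub : Ioo ε x ⊆ Ioo (0:ℝ) 1 :=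
        fun t ht => ⟨hε0.trans ht.1, lt_of_lt_of_le ht.2 hx.2⟩
      have hsub' : Ioo ε x ⊆ Ioo (0:ℝ) x := fun t ht => ⟨hε0.trans ht.1, ht.2⟩
      have hIntOn : IntegrableOn w' (Ioo ε x) :=
        (hw'loc ε hε1).mono (fun t ht => ⟨ht.1.le, ht.2.le.trans hx.2⟩) le_rfl
      have h1 : |w x - w ε| ≤ ∫ t in Ioo ε x, |w' t| := by
        rw [hwAC ε hε1 x hx]
        calc |∫ t in ε..x, w' t| ≤ ∫ t in ε..x, |w' t| :=
              intervalIntegral.abs_integral_le_integral_abs hεx.le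
          _ = ∫ t in Ioo ε x, |w' t| := by
              rw [intervalIntegral.integral_of_le hεx.le, integral_Ioc_eq_integral_Ioo]
      have h2 : ENNReal.ofReal (∫ t in Ioo ε x, |w' t|)
          = ∫⁻ t in Ioo ε x, ENNReal.ofReal |w' t| :=
        ofReal_integral_eq_lintegral_ofReal hIntOn.abs
          (Eventually.of_forall fun t => abs_nonneg _)
      have h3 : ∀ t ∈ Ioo ε x, ENNReal.ofReal |w' t|
          = (χ t) ^ (1/2:ℝ) * (ENNReal.ofReal (t ^ (-p) / a t)) ^ (1/2:ℝ) := by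
        intro t ht
        have ht0 : 0 < t := hε0.trans ht.1
        have hat : 0 < a t := ha_pos t ⟨ht0, ht.2.le.trans hx.2⟩
        have hprod : (a t * w' t ^ 2 * t ^ p) * (t ^ (-p) / a t) = w' t ^ 2 := by
          have hone : t ^ p * t ^ (-p) = 1 := by
            rw [← Real.rpow_add ht0]; simp
          field_simp
          linear_combination w' t ^ 2 * hone
        have hnn1 : (0:ℝ) ≤ a t * w' t ^ 2 * t ^ p := by positivity
        rw [← ENNReal.mul_rpow_of_nonneg _ _ (by norm_num : (0:ℝ) ≤ 1/2),
          hχ_def, ← ENNReal.ofReal_mul hnn1, hprod,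
          ENNReal.ofReal_rpow_of_nonneg (sq_nonneg _) (by norm_num : (0:ℝ) ≤ 1/2)]
        congr 1
        rw [← sq_abs, ← Real.rpow_natCast |w' t| 2, ← Real.rpow_mul (abs_nonneg _)]
        norm_num
      have hconj : Real.HolderConjugate 2 2 := Real.HolderConjugate.two_two
      have hres : volume.restrict (Ioo ε x) ≤ volume.restrict (Ioo (0:ℝ) 1) :=
        Measure.restrict_mono hsub le_rfl
      have hfM : AEMeasurable (fun t => (χ t) ^ (1/2:ℝ)) (volume.restrict (Ioo ε x)) :=
        ENNReal.continuous_rpow_const.measurable.comp_aemeasurable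
          (hχM.mono_measure hres)
      have hgM : AEMeasurable (fun t => (ENNReal.ofReal (t ^ (-p) / a t)) ^ (1/2:ℝ))
          (volume.restrict (Ioo ε x)) :=
        ENNReal.continuous_rpow_const.measurable.comp_aemeasurable
          (ENNReal.measurable_ofReal.comp_aemeasurable
            (((hrpowM (-p)).div haM).mono_measure hres))
      have hH := ENNReal.lintegral_mul_le_Lp_mul_Lq (volume.restrict (Ioo ε x))
        hconj hfM hgM
      have hsq : ∀ A : ℝ≥0∞, (A ^ (1/2:ℝ)) ^ (2:ℝ) = A := by
        intro A; rw [← ENNReal.rpow_mul]; norm_num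
      calc ENNReal.ofReal |w x - w ε|
          ≤ ENNReal.ofReal (∫ t in Ioo ε x, |w' t|) := ENNReal.ofReal_le_ofReal h1
        _ = ∫⁻ t in Ioo ε x, ENNReal.ofReal |w' t| := h2
        _ = ∫⁻ t in Ioo ε x,
              (χ t) ^ (1/2:ℝ) * (ENNReal.ofReal (t ^ (-p) / a t)) ^ (1/2:ℝ) :=
            setLIntegral_congr_fun measurableSet_Ioo h3
        _ ≤ (∫⁻ t in Ioo ε x, ((χ t) ^ (1/2:ℝ)) ^ (2:ℝ)) ^ (1/2:ℝ) *
              (∫⁻ t in Ioo ε x, ((ENNReal.ofReal (t ^ (-p) / a t)) ^ (1/2:ℝ)) ^ (2:ℝ))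
                ^ (1/2:ℝ) := hH
        _ = (∫⁻ t in Ioo ε x, χ t) ^ (1/2:ℝ) *
              (∫⁻ t in Ioo ε x, ENNReal.ofReal (t ^ (-p) / a t)) ^ (1/2:ℝ) := by
            simp only [hsq]
        _ ≤ Iℒ ^ (1/2:ℝ) * Jℒ ^ (1/2:ℝ) := by
            exact mul_le_mul'
              (ENNReal.rpow_le_rpow (lintegral_mono_set hsub') (by norm_num))
              (ENNReal.rpow_le_rpow (lintegral_mono_set hsub') (by norm_num))
    have hsq2 : ENNReal.ofReal (w x ^ 2) = (ENNReal.ofReal |w x|) ^ (2:ℝ) := by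
      rw [ENNReal.ofReal_rpow_of_nonneg (abs_nonneg _) (by norm_num : (0:ℝ) ≤ 2)]
      congr 1
      rw [← sq_abs, ← Real.rpow_natCast |w x| 2]
      norm_num
    rw [hsq2]
    calc (ENNReal.ofReal |w x|) ^ (2:ℝ)
        ≤ (Iℒ ^ (1/2:ℝ) * Jℒ ^ (1/2:ℝ)) ^ (2:ℝ) :=
          ENNReal.rpow_le_rpow key (by norm_num)
      _ = Iℒ * Jℒ := by
          rw [ENNReal.mul_rpow_of_nonneg _ _ (by norm_num : (0:ℝ) ≤ 2),
            ← ENNReal.rpow_mul, ← ENNReal.rpow_mul]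
          norm_num
      _ ≤ Iℒ * ENNReal.ofReal (x ^ (1 - p) / (p * a x)) :=
          mul_le_mul_right (hJ x hx) _
      _ = ENNReal.ofReal (x ^ (1 - p) / (p * a x)) * Iℒ := mul_comm _ _
  -- Step 4: continuity of w on Ioo 0 1
  have hwC : ContinuousOn w (Ioo (0:ℝ) 1) := by
    intro x hx
    have hx0 : (0:ℝ) < x := hx.1
    have hx1 : x < 1 := hx.2
    set c : ℝ := x / 2 with hc
    have hc0 : 0 < c := by positivity
    have hcx : c < x := by simp only [hc]; linarith
    have hc1 : c ≤ 1 := by linarith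
    have hint : IntegrableOn w' (uIcc c 1) := by
      rw [uIcc_of_le hc1]
      exact hw'loc c ⟨hc0, hc1⟩
    have hcont : ContinuousOn (fun z => w 1 - ∫ t in z..1, w' t) (Icc c 1) := by
      have h := intervalIntegral.continuousOn_primitive_interval_left hint
      rw [uIcc_of_le hc1] at h
      exact continuousOn_const.sub h
    have h1 : ContinuousWithinAt (fun z => w 1 - ∫ t in z..1, w' t) (Icc c 1) x :=
      hcont x ⟨hcx.le, hx1.le⟩
    have h3 : ContinuousAt (fun z => w 1 - ∫ t in z..1, w' t) x :=
      (h1.mono Ioo_subset_Icc_self).continuousAt (Ioo_mem_nhds hcx hx1)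
    have heqev : (fun z => w 1 - ∫ t in z..1, w' t) =ᶠ[𝓝 x] w := by
      filter_upwards [Ioo_mem_nhds hcx hx1] with z hz
      have hz1 : z ∈ Ioc (0:ℝ) 1 := ⟨hc0.trans hz.1, hz.2.le⟩
      have := hwAC z hz1 1 ⟨one_pos, le_rfl⟩
      linarith
    exact (h3.congr heqev).continuousWithinAt
  have hwM : AEMeasurable w (volume.restrict (Ioo (0:ℝ) 1)) :=
    hwC.aemeasurable measurableSet_Ioo
  -- Step 5: main lintegral bound
  set L : ℝ≥0∞ := ∫⁻ x in Ioo (0:ℝ) 1, ENNReal.ofReal (a x / x ^ 2 * w x ^ 2) with hL_def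
  set ψ : ℝ → ℝ≥0∞ := fun x => ENNReal.ofReal (x ^ (-1 - p) / p) with hψ_def
  set Φ : ℝ → ℝ → ℝ≥0∞ := fun x t => if t < x then ψ x * χ t else 0 with hΦ_def
  have hmain : L ≤ ENNReal.ofReal (1 / p ^ 2) * K := by
    -- Step A : pointwise bound on the integrand of L
    have hA : L ≤ ∫⁻ x in Ioo (0:ℝ) 1, ψ x * ∫⁻ t in Ioo 0 x, χ t := by
      refine lintegral_mono_ae ((ae_restrict_mem measurableSet_Ioo).mono fun x hx => ?_)
      have hx0 : (0:ℝ) < x := hx.1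
      have hx' : x ∈ Ioc (0:ℝ) 1 := ⟨hx.1, hx.2.le⟩
      have hax : 0 < a x := ha_pos x hx'
      have hnn : (0:ℝ) ≤ a x / x ^ 2 := by positivity
      have hreal : a x / x ^ 2 * (x ^ (1 - p) / (p * a x)) = x ^ (-1 - p) / p := by
        have hkey : x ^ (1 - p) = x ^ (-1 - p) * x ^ (2:ℕ) := by
          rw [← Real.rpow_natCast x 2, ← Real.rpow_add hx0]
          congr 1
          push_cast
          ring
        rw [hkey]
        field_simp
      calc ENNReal.ofReal (a x / x ^ 2 * w x ^ 2)
          = ENNReal.ofReal (a x / x ^ 2) * ENNReal.ofReal (w x ^ 2) :=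
            ENNReal.ofReal_mul hnn
        _ ≤ ENNReal.ofReal (a x / x ^ 2) *
              (ENNReal.ofReal (x ^ (1 - p) / (p * a x)) * ∫⁻ t in Ioo 0 x, χ t) :=
            mul_le_mul_right (hIJ x hx') _
        _ = (ENNReal.ofReal (a x / x ^ 2) * ENNReal.ofReal (x ^ (1 - p) / (p * a x)))
              * ∫⁻ t in Ioo 0 x, χ t := (mul_assoc _ _ _).symm
        _ = ψ x * ∫⁻ t in Ioo 0 x, χ t := by
            rw [← ENNReal.ofReal_mul hnn, hreal]
    -- Step B : rewrite the inner integral with Φ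
    have hB : ∀ x ∈ Ioo (0:ℝ) 1,
        ψ x * ∫⁻ t in Ioo 0 x, χ t = ∫⁻ t in Ioo (0:ℝ) 1, Φ x t := by
      intro x hx
      have hIio : Iio x ∩ Ioo (0:ℝ) 1 = Ioo 0 x := by
        ext t
        simp only [mem_inter_iff, mem_Iio, mem_Ioo]
        constructor
        · rintro ⟨h1, h2, _⟩; exact ⟨h2, h1⟩
        · rintro ⟨h1, h2⟩; exact ⟨h2, h1, h2.trans hx.2⟩
      calc ψ x * ∫⁻ t in Ioo 0 x, χ t = ∫⁻ t in Ioo 0 x, ψ x * χ t :=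
            (lintegral_const_mul' _ _ ENNReal.ofReal_ne_top).symm
        _ = ∫⁻ t in Iio x, ψ x * χ t ∂(volume.restrict (Ioo (0:ℝ) 1)) := by
            rw [Measure.restrict_restrict measurableSet_Iio, hIio]
        _ = ∫⁻ t in Ioo (0:ℝ) 1, (Iio x).indicator (fun t => ψ x * χ t) t :=
            (lintegral_indicator measurableSet_Iio _).symm
        _ = ∫⁻ t in Ioo (0:ℝ) 1, Φ x t := by
            refine lintegral_congr fun t => ?_
            simp [hΦ_def, Set.indicator_apply]
    -- Step B' : measurability of Φ on the product
    have hψaem : AEMeasurable ψ (volume.restrict (Ioo (0:ℝ) 1)) :=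
      ENNReal.measurable_ofReal.comp_aemeasurable ((hrpowM (-1 - p)).div_const p)
    have hΦeq : Function.uncurry Φ
        = Set.indicator {z : ℝ × ℝ | z.2 < z.1} (fun z => ψ z.1 * χ z.2) := by
      ext z
      simp [hΦ_def, Function.uncurry, Set.indicator_apply, Set.mem_setOf_eq]
    have hΦM : AEMeasurable (Function.uncurry Φ)
        ((volume.restrict (Ioo (0:ℝ) 1)).prod (volume.restrict (Ioo (0:ℝ) 1))) := by
      rw [hΦeq]
      exact ((hψaem.comp_fst).mul (hχM.comp_snd)).indicator
        (measurableSet_lt measurable_snd measurable_fst)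
    -- Step C : the inner integral after swapping
    have hC : ∀ t ∈ Ioo (0:ℝ) 1,
        (∫⁻ x in Ioo (0:ℝ) 1, Φ x t) ≤ ENNReal.ofReal (1 / p ^ 2) * F t := by
      intro t ht
      have ht0 : 0 < t := ht.1
      have hIoi : Ioi t ∩ Ioo (0:ℝ) 1 = Ioo t 1 := by
        ext y
        simp only [mem_inter_iff, mem_Ioi, mem_Ioo]
        constructor
        · rintro ⟨h1, _, h3⟩; exact ⟨h1, h3⟩
        · rintro ⟨h1, h2⟩; exact ⟨h1, ht0.trans h1, h2⟩
      have hstep1 : (∫⁻ x in Ioo (0:ℝ) 1, Φ x t)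
          = (∫⁻ x in Ioo t 1, ψ x) * χ t := by
        calc (∫⁻ x in Ioo (0:ℝ) 1, Φ x t)
            = ∫⁻ x in Ioo (0:ℝ) 1, (Ioi t).indicator (fun x => ψ x * χ t) x := by
              refine lintegral_congr fun y => ?_
              simp [hΦ_def, Set.indicator_apply]
          _ = ∫⁻ x in Ioi t, ψ x * χ t ∂(volume.restrict (Ioo (0:ℝ) 1)) :=
              lintegral_indicator measurableSet_Ioi _
          _ = ∫⁻ x in Ioo t 1, ψ x * χ t := by
              rw [Measure.restrict_restrict measurableSet_Ioi, hIoi]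
          _ = (∫⁻ x in Ioo t 1, ψ x) * χ t :=
              lintegral_mul_const' _ _ ENNReal.ofReal_ne_top
      have hψint : IntegrableOn (fun x : ℝ => x ^ (-1 - p) / p) (Ioo t 1) := by
        have hco : ContinuousOn (fun x : ℝ => x ^ (-1 - p) / p) (Icc t 1) := by
          refine ContinuousOn.div_const ?_ p
          exact ContinuousOn.rpow_const continuousOn_id
            (fun y hy => Or.inl (ne_of_gt (ht0.trans_le hy.1)))
        exact (hco.integrableOn_Icc).mono Ioo_subset_Icc_self le_rfl
      have hψval : (∫⁻ x in Ioo t 1, ψ x) ≤ ENNReal.ofReal (t ^ (-p) / p ^ 2) := by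
        have heval : ∫ x in Ioo t 1, x ^ (-1 - p) / p = (t ^ (-p) - 1) / p ^ 2 := by
          have h0 : (0:ℝ) ∉ Set.uIcc t 1 := by
            rw [uIcc_of_le ht.2.le]
            intro h0
            exact absurd h0.1 (not_le.mpr ht0)
          have h1 : ∫ x in Ioo t 1, x ^ (-1 - p) / p
              = (∫ x in t..(1:ℝ), x ^ (-1 - p)) / p := by
            rw [intervalIntegral.integral_of_le ht.2.le, integral_Ioc_eq_integral_Ioo,
              ← MeasureTheory.integral_div]
          rw [h1, integral_rpow (Or.inr ⟨by intro h; apply hp0.ne'; linarith, h0⟩)]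
          have h2 : -1 - p + 1 = -p := by ring
          rw [h2, Real.one_rpow]
          field_simp
          ring
        calc (∫⁻ x in Ioo t 1, ψ x)
            = ENNReal.ofReal (∫ x in Ioo t 1, x ^ (-1 - p) / p) := by
              rw [ofReal_integral_eq_lintegral_ofReal hψint
                ((ae_restrict_mem measurableSet_Ioo).mono fun y hy =>
                  div_nonneg (Real.rpow_nonneg (ht0.trans hy.1).le _) hp0.le)]
          _ ≤ ENNReal.ofReal (t ^ (-p) / p ^ 2) := by
              refine ENNReal.ofReal_le_ofReal ?_
              rw [heval]
              have hpp : (0:ℝ) < p ^ 2 := by positivity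
              rw [div_le_div_iff₀ hpp hpp]
              nlinarith [Real.rpow_nonneg ht0.le (-p), hpp]
      have hfinal : ENNReal.ofReal (t ^ (-p) / p ^ 2) * χ t
          = ENNReal.ofReal (1 / p ^ 2) * F t := by
        have hone : t ^ p * t ^ (-p) = 1 := by
          rw [← Real.rpow_add ht0]; simp
        have hnn : (0:ℝ) ≤ t ^ (-p) / p ^ 2 := by positivity
        rw [hχ_def, hF_def, ← ENNReal.ofReal_mul hnn, ← ENNReal.ofReal_mul (by positivity)]
        congr 1
        have hre : t ^ (-p) / p ^ 2 * (a t * w' t ^ 2 * t ^ p)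
            = a t * w' t ^ 2 * (t ^ p * t ^ (-p)) / p ^ 2 := by ring
        rw [hre, hone]
        ring
      calc (∫⁻ x in Ioo (0:ℝ) 1, Φ x t) = (∫⁻ x in Ioo t 1, ψ x) * χ t := hstep1
        _ ≤ ENNReal.ofReal (t ^ (-p) / p ^ 2) * χ t := mul_le_mul_left hψval _
        _ = ENNReal.ofReal (1 / p ^ 2) * F t := hfinal
    -- assemble
    calc L ≤ ∫⁻ x in Ioo (0:ℝ) 1, ψ x * ∫⁻ t in Ioo 0 x, χ t := hA
      _ = ∫⁻ x in Ioo (0:ℝ) 1, ∫⁻ t in Ioo (0:ℝ) 1, Φ x t :=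
          setLIntegral_congr_fun measurableSet_Ioo hB
      _ = ∫⁻ t in Ioo (0:ℝ) 1, ∫⁻ x in Ioo (0:ℝ) 1, Φ x t :=
          lintegral_lintegral_swap hΦM
      _ ≤ ∫⁻ t in Ioo (0:ℝ) 1, ENNReal.ofReal (1 / p ^ 2) * F t :=
          lintegral_mono_ae ((ae_restrict_mem measurableSet_Ioo).mono hC)
      _ = ENNReal.ofReal (1 / p ^ 2) * K :=
          lintegral_const_mul' _ _ ENNReal.ofReal_ne_top
  -- conclude
  have hc4 : (1:ℝ) / p ^ 2 = 4 / (1 - θ) ^ 2 := by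
    rw [hp_def]
    rw [div_pow]
    rw [one_div_div]
    ring_nf
  have hfnn : ∀ᵐ x ∂(volume.restrict (Ioo (0:ℝ) 1)), 0 ≤ a x / x ^ 2 * w x ^ 2 :=
    (ae_restrict_mem measurableSet_Ioo).mono fun x hx =>
      mul_nonneg (div_nonneg (ha_pos x ⟨hx.1, hx.2.le⟩).le (sq_nonneg _)) (sq_nonneg _)
  have hfM : AEStronglyMeasurable (fun x => a x / x ^ 2 * w x ^ 2)
      (volume.restrict (Ioo (0:ℝ) 1)) :=
    ((haM.div ((measurable_id.pow_const 2).aemeasurable)).mul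
      (hwM.pow_const 2)).aestronglyMeasurable
  have hLne : (∫⁻ x in Ioo (0:ℝ) 1, ENNReal.ofReal (a x / x ^ 2 * w x ^ 2)) < ⊤ :=
    lt_of_le_of_lt hmain (ENNReal.mul_lt_top ENNReal.ofReal_lt_top hKfin.lt_top)
  have hInt : IntegrableOn (fun x => a x / x ^ 2 * w x ^ 2) (Ioo (0:ℝ) 1) := by
    refine ⟨hfM, ?_⟩
    rw [hasFiniteIntegral_iff_ofReal hfnn]
    exact hLne
  refine ⟨hInt, ?_⟩
  have hEq1 : ∫ x in Ioo (0:ℝ) 1, a x / x ^ 2 * w x ^ 2 = L.toReal := by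
    rw [hL_def, integral_eq_lintegral_of_nonneg_ae hfnn hfM]
  have hRHSnn : 0 ≤ ∫ t in Ioo (0:ℝ) 1, a t * w' t ^ 2 := integral_nonneg_of_ae hann
  have hEq2 : K.toReal = ∫ x in Ioo (0:ℝ) 1, a x * w' x ^ 2 := by
    rw [hKeq, ENNReal.toReal_ofReal hRHSnn]
  have hfinal : L.toReal ≤ (1 / p ^ 2) * K.toReal := by
    have h1 := ENNReal.toReal_mono
      (ENNReal.mul_ne_top ENNReal.ofReal_ne_top hKfin) hmain
    rwa [ENNReal.toReal_mul, ENNReal.toReal_ofReal (by positivity : (0:ℝ) ≤ 1 / p ^ 2)] at h1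
  rw [hEq1]
  calc L.toReal ≤ (1 / p ^ 2) * K.toReal := hfinal
    _ = 4 / (1 - θ) ^ 2 * ∫ x in Ioo (0:ℝ) 1, a x * w' x ^ 2 := by
        rw [hc4, hEq2]
end

section
/- Assume a is weakly degenerate (WD) or strongly degenerate (SD), with degeneracy constant K ∈ (0,2). Let u ∈ H²_{a,0}(0,1), i.e. u ∈ H¹(0,1) with u(0) = u(1) = 0, u' absolutely continuous on [0,1] with u'(0) = u'(1) = 0 if a is (WD) (respectively u' locally absolutely continuous on (0,1] with u'(1) = 0 if a is (SD)), and √a·u'' ∈ L²(0,1). Then ∫₀¹ u² dx ≤ ∫₀¹ (u')² dx ≤ (1/(a(1)(2−K)))·∫₀¹ a·(u'')² dx. In particular, the norms ‖u‖²_{2,a} = ‖u‖²_{L²} + ‖u'‖²_{L²} + ‖√a u''‖²_{L²}, ‖u‖²₂ = ‖u‖²_{L²} + ‖√a u''‖²_{L²} and ‖u‖²_{2,∼} = ‖√a u''‖²_{L²} are equivalent on H²_{a,0}(0,1). -/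
open Set Filter MeasureTheory Topology

lemma my_cauchy_schwarz {μ : Measure ℝ} {f g : ℝ → ℝ}
    (hf : Integrable (fun x => f x ^ 2) μ) (hg : Integrable (fun x => g x ^ 2) μ)
    (hfg : Integrable (fun x => f x * g x) μ) :
    (∫ x, f x * g x ∂μ) ^ 2 ≤ (∫ x, f x ^ 2 ∂μ) * ∫ x, g x ^ 2 ∂μ := by
  set A := ∫ x, f x ^ 2 ∂μ
  set B := ∫ x, g x ^ 2 ∂μ
  set C := ∫ x, f x * g x ∂μ
  have key : ∀ lam : ℝ, 0 ≤ B * (lam * lam) + (2 * C) * lam + A := by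
    intro lam
    have h3 : ∫ x, (lam * g x + f x) ^ 2 ∂μ
        = lam ^ 2 * B + 2 * lam * C + A := by
      have e : (fun x => (lam * g x + f x) ^ 2)
          = fun x => (lam ^ 2 * g x ^ 2 + 2 * lam * (f x * g x)) + f x ^ 2 := by
        funext x; ring
      have h1 : Integrable (fun x => lam ^ 2 * g x ^ 2 + 2 * lam * (f x * g x)) μ :=
        (hg.const_mul (lam^2)).add (hfg.const_mul (2*lam))
      rw [e, integral_add h1 hf,
        integral_add (hg.const_mul (lam^2)) (hfg.const_mul (2*lam)),
        MeasureTheory.integral_const_mul, MeasureTheory.integral_const_mul]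
    have h2 : 0 ≤ ∫ x, (lam * g x + f x) ^ 2 ∂μ := integral_nonneg fun x => sq_nonneg _
    nlinarith [h2, h3]
  have := discrim_le_zero key
  rw [discrim] at this
  nlinarith [this]

lemma log_integrable_Ioc : MeasureTheory.IntegrableOn Real.log (Set.Ioc (0:ℝ) 1) := by
  have heps : Tendsto (fun n : ℕ => ((n:ℝ)+1)⁻¹) atTop (𝓝 0) := by
    simpa using tendsto_one_div_add_atTop_nhds_zero_nat (𝕜 := ℝ)
  apply integrableOn_Ioc_of_intervalIntegral_norm_bounded_left (I := 1)
    (a := fun n : ℕ => ((n:ℝ)+1)⁻¹) (l := atTop)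
  · intro n
    have hpos : (0:ℝ) < ((n:ℝ)+1)⁻¹ := by positivity
    exact ((intervalIntegral.intervalIntegrable_log (by
      simp only [Set.uIcc_of_le (by
        rw [inv_le_one_iff₀]; right; linarith [Nat.cast_nonneg (α := ℝ) n] : ((n:ℝ)+1)⁻¹ ≤ 1)]
      intro h; exact absurd h.1 (not_le.mpr hpos)))).1
  · exact heps
  · filter_upwards with n
    have hpos : (0:ℝ) < ((n:ℝ)+1)⁻¹ := by positivity
    have hle : ((n:ℝ)+1)⁻¹ ≤ 1 := by
      rw [inv_le_one_iff₀]; right; linarith [Nat.cast_nonneg (α := ℝ) n]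
    set ε := ((n:ℝ)+1)⁻¹ with hε
    have hcongr : ∫ x in Set.Ioc ε 1, ‖Real.log x‖ = ∫ x in Set.Ioc ε 1, -Real.log x := by
      apply setIntegral_congr_fun measurableSet_Ioc
      intro x hx
      simp only []
      rw [Real.norm_eq_abs, abs_of_nonpos (Real.log_nonpos (by linarith [hx.1] : (0:ℝ) ≤ x) hx.2)]
    rw [hcongr]
    have hioc : ∫ x in Set.Ioc ε 1, -Real.log x = -∫ x in ε..1, Real.log x := by
      rw [intervalIntegral.integral_of_le hle, integral_neg]
    rw [hioc, integral_log]
    have hlog : Real.log ε ≤ 0 := Real.log_nonpos hpos.le hle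
    have : ε * Real.log ε ≤ 0 := mul_nonpos_of_nonneg_of_nonpos hpos.le hlog
    simp only [Real.log_one]
    nlinarith

lemma log_integral_Ioc : ∫ x in Set.Ioc (0:ℝ) 1, Real.log x = -1 := by
  set s : ℕ → Set ℝ := fun n => Set.Ioc ((n:ℝ)+1)⁻¹ 1 with hs
  have hU : (⋃ n, s n) = Set.Ioc (0:ℝ) 1 := by
    ext x
    simp only [Set.mem_iUnion, hs, Set.mem_Ioc]
    constructor
    · rintro ⟨n, h1, h2⟩
      exact ⟨lt_of_lt_of_le (by positivity) h1.le, h2⟩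
    · rintro ⟨h1, h2⟩
      obtain ⟨n, hn⟩ := exists_nat_ge x⁻¹
      refine ⟨n, ?_, h2⟩
      have h3 : x⁻¹ < (n:ℝ) + 1 := lt_of_le_of_lt hn (by linarith)
      exact (inv_lt_comm₀ (by positivity) h1).mpr h3
  have h1 : Tendsto (fun n => ∫ x in s n, Real.log x) atTop (𝓝 (∫ x in Set.Ioc (0:ℝ) 1, Real.log x)) := by
    rw [← hU]
    apply MeasureTheory.tendsto_setIntegral_of_monotone (fun n => measurableSet_Ioc)
    · intro n m hnm
      apply Set.Ioc_subset_Ioc _ le_rfl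
      gcongr
    · rw [hU]; exact log_integrable_Ioc
  have h2 : Tendsto (fun n => ∫ x in s n, Real.log x) atTop (𝓝 (-1)) := by
    have heps : Tendsto (fun n : ℕ => ((n:ℝ)+1)⁻¹) atTop (𝓝 0) := by
      simpa using tendsto_one_div_add_atTop_nhds_zero_nat (𝕜 := ℝ)
    have hval : ∀ n : ℕ, ∫ x in s n, Real.log x
        = -(((n:ℝ)+1)⁻¹ * Real.log (((n:ℝ)+1)⁻¹)) - 1 + ((n:ℝ)+1)⁻¹ := by
      intro n
      have hpos : (0:ℝ) < ((n:ℝ)+1)⁻¹ := by positivity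
      have hle : ((n:ℝ)+1)⁻¹ ≤ 1 := by
        rw [inv_le_one_iff₀]; right; linarith [Nat.cast_nonneg (α := ℝ) n]
      rw [hs]
      rw [← intervalIntegral.integral_of_le hle, integral_log]
      simp only [Real.log_one]
      ring
    simp only [hval]
    have hmul : Tendsto (fun n : ℕ => ((n:ℝ)+1)⁻¹ * Real.log (((n:ℝ)+1)⁻¹)) atTop (𝓝 0) := by
      have hwithin : Tendsto (fun n : ℕ => ((n:ℝ)+1)⁻¹) atTop (𝓝[>] 0) := by
        apply tendsto_nhdsWithin_of_tendsto_nhds_of_eventually_within _ heps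
        filter_upwards with n
        exact Set.mem_Ioi.mpr (by positivity)
      have := (tendsto_log_mul_rpow_nhdsGT_zero (by norm_num : (0:ℝ) < 1)).comp hwithin
      simp only [Function.comp_def, Real.rpow_one] at this
      simpa [mul_comm] using this
    have := ((hmul.neg.sub_const 1).add heps)
    simpa using this
  have := tendsto_nhds_unique h1 h2
  exact this

lemma deg_lower_bound (a a' : ℝ → ℝ) (K : ℝ)
    (cont : ContinuousOn a (Set.Ioc 0 1))
    (hda : ∀ x ∈ Set.Ioo (0:ℝ) 1, HasDerivAt a (a' x) x)
    (hbound : ∀ x ∈ Set.Ioc (0:ℝ) 1, x * |a' x| ≤ K * a x) :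
    ∀ x ∈ Set.Ioc (0:ℝ) 1, a 1 * x ^ K ≤ a x := by
  set g : ℝ → ℝ := fun x => a x * x ^ (-K) with hg
  have hganti : AntitoneOn g (Set.Ioc 0 1) := by
    apply antitoneOn_of_deriv_nonpos (convex_Ioc 0 1)
    · apply cont.mul
      intro x hx
      exact (Real.continuousAt_rpow_const x (-K) (Or.inl hx.1.ne')).continuousWithinAt
    · rw [interior_Ioc]
      intro x hx
      exact ((hda x hx).mul ((Real.hasDerivAt_rpow_const (p := -K) (Or.inl hx.1.ne')))).differentiableAt.differentiableWithinAt
    · rw [interior_Ioc]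
      intro x hx
      have hd : HasDerivAt g (a' x * x ^ (-K) + a x * (-K * x ^ (-K - 1))) x :=
        (hda x hx).mul (Real.hasDerivAt_rpow_const (p := -K) (Or.inl hx.1.ne'))
      rw [hd.deriv]
      have hx0 : (0:ℝ) < x := hx.1
      have hb := hbound x ⟨hx.1, hx.2.le⟩
      have h1 : x * a' x ≤ K * a x := le_trans (by
        have := le_abs_self (a' x)
        nlinarith) hb
      have hp1 : (0:ℝ) < x ^ (-K - 1) := Real.rpow_pos_of_pos hx0 _
      have hkey : x ^ (-K) = x * x ^ (-K - 1) := by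
        rw [show x * x ^ (-K - 1) = x ^ (1:ℝ) * x ^ (-K-1) by rw [Real.rpow_one],
          ← Real.rpow_add hx0]
        norm_num
      rw [hkey]
      nlinarith [hp1]
  intro x hx
  have := hganti hx (by norm_num : (1:ℝ) ∈ Set.Ioc (0:ℝ) 1) hx.2
  rw [hg] at this
  simp only [Real.one_rpow] at this
  have hx0 : (0:ℝ) < x := hx.1
  have hxK : (0:ℝ) < x ^ K := Real.rpow_pos_of_pos hx0 _
  have hneg : x ^ (-K) = (x ^ K)⁻¹ := Real.rpow_neg hx0.le K
  rw [hneg, mul_one] at this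
  calc a 1 * x ^ K ≤ (a x * (x ^ K)⁻¹) * x ^ K := by nlinarith
    _ = a x := by field_simp


lemma w_facts (K : ℝ) (hK0 : 0 < K) (hK2 : K < 2) :
    MeasureTheory.IntegrableOn (fun x => ∫ t in x..1, t ^ (-K)) (Set.Ioo 0 1) ∧
    ∫ x in Set.Ioo (0:ℝ) 1, (∫ t in x..1, t ^ (-K)) = 1/(2-K) := by
  rcases eq_or_ne K 1 with hK1 | hK1
  · subst hK1
    have hfun : Set.EqOn (fun x : ℝ => ∫ t in x..1, t ^ (-(1:ℝ))) (fun x => -Real.log x)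
        (Set.Ioo 0 1) := by
      intro x hx
      simp only []
      have hrw : (fun t : ℝ => t ^ (-(1:ℝ))) = fun t : ℝ => t⁻¹ := by
        funext t
        rw [show (-(1:ℝ)) = ((-1 : ℤ) : ℝ) by norm_num, Real.rpow_intCast]
        simp
      rw [hrw, integral_inv (by
        simp only [Set.uIcc_of_le hx.2.le]
        intro h; exact absurd h.1 (not_le.mpr hx.1)), one_div, Real.log_inv]
    constructor
    · apply (integrableOn_congr_fun hfun.symm measurableSet_Ioo).mp
      exact (log_integrable_Ioc.mono_set Set.Ioo_subset_Ioc_self).neg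
    · rw [setIntegral_congr_fun measurableSet_Ioo hfun]
      rw [MeasureTheory.integral_neg, ← MeasureTheory.integral_Ioc_eq_integral_Ioo,
        log_integral_Ioc]
      norm_num
  · have he : (-1:ℝ) < -K + 1 := by linarith
    have hfun : Set.EqOn (fun x : ℝ => ∫ t in x..1, t ^ (-K))
        (fun x => (1 - x ^ (-K + 1)) / (-K + 1)) (Set.Ioo 0 1) := by
      intro x hx
      simp only []
      rw [integral_rpow (Or.inr ⟨by intro h; apply hK1; linarith, by
        simp only [Set.uIcc_of_le hx.2.le]
        intro h; exact absurd h.1 (not_le.mpr hx.1)⟩)]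
      rw [Real.one_rpow]
    have hrpowInt : MeasureTheory.IntegrableOn (fun x : ℝ => x ^ (-K + 1)) (Set.Ioo 0 1) :=
      ((intervalIntegral.intervalIntegrable_rpow' he (a := 0) (b := 1)).1).mono_set
        Set.Ioo_subset_Ioc_self
    have hFint : MeasureTheory.IntegrableOn
        (fun x : ℝ => (1 - x ^ (-K + 1)) / (-K + 1)) (Set.Ioo 0 1) := by
      exact (((integrableOn_const_iff (C := (1:ℝ))).mpr (Or.inr (by simp))).sub hrpowInt).div_const _
    constructor
    · exact (integrableOn_congr_fun hfun.symm measurableSet_Ioo).mp hFint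
    · rw [setIntegral_congr_fun measurableSet_Ioo hfun]
      have hrint : ∫ x in Set.Ioo (0:ℝ) 1, x ^ (-K + 1) = 1 / (2 - K) := by
        rw [← MeasureTheory.integral_Ioc_eq_integral_Ioo,
          ← intervalIntegral.integral_of_le zero_le_one,
          integral_rpow (Or.inl he)]
        rw [Real.one_rpow, Real.zero_rpow (by intro h; exact absurd h (by intro hh; linarith [hh] ) )]
        · norm_num
          rw [show -K + 1 + 1 = 2 - K by ring]
      rw [MeasureTheory.integral_div, MeasureTheory.integral_sub
        ((integrableOn_const_iff (C := (1:ℝ))).mpr (Or.inr (by simp))) hrpowInt, hrint]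
      rw [MeasureTheory.setIntegral_const]
      simp only [measureReal_def, Real.volume_Ioo, sub_zero, ENNReal.toReal_ofReal zero_le_one, smul_eq_mul,
        one_mul]
      have h2K : (2:ℝ) - K ≠ 0 := by linarith
      have h1K : (-K + 1 : ℝ) ≠ 0 := by
        intro h; apply hK1; linarith
      field_simp
      ring

/-- for `u ∈ H²_{a,0}(0,1)` one has
`∫ u² ≤ ∫ (u')² ≤ (1/(a(1)(2−K))) ∫ a (u'')²`; in particular the three norms
`‖·‖_{2,a}`, `‖·‖₂`, `‖·‖_{2,∼}` are equivalent on `H²_{a,0}(0,1)`. -/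
theorem H2a0_norm_estimates
    (a a' : ℝ → ℝ) (K : ℝ)
    (hdeg : IsWeaklyDegenerate a a' K ∨ IsStronglyDegenerate a a' K)
    (u u' u'' : ℝ → ℝ)
    -- u ∈ H¹(0,1): u is absolutely continuous on [0,1] with derivative u' ∈ L²(0,1)
    (huAC : ∀ x ∈ Set.Icc (0:ℝ) 1, ∀ z ∈ Set.Icc (0:ℝ) 1,
      u z - u x = ∫ t in x..z, u' t)
    (hu'L1 : MeasureTheory.IntegrableOn u' (Set.Ioo 0 1))
    (hu'L2 : MeasureTheory.IntegrableOn (fun x => (u' x) ^ 2) (Set.Ioo 0 1))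
    (huL2 : MeasureTheory.IntegrableOn (fun x => (u x) ^ 2) (Set.Ioo 0 1))
    -- boundary conditions u(0) = u(1) = 0
    (hu0 : u 0 = 0) (hu1 : u 1 = 0)
    -- u' is locally absolutely continuous on (0,1] with a.e. derivative u''
    (hu'AC : ∀ x ∈ Set.Ioc (0:ℝ) 1, ∀ z ∈ Set.Ioc (0:ℝ) 1,
      u' z - u' x = ∫ t in x..z, u'' t)
    (hu''loc : ∀ x ∈ Set.Ioc (0:ℝ) 1, MeasureTheory.IntegrableOn u'' (Set.Icc x 1))
    (hu'1 : u' 1 = 0)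
    -- in the (WD) case, u' is absolutely continuous on all of [0,1] and u'(0) = 0
    (hWDcase : IsWeaklyDegenerate a a' K →
      u' 0 = 0 ∧ ∀ z ∈ Set.Icc (0:ℝ) 1, u' z - u' 0 = ∫ t in (0:ℝ)..z, u'' t)
    -- √a·u'' ∈ L²(0,1)
    (hau'' : MeasureTheory.IntegrableOn (fun x => a x * (u'' x) ^ 2) (Set.Ioo 0 1)) :
    (∫ x in Set.Ioo (0:ℝ) 1, (u x) ^ 2 ≤ ∫ x in Set.Ioo (0:ℝ) 1, (u' x) ^ 2) ∧
    (∫ x in Set.Ioo (0:ℝ) 1, (u' x) ^ 2 ≤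
      (1 / (a 1 * (2 - K))) * ∫ x in Set.Ioo (0:ℝ) 1, a x * (u'' x) ^ 2) ∧
    -- equivalence of the norms ‖·‖_{2,∼}, ‖·‖₂ and ‖·‖_{2,a}:
    ((∫ x in Set.Ioo (0:ℝ) 1, a x * (u'' x) ^ 2) ≤
      (∫ x in Set.Ioo (0:ℝ) 1, (u x) ^ 2) + ∫ x in Set.Ioo (0:ℝ) 1, a x * (u'' x) ^ 2) ∧
    ((∫ x in Set.Ioo (0:ℝ) 1, (u x) ^ 2) + (∫ x in Set.Ioo (0:ℝ) 1, a x * (u'' x) ^ 2) ≤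
      (∫ x in Set.Ioo (0:ℝ) 1, (u x) ^ 2) + (∫ x in Set.Ioo (0:ℝ) 1, (u' x) ^ 2) +
        ∫ x in Set.Ioo (0:ℝ) 1, a x * (u'' x) ^ 2) ∧
    ((∫ x in Set.Ioo (0:ℝ) 1, (u x) ^ 2) + (∫ x in Set.Ioo (0:ℝ) 1, (u' x) ^ 2) +
        (∫ x in Set.Ioo (0:ℝ) 1, a x * (u'' x) ^ 2) ≤
      (1 + 2 / (a 1 * (2 - K))) * ∫ x in Set.Ioo (0:ℝ) 1, a x * (u'' x) ^ 2) := by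
  -- common facts from the degeneracy hypothesis
  have apos : ∀ x ∈ Set.Ioc (0:ℝ) 1, 0 < a x := by
    rcases hdeg with h | h; exacts [h.pos, h.pos]
  have hbound : ∀ x ∈ Set.Ioc (0:ℝ) 1, x * |a' x| ≤ K * a x := by
    rcases hdeg with h | h; exacts [h.bound, h.bound]
  have a1pos : 0 < a 1 := apos 1 ⟨one_pos, le_rfl⟩
  have hK0 : 0 < K := by
    rcases hdeg with h | h
    · exact h.K_pos
    · linarith [h.K_ge_one]
  have hK2 : K < 2 := by
    rcases hdeg with h | h
    · linarith [h.K_lt_one]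
    · exact h.K_lt_two
  have h2K : (0:ℝ) < 2 - K := by linarith
  -- the lower bound a 1 * x ^ K ≤ a x
  have alow : ∀ x ∈ Set.Ioc (0:ℝ) 1, a 1 * x ^ K ≤ a x := by
    apply deg_lower_bound a a' K _ _ hbound
    · rcases hdeg with h | h
      · exact h.cont.mono Set.Ioc_subset_Icc_self
      · have hca : ContinuousOn a (Set.Icc 0 1) := fun x hx => (h.deriv x hx).continuousWithinAt
        exact hca.mono Set.Ioc_subset_Icc_self
    · intro x hx
      rcases hdeg with h | h
      · exact (h.deriv x ⟨hx.1, hx.2.le⟩).hasDerivAt (Ioc_mem_nhds hx.1 hx.2)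
      · exact (h.deriv x ⟨hx.1.le, hx.2.le⟩).hasDerivAt (Icc_mem_nhds hx.1 hx.2)
  -- a.e. strong measurability of u'' on (0,1)
  have haesm : AEStronglyMeasurable u'' (volume.restrict (Set.Ioo 0 1)) := by
    have hsub : Set.Ioo (0:ℝ) 1 ⊆ ⋃ n : ℕ, Set.Icc ((n:ℝ)+1)⁻¹ 1 := by
      intro x hx
      obtain ⟨n, hn⟩ := exists_nat_ge x⁻¹
      refine Set.mem_iUnion.mpr ⟨n, ?_, hx.2.le⟩
      exact ((inv_lt_comm₀ (by positivity) hx.1).mpr (lt_of_le_of_lt hn (by linarith))).le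
    have heach : ∀ n : ℕ, AEStronglyMeasurable u''
        (volume.restrict (Set.Icc ((n:ℝ)+1)⁻¹ 1)) := by
      intro n
      refine (hu''loc ((n:ℝ)+1)⁻¹ ⟨by positivity, ?_⟩).aestronglyMeasurable
      rw [inv_le_one_iff₀]; right; linarith [Nat.cast_nonneg (α := ℝ) n]
    exact (aestronglyMeasurable_iUnion_iff.mpr heach).mono_measure
      (Measure.restrict_mono hsub le_rfl)
  -- integrability of t^K * u''^2 on (0,1)
  have hBint : MeasureTheory.IntegrableOn (fun t => t ^ K * u'' t ^ 2) (Set.Ioo 0 1) := by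
    apply MeasureTheory.Integrable.mono' (hau''.const_mul (a 1)⁻¹)
    · have hcont : ContinuousOn (fun t : ℝ => t ^ K) (Set.Ioo 0 1) := fun t ht =>
        (Real.continuousAt_rpow_const t K (Or.inl ht.1.ne')).continuousWithinAt
      exact (hcont.aestronglyMeasurable measurableSet_Ioo).mul (haesm.mul haesm)
        |>.congr (by
          filter_upwards with t
          simp only [Pi.mul_apply, Pi.pow_apply]
          ring)
    · rw [ae_restrict_iff' measurableSet_Ioo]
      filter_upwards with t ht
      have h1 := alow t ⟨ht.1, ht.2.le⟩
      have h2 : (0:ℝ) ≤ t ^ K := Real.rpow_nonneg ht.1.le K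
      have h3 : a 1 * (a 1)⁻¹ = 1 := mul_inv_cancel₀ a1pos.ne'
      rw [Real.norm_eq_abs, abs_of_nonneg (by positivity)]
      have hs : (0:ℝ) ≤ u'' t ^ 2 := sq_nonneg _
      have h4 : a 1 * t ^ K * u'' t ^ 2 ≤ a t * u'' t ^ 2 := mul_le_mul_of_nonneg_right h1 hs
      have h5 := mul_le_mul_of_nonneg_left h4 (inv_nonneg.mpr a1pos.le)
      calc t ^ K * u'' t ^ 2 = (a 1)⁻¹ * (a 1 * t ^ K * u'' t ^ 2) := by
            field_simp
        _ ≤ (a 1)⁻¹ * (a t * u'' t ^ 2) := h5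
  set B := ∫ t in Set.Ioo (0:ℝ) 1, t ^ K * u'' t ^ 2 with hB
  have hBnn : 0 ≤ B := setIntegral_nonneg measurableSet_Ioo fun t ht => by
    have : (0:ℝ) ≤ t ^ K := Real.rpow_nonneg ht.1.le K
    positivity
  have hI2nn : 0 ≤ ∫ x in Set.Ioo (0:ℝ) 1, (u' x) ^ 2 :=
    setIntegral_nonneg measurableSet_Ioo fun x _ => sq_nonneg _
  have hI3nn : 0 ≤ ∫ x in Set.Ioo (0:ℝ) 1, a x * (u'' x) ^ 2 :=
    setIntegral_nonneg measurableSet_Ioo fun x hx => by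
      have := apos x ⟨hx.1, hx.2.le⟩
      positivity
  -- Part 1 : Poincaré
  have hpoint1 : ∀ x ∈ Set.Ioo (0:ℝ) 1, u x ^ 2 ≤ ∫ t in Set.Ioo (0:ℝ) 1, (u' t) ^ 2 := by
    intro x hx
    have hux : u x = ∫ t in Set.Ioo 0 x, u' t := by
      have h := huAC 0 ⟨le_rfl, zero_le_one⟩ x ⟨hx.1.le, hx.2.le⟩
      rw [hu0, sub_zero] at h
      rw [h, intervalIntegral.integral_of_le hx.1.le,
        MeasureTheory.integral_Ioc_eq_integral_Ioo]
    have hsub : Set.Ioo (0:ℝ) x ⊆ Set.Ioo (0:ℝ) 1 := Set.Ioo_subset_Ioo le_rfl hx.2.le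
    have hvol : (volume (Set.Ioo (0:ℝ) x)).toReal = x := by
      simp [Real.volume_Ioo, ENNReal.toReal_ofReal hx.1.le]
    have hconst : MeasureTheory.Integrable (fun _ : ℝ => (1:ℝ) ^ 2)
        (volume.restrict (Set.Ioo (0:ℝ) x)) := by
      apply (integrableOn_const_iff (C := (1:ℝ) ^ 2)).mpr
      right
      exact measure_Ioo_lt_top
    have hfg : MeasureTheory.Integrable (fun t => u' t * 1)
        (volume.restrict (Set.Ioo (0:ℝ) x)) := by
      simpa [IntegrableOn] using hu'L1.mono_set hsub
    have hcs := my_cauchy_schwarz (μ := volume.restrict (Set.Ioo (0:ℝ) x))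
      (f := u') (g := fun _ => (1:ℝ)) (hu'L2.mono_set hsub) hconst hfg
    simp only [mul_one, one_pow] at hcs
    rw [MeasureTheory.setIntegral_const, measureReal_def, hvol, smul_eq_mul, mul_one] at hcs
    have hmono : ∫ t in Set.Ioo (0:ℝ) x, (u' t) ^ 2
        ≤ ∫ t in Set.Ioo (0:ℝ) 1, (u' t) ^ 2 := by
      apply setIntegral_mono_set hu'L2
      · filter_upwards with t using sq_nonneg _
      · exact HasSubset.Subset.eventuallyLE hsub
    have hA2 : 0 ≤ ∫ t in Set.Ioo (0:ℝ) x, (u' t) ^ 2 :=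
      setIntegral_nonneg measurableSet_Ioo fun t _ => sq_nonneg _
    calc u x ^ 2 = (∫ t in Set.Ioo (0:ℝ) x, u' t) ^ 2 := by rw [hux]
      _ ≤ (∫ t in Set.Ioo (0:ℝ) x, (u' t) ^ 2) * x := hcs
      _ ≤ (∫ t in Set.Ioo (0:ℝ) 1, (u' t) ^ 2) * 1 := by
          apply mul_le_mul hmono hx.2.le hx.1.le hI2nn
      _ = ∫ t in Set.Ioo (0:ℝ) 1, (u' t) ^ 2 := mul_one _
  have hP1 : ∫ x in Set.Ioo (0:ℝ) 1, (u x) ^ 2 ≤ ∫ x in Set.Ioo (0:ℝ) 1, (u' x) ^ 2 := by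
    have h := setIntegral_mono_on huL2 ((integrableOn_const_iff (C := ∫ t in Set.Ioo (0:ℝ) 1, (u' t) ^ 2)).mpr (Or.inr measure_Ioo_lt_top))
      measurableSet_Ioo hpoint1
    rwa [MeasureTheory.setIntegral_const, measureReal_def, Real.volume_Ioo, sub_zero,
      ENNReal.toReal_ofReal zero_le_one, one_smul] at h
  -- Part 2 : weighted Hardy-type inequality
  have hpoint2 : ∀ x ∈ Set.Ioo (0:ℝ) 1, (u' x) ^ 2 ≤ (∫ t in x..1, t ^ (-K)) * B := by
    intro x hx
    have hx0 : (0:ℝ) < x := hx.1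
    have hsub1 : Set.Ioo x 1 ⊆ Set.Ioo (0:ℝ) 1 := Set.Ioo_subset_Ioo hx0.le le_rfl
    have hsub2 : Set.Ioo x 1 ⊆ Set.Icc x 1 := Set.Ioo_subset_Icc_self
    have hu'x : u' x = -∫ t in Set.Ioo x 1, u'' t := by
      have h := hu'AC x ⟨hx.1, hx.2.le⟩ 1 ⟨one_pos, le_rfl⟩
      rw [hu'1, zero_sub, neg_eq_iff_eq_neg] at h
      rw [h, intervalIntegral.integral_of_le hx.2.le,
        MeasureTheory.integral_Ioc_eq_integral_Ioo]
    -- Cauchy-Schwarz with weights t^(-K/2), t^(K/2)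
    have hfEq : Set.EqOn (fun t : ℝ => (t ^ (-(K/2))) ^ 2) (fun t : ℝ => t ^ (-K))
        (Set.Ioo x 1) := by
      intro t ht
      have ht0 : (0:ℝ) < t := lt_trans hx0 ht.1
      simp only []
      rw [sq, ← Real.rpow_add ht0]
      ring_nf
    have hgEq : Set.EqOn (fun t : ℝ => (t ^ (K/2) * u'' t) ^ 2)
        (fun t : ℝ => t ^ K * u'' t ^ 2) (Set.Ioo x 1) := by
      intro t ht
      have ht0 : (0:ℝ) < t := lt_trans hx0 ht.1
      simp only []
      rw [mul_pow, sq (t ^ (K/2)), ← Real.rpow_add ht0]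
      norm_num
    have hfgEq : Set.EqOn (fun t : ℝ => t ^ (-(K/2)) * (t ^ (K/2) * u'' t)) u''
        (Set.Ioo x 1) := by
      intro t ht
      have ht0 : (0:ℝ) < t := lt_trans hx0 ht.1
      simp only []
      rw [← mul_assoc, ← Real.rpow_add ht0]
      norm_num
    have hf2 : MeasureTheory.Integrable (fun t : ℝ => (t ^ (-(K/2))) ^ 2)
        (volume.restrict (Set.Ioo x 1)) := by
      apply (integrableOn_congr_fun hfEq measurableSet_Ioo).mpr
      have hcont : ContinuousOn (fun t : ℝ => t ^ (-K)) (Set.Icc x 1) := fun t ht =>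
        (Real.continuousAt_rpow_const t (-K) (Or.inl (lt_of_lt_of_le hx0 ht.1).ne')).continuousWithinAt
      exact (hcont.integrableOn_compact isCompact_Icc).mono_set hsub2
    have hg2 : MeasureTheory.Integrable (fun t : ℝ => (t ^ (K/2) * u'' t) ^ 2)
        (volume.restrict (Set.Ioo x 1)) := by
      apply (integrableOn_congr_fun hgEq measurableSet_Ioo).mpr
      exact hBint.mono_set hsub1
    have hfg : MeasureTheory.Integrable (fun t : ℝ => t ^ (-(K/2)) * (t ^ (K/2) * u'' t))
        (volume.restrict (Set.Ioo x 1)) := by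
      apply (integrableOn_congr_fun hfgEq measurableSet_Ioo).mpr
      exact (hu''loc x ⟨hx.1, hx.2.le⟩).mono_set hsub2
    have hcs := my_cauchy_schwarz (μ := volume.restrict (Set.Ioo x 1))
      (f := fun t : ℝ => t ^ (-(K/2))) (g := fun t : ℝ => t ^ (K/2) * u'' t) hf2 hg2 hfg
    rw [setIntegral_congr_fun measurableSet_Ioo hfgEq,
      setIntegral_congr_fun measurableSet_Ioo hfEq,
      setIntegral_congr_fun measurableSet_Ioo hgEq] at hcs
    have hw : ∫ t in Set.Ioo x 1, t ^ (-K) = ∫ t in x..1, t ^ (-K) := by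
      rw [intervalIntegral.integral_of_le hx.2.le,
        MeasureTheory.integral_Ioc_eq_integral_Ioo]
    have hwnn : 0 ≤ ∫ t in x..1, t ^ (-K) := by
      apply intervalIntegral.integral_nonneg hx.2.le
      intro t ht
      exact Real.rpow_nonneg (le_trans hx0.le ht.1) _
    have hmono : ∫ t in Set.Ioo x 1, t ^ K * u'' t ^ 2 ≤ B := by
      apply setIntegral_mono_set hBint
      · rw [EventuallyLE, ae_restrict_iff' measurableSet_Ioo]
        filter_upwards with t ht
        have : (0:ℝ) ≤ t ^ K := Real.rpow_nonneg ht.1.le K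
        positivity
      · exact HasSubset.Subset.eventuallyLE hsub1
    calc (u' x) ^ 2 = (∫ t in Set.Ioo x 1, u'' t) ^ 2 := by rw [hu'x, neg_sq]
      _ ≤ (∫ t in Set.Ioo x 1, t ^ (-K)) * ∫ t in Set.Ioo x 1, t ^ K * u'' t ^ 2 := hcs
      _ ≤ (∫ t in x..1, t ^ (-K)) * B := by
          rw [hw]
          exact mul_le_mul_of_nonneg_left hmono hwnn
  obtain ⟨hwint, hwval⟩ := w_facts K hK0 hK2
  have hP2' : ∫ x in Set.Ioo (0:ℝ) 1, (u' x) ^ 2 ≤ (1/(2-K)) * B := by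
    have h := setIntegral_mono_on hu'L2 (hwint.mul_const B) measurableSet_Ioo hpoint2
    rwa [MeasureTheory.integral_mul_const, hwval] at h
  have ha1B : a 1 * B ≤ ∫ x in Set.Ioo (0:ℝ) 1, a x * (u'' x) ^ 2 := by
    rw [hB, ← MeasureTheory.integral_const_mul]
    apply setIntegral_mono_on (hBint.const_mul (a 1)) hau'' measurableSet_Ioo
    intro t ht
    have h1 := alow t ⟨ht.1, ht.2.le⟩
    nlinarith [sq_nonneg (u'' t)]
  have hc : (0:ℝ) < a 1 * (2 - K) := by positivity
  have hP2 : ∫ x in Set.Ioo (0:ℝ) 1, (u' x) ^ 2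
      ≤ (1 / (a 1 * (2 - K))) * ∫ x in Set.Ioo (0:ℝ) 1, a x * (u'' x) ^ 2 := by
    have he : (1 / (a 1 * (2 - K))) * (a 1 * B) = (1/(2-K)) * B := by
      field_simp
    calc ∫ x in Set.Ioo (0:ℝ) 1, (u' x) ^ 2 ≤ (1/(2-K)) * B := hP2'
      _ = (1 / (a 1 * (2 - K))) * (a 1 * B) := he.symm
      _ ≤ (1 / (a 1 * (2 - K))) * ∫ x in Set.Ioo (0:ℝ) 1, a x * (u'' x) ^ 2 := by
          apply mul_le_mul_of_nonneg_left ha1B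
          positivity
  have hI1nn : 0 ≤ ∫ x in Set.Ioo (0:ℝ) 1, (u x) ^ 2 :=
    setIntegral_nonneg measurableSet_Ioo fun x _ => sq_nonneg _
  refine ⟨hP1, hP2, by linarith, by linarith, ?_⟩
  have hkey : (1 + 2 / (a 1 * (2 - K))) * (∫ x in Set.Ioo (0:ℝ) 1, a x * (u'' x) ^ 2)
      = (∫ x in Set.Ioo (0:ℝ) 1, a x * (u'' x) ^ 2)
        + 2 * ((1 / (a 1 * (2 - K))) * ∫ x in Set.Ioo (0:ℝ) 1, a x * (u'' x) ^ 2) := by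
    ring
  linarith
end

section
/- Assume a is weakly degenerate (WD) or strongly degenerate (SD). Let u satisfy: u ∈ H¹(0,1), u(0) = u(1) = 0, u' absolutely continuous on [0,1] with u'(0) = u'(1) = 0 if a is (WD) (respectively u' locally absolutely continuous on (0,1] with u'(1) = 0 and (a·u'')(0) = 0 if a is (SD)), √a·u'' ∈ L²(0,1), and a·u'' ∈ H²(0,1). Let v satisfy: v ∈ H¹(0,1), v(0) = v(1) = 0, v' absolutely continuous on [0,1] with v'(0) = v'(1) = 0 if a is (WD) (respectively v' locally absolutely continuous on (0,1] with v'(1) = 0 if a is (SD)), and √a·v'' ∈ L²(0,1). Then the integration-by-parts formula ∫₀¹ (a·u'')''·v dx = ∫₀¹ a·u''·v'' dx holds; in particular lim_{δ→0⁺} (a·u''·v')(δ) = 0. -/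
open Set Filter MeasureTheory Topology

/-- Integration by parts for two functions given by integral representations
(absolutely continuous functions), proved via Fubini. -/
lemma gg_ibp_core (c d : ℝ) (hcd : c ≤ d) (f g f' g' : ℝ → ℝ)
    (hf'i : IntegrableOn f' (Ioc c d))
    (hg'i : IntegrableOn g' (Ioc c d))
    (hf : ∀ x ∈ Icc c d, f x = f c + ∫ t in Ioo c x, f' t)
    (hg : ∀ x ∈ Icc c d, g x = g c + ∫ t in Ioc c x, g' t) :
    (∫ x in Ioc c d, f x * g' x) + (∫ x in Ioc c d, f' x * g x)
      = f d * g d - f c * g c := by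
  set μ := volume.restrict (Ioc c d) with hμ
  set A := ∫ x in Ioc c d, f' x with hA
  set B := ∫ x in Ioc c d, g' x with hB
  set Φ : ℝ × ℝ → ℝ := fun p => {q : ℝ × ℝ | q.2 < q.1}.indicator (fun q => g' q.1 * f' q.2) p
    with hΦ
  set Ψ : ℝ × ℝ → ℝ := fun p => {q : ℝ × ℝ | q.2 ≤ q.1}.indicator (fun q => f' q.1 * g' q.2) p
    with hΨ
  have hμ' : ∀ s : Set ℝ, MeasurableSet s → μ.restrict s = volume.restrict (s ∩ Ioc c d) := by
    intro s hs; rw [hμ, Measure.restrict_restrict hs]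
  have hΦi : Integrable Φ (μ.prod μ) :=
    (hg'i.mul_prod hf'i).indicator (measurableSet_lt measurable_snd measurable_fst)
  have hΨi : Integrable Ψ (μ.prod μ) :=
    (hf'i.mul_prod hg'i).indicator (measurableSet_le measurable_snd measurable_fst)
  have inner1 : ∀ x, x ≤ d → (∫ t, Φ (x, t) ∂μ) = g' x * ∫ t in Ioo c x, f' t := by
    intro x hx
    have h1 : ∀ t, Φ (x, t) = g' x * (Iio x).indicator f' t := by
      intro t
      simp only [hΦ, Set.indicator_apply, mem_setOf_eq, mem_Iio, mul_ite, mul_zero]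
    simp_rw [h1]
    have hset : Iio x ∩ Ioc c d = Ioo c x := by
      ext t
      simp only [mem_inter_iff, mem_Iio, mem_Ioc, mem_Ioo]
      exact ⟨fun h => ⟨h.2.1, h.1⟩, fun h => ⟨h.2, h.1, h.2.le.trans hx⟩⟩
    rw [integral_const_mul, integral_indicator measurableSet_Iio, hμ' _ measurableSet_Iio, hset]
  have inner2 : ∀ x, x ≤ d → (∫ t, Ψ (x, t) ∂μ) = f' x * ∫ t in Ioc c x, g' t := by
    intro x hx
    have h1 : ∀ t, Ψ (x, t) = f' x * (Iic x).indicator g' t := by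
      intro t
      simp only [hΨ, Set.indicator_apply, mem_setOf_eq, mem_Iic, mul_ite, mul_zero]
    simp_rw [h1]
    have hset : Iic x ∩ Ioc c d = Ioc c x := by
      ext t
      simp only [mem_inter_iff, mem_Iic, mem_Ioc]
      exact ⟨fun h => ⟨h.2.1, h.1⟩, fun h => ⟨h.2, h.1, h.2.trans hx⟩⟩
    rw [integral_const_mul, integral_indicator measurableSet_Iic, hμ' _ measurableSet_Iic, hset]
  have e1 : (∫ x in Ioc c d, f x * g' x)
      = f c * B + ∫ p, Φ p ∂(μ.prod μ) := by
    rw [MeasureTheory.integral_prod _ hΦi]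
    have : ∀ x ∈ Ioc c d, f x * g' x = f c * g' x + ∫ t, Φ (x, t) ∂μ := by
      intro x hx
      rw [inner1 x hx.2, hf x (Ioc_subset_Icc_self hx)]
      ring
    rw [setIntegral_congr_fun measurableSet_Ioc this,
      integral_add (hg'i.const_mul _) hΦi.integral_prod_left, integral_const_mul]
  have e2 : (∫ x in Ioc c d, f' x * g x)
      = g c * A + ∫ p, Ψ p ∂(μ.prod μ) := by
    rw [MeasureTheory.integral_prod _ hΨi]
    have : ∀ x ∈ Ioc c d, f' x * g x = g c * f' x + ∫ t, Ψ (x, t) ∂μ := by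
      intro x hx
      rw [inner2 x hx.2, hg x (Ioc_subset_Icc_self hx)]
      ring
    rw [setIntegral_congr_fun measurableSet_Ioc this,
      integral_add (hf'i.const_mul _) hΨi.integral_prod_left, integral_const_mul]
  have hswap : (∫ p, Φ p ∂(μ.prod μ)) = ∫ p, Φ (Prod.swap p) ∂(μ.prod μ) :=
    (MeasureTheory.integral_prod_swap Φ).symm
  have hΦsw : Integrable (fun p : ℝ × ℝ => Φ (Prod.swap p)) (μ.prod μ) := hΦi.swap
  have hsum : (∫ p, Φ (Prod.swap p) ∂(μ.prod μ)) + (∫ p, Ψ p ∂(μ.prod μ)) = A * B := by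
    rw [← integral_add hΦsw hΨi]
    have : ∀ p : ℝ × ℝ, Φ (Prod.swap p) + Ψ p = f' p.1 * g' p.2 := by
      intro p
      simp only [hΦ, hΨ, Set.indicator_apply, mem_setOf_eq, Prod.swap, Prod.fst, Prod.snd]
      by_cases h : p.1 < p.2
      · rw [if_pos h, if_neg (not_le.2 h)]; ring
      · rw [if_neg h, if_pos (not_lt.1 h)]; ring
    simp_rw [this]
    rw [MeasureTheory.integral_prod_mul]
  have hfd : f d = f c + A := by
    rw [hf d ⟨hcd, le_refl d⟩, hA, setIntegral_congr_set Ioo_ae_eq_Ioc]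
  have hgd : g d = g c + B := hg d ⟨hcd, le_refl d⟩
  rw [e1, e2, hfd, hgd]
  have : (∫ p, Φ p ∂(μ.prod μ)) + (∫ p, Ψ p ∂(μ.prod μ)) = A * B := by
    rw [hswap]; exact hsum
  nlinarith [this]

/-- Integration by parts, interval-integral form. -/
lemma gg_ibp (c d : ℝ) (hcd : c ≤ d) (f g f' g' : ℝ → ℝ)
    (hf'i : IntegrableOn f' (Ioc c d))
    (hg'i : IntegrableOn g' (Ioc c d))
    (hf : ∀ x ∈ Icc c d, f x = f c + ∫ t in c..x, f' t)
    (hg : ∀ x ∈ Icc c d, g x = g c + ∫ t in c..x, g' t) :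
    (∫ x in Ioc c d, f x * g' x) + (∫ x in Ioc c d, f' x * g x)
      = f d * g d - f c * g c := by
  refine gg_ibp_core c d hcd f g f' g' hf'i hg'i ?_ ?_
  · intro x hx
    rw [hf x hx, intervalIntegral.integral_of_le hx.1,
      setIntegral_congr_set Ioo_ae_eq_Ioc.symm]
  · intro x hx
    rw [hg x hx, intervalIntegral.integral_of_le hx.1]

/-- The tail integral `∫_{(δ,1]} f` converges to `∫_{(0,1]} f` as `δ → 0⁺`. -/
lemma gg_tendsto_tail (f : ℝ → ℝ) (hf : IntegrableOn f (Ioc (0:ℝ) 1)) :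
    Tendsto (fun δ => ∫ x in Ioc δ 1, f x) (𝓝[>] (0:ℝ))
      (𝓝 (∫ x in Ioc (0:ℝ) 1, f x)) := by
  have hIcc : IntegrableOn f (Icc (0:ℝ) 1) := (integrableOn_Icc_iff_integrableOn_Ioc enorm_ne_top).2 hf
  have hprim : ContinuousOn (fun z => ∫ t in Ioc (0:ℝ) z, f t) (Icc 0 1) :=
    intervalIntegral.continuousOn_primitive hIcc
  have h0 : Tendsto (fun z => ∫ t in Ioc (0:ℝ) z, f t) (𝓝[>] 0) (𝓝 0) := by
    have h1 := (hprim 0 ⟨le_rfl, zero_le_one⟩).mono_left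
      (nhdsWithin_le_of_mem (Icc_mem_nhdsGT zero_lt_one))
    simpa using h1
  have h2 : Tendsto (fun δ => (∫ x in Ioc (0:ℝ) 1, f x) - ∫ t in Ioc (0:ℝ) δ, f t)
      (𝓝[>] 0) (𝓝 ((∫ x in Ioc (0:ℝ) 1, f x) - 0)) := tendsto_const_nhds.sub h0
  rw [sub_zero] at h2
  refine Tendsto.congr' ?_ h2
  filter_upwards [Ioo_mem_nhdsGT zero_lt_one] with δ hδ
  have hsplit : Ioc (0:ℝ) 1 = Ioc 0 δ ∪ Ioc δ 1 := (Ioc_union_Ioc_eq_Ioc hδ.1.le hδ.2.le).symm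
  have hadd : (∫ x in Ioc (0:ℝ) 1, f x)
      = (∫ x in Ioc (0:ℝ) δ, f x) + ∫ x in Ioc δ 1, f x := by
    rw [hsplit]
    exact setIntegral_union (Ioc_disjoint_Ioc_of_le le_rfl) measurableSet_Ioc
      (hf.mono_set (by rw [hsplit]; exact subset_union_left))
      (hf.mono_set (by rw [hsplit]; exact subset_union_right))
  rw [hadd]; ring

set_option maxHeartbeats 1000000 in
/-- Gauss–Green formula: for `u` in the domain of the operator
(`u ∈ H²_{a,0}`, `a·u'' ∈ H²(0,1)` with `u'(0)=u'(1)=0` if (WD), resp.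
`(a·u'')(0)=0`, `u'(1)=0` if (SD)) and `v ∈ H²_{a,0}(0,1)`, one has
`∫₀¹ (a u'')'' v = ∫₀¹ a u'' v''`; in particular `(a u'' v')(δ) → 0` as `δ → 0⁺`. -/
theorem gauss_green_H2a0
    (a a' : ℝ → ℝ) (K : ℝ)
    (hdeg : IsWeaklyDegenerate a a' K ∨ IsStronglyDegenerate a a' K)
    (u u' u'' G G' G'' v v' v'' : ℝ → ℝ)
    -- u ∈ H²_a(0,1) with u(0) = u(1) = 0, u'(1) = 0
    (huAC : ∀ x ∈ Set.Icc (0:ℝ) 1, ∀ z ∈ Set.Icc (0:ℝ) 1,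
      u z - u x = ∫ t in x..z, u' t)
    (hu'L2 : MeasureTheory.IntegrableOn (fun x => (u' x) ^ 2) (Set.Ioo 0 1))
    (hu0 : u 0 = 0) (hu1 : u 1 = 0) (hu'1 : u' 1 = 0)
    (hu'AC : ∀ x ∈ Set.Ioc (0:ℝ) 1, ∀ z ∈ Set.Ioc (0:ℝ) 1,
      u' z - u' x = ∫ t in x..z, u'' t)
    (hu''loc : ∀ x ∈ Set.Ioc (0:ℝ) 1, MeasureTheory.IntegrableOn u'' (Set.Icc x 1))
    (hau''L2 : MeasureTheory.IntegrableOn (fun x => a x * (u'' x) ^ 2) (Set.Ioo 0 1))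
    -- a·u'' ∈ H²(0,1): G is the continuous representative of a·u'', G ∈ C¹[0,1]
    -- with derivative G', and G' is absolutely continuous with derivative G'' ∈ L²(0,1)
    (hG_eq : ∀ x ∈ Set.Ioc (0:ℝ) 1, G x = a x * u'' x)
    (hG_deriv : ∀ x ∈ Set.Icc (0:ℝ) 1, HasDerivWithinAt G (G' x) (Set.Icc 0 1) x)
    (hG'AC : ∀ x ∈ Set.Icc (0:ℝ) 1, ∀ z ∈ Set.Icc (0:ℝ) 1,
      G' z - G' x = ∫ t in x..z, G'' t)
    (hG''L1 : MeasureTheory.IntegrableOn G'' (Set.Ioo 0 1))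
    (hG''L2 : MeasureTheory.IntegrableOn (fun x => (G'' x) ^ 2) (Set.Ioo 0 1))
    -- case-dependent boundary conditions for u
    (hu_WD : IsWeaklyDegenerate a a' K → u' 0 = 0 ∧
      ∀ z ∈ Set.Icc (0:ℝ) 1, u' z - u' 0 = ∫ t in (0:ℝ)..z, u'' t)
    (hu_SD : IsStronglyDegenerate a a' K → G 0 = 0)
    -- v ∈ H²_{a,0}(0,1)
    (hvAC : ∀ x ∈ Set.Icc (0:ℝ) 1, ∀ z ∈ Set.Icc (0:ℝ) 1,
      v z - v x = ∫ t in x..z, v' t)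
    (hv'L2 : MeasureTheory.IntegrableOn (fun x => (v' x) ^ 2) (Set.Ioo 0 1))
    (hv0 : v 0 = 0) (hv1 : v 1 = 0) (hv'1 : v' 1 = 0)
    (hv'AC : ∀ x ∈ Set.Ioc (0:ℝ) 1, ∀ z ∈ Set.Ioc (0:ℝ) 1,
      v' z - v' x = ∫ t in x..z, v'' t)
    (hv''loc : ∀ x ∈ Set.Ioc (0:ℝ) 1, MeasureTheory.IntegrableOn v'' (Set.Icc x 1))
    (hav''L2 : MeasureTheory.IntegrableOn (fun x => a x * (v'' x) ^ 2) (Set.Ioo 0 1))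
    (hv_WD : IsWeaklyDegenerate a a' K → v' 0 = 0 ∧
      ∀ z ∈ Set.Icc (0:ℝ) 1, v' z - v' 0 = ∫ t in (0:ℝ)..z, v'' t) :
    (∫ x in Set.Ioo (0:ℝ) 1, G'' x * v x =
      ∫ x in Set.Ioo (0:ℝ) 1, a x * u'' x * v'' x) ∧
    Filter.Tendsto (fun δ : ℝ => a δ * u'' δ * v' δ)
      (nhdsWithin 0 (Set.Ioi 0)) (nhds 0) := by
  have h01 : (0:ℝ) ≤ (1:ℝ) := zero_le_one
  have hapos : ∀ x ∈ Ioc (0:ℝ) 1, 0 < a x := by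
    rcases hdeg with h | h
    exacts [h.pos, h.pos]
  have hIocMem : Ioc (0:ℝ) 1 ∈ 𝓝[>] (0:ℝ) := Ioc_mem_nhdsGT zero_lt_one
  have hIooMem : Ioo (0:ℝ) 1 ∈ 𝓝[>] (0:ℝ) := Ioo_mem_nhdsGT zero_lt_one
  -- G'' integrable
  have hG''Ioc : IntegrableOn G'' (Ioc (0:ℝ) 1) := (integrableOn_Ioc_iff_integrableOn_Ioo enorm_ne_top).2 hG''L1
  have hG''Icc : IntegrableOn G'' (Icc (0:ℝ) 1) := (integrableOn_Icc_iff_integrableOn_Ioo enorm_ne_top enorm_ne_top).2 hG''L1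
  -- G' facts
  have hG'rep : ∀ x ∈ Icc (0:ℝ) 1, G' x = G' 0 + ∫ t in (0:ℝ)..x, G'' t := by
    intro x hx
    have h := hG'AC 0 ⟨le_rfl, h01⟩ x hx
    linarith
  have hG'cont : ContinuousOn G' (Icc 0 1) := by
    have hc : ContinuousOn (fun x => G' 0 + ∫ t in Ioc (0:ℝ) x, G'' t) (Icc 0 1) :=
      continuousOn_const.add (intervalIntegral.continuousOn_primitive hG''Icc)
    refine hc.congr ?_
    intro x hx
    rw [hG'rep x hx, intervalIntegral.integral_of_le hx.1]
  obtain ⟨M1, hM1⟩ := isCompact_Icc.exists_bound_of_continuousOn hG'cont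
  have hM1_0 : 0 ≤ M1 := le_trans (norm_nonneg (G' 0)) (hM1 0 ⟨le_rfl, h01⟩)
  have hGI : ∀ p ∈ Icc (0:ℝ) 1, ∀ q ∈ Icc (0:ℝ) 1, IntervalIntegrable G' volume p q :=
    fun p hp q hq => (hG'cont.mono (uIcc_subset_Icc hp hq)).intervalIntegrable
  have hGcont : ContinuousOn G (Icc 0 1) := fun x hx => (hG_deriv x hx).continuousWithinAt
  obtain ⟨M3, hM3⟩ := isCompact_Icc.exists_bound_of_continuousOn hGcont
  have hGrep : ∀ x ∈ Icc (0:ℝ) 1, G x = G 0 + ∫ t in (0:ℝ)..x, G' t := by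
    intro x hx
    have hftc : ∫ t in (0:ℝ)..x, G' t = G x - G 0 := by
      refine intervalIntegral.integral_eq_sub_of_hasDeriv_right_of_le hx.1
        (hGcont.mono (Icc_subset_Icc le_rfl hx.2)) ?_ (hGI 0 ⟨le_rfl, h01⟩ x hx)
      intro y hy
      refine (hG_deriv y ⟨hy.1.le, hy.2.le.trans hx.2⟩).mono_of_mem_nhdsWithin ?_
      refine mem_of_superset (Ioc_mem_nhdsGT (lt_of_lt_of_le hy.2 hx.2)) ?_
      intro t ht
      exact ⟨(hy.1.trans ht.1).le, ht.2⟩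
    linarith
  -- v' facts
  have hv'contIcc : ∀ ε, 0 < ε → ε ≤ 1 → ContinuousOn v' (Icc ε 1) := by
    intro ε hε hε1
    have hint : IntegrableOn v'' (Icc ε 1) := hv''loc ε ⟨hε, hε1⟩
    have hc : ContinuousOn (fun z => v' ε + ∫ t in Ioc ε z, v'' t) (Icc ε 1) :=
      continuousOn_const.add (intervalIntegral.continuousOn_primitive hint)
    refine hc.congr ?_
    intro z hz
    have h := hv'AC ε ⟨hε, hε1⟩ z ⟨lt_of_lt_of_le hε hz.1, hz.2⟩
    rw [intervalIntegral.integral_of_le hz.1] at h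
    show v' z = v' ε + ∫ t in Ioc ε z, v'' t
    linarith
  have hIocUnion : Ioc (0:ℝ) 1 = ⋃ n : ℕ, Icc (1/(n+1) : ℝ) 1 := by
    ext x
    simp only [mem_Ioc, mem_iUnion, mem_Icc]
    constructor
    · rintro ⟨hx0, hx1⟩
      obtain ⟨n, hn⟩ := exists_nat_one_div_lt hx0
      exact ⟨n, hn.le, hx1⟩
    · rintro ⟨n, hn0, hn1⟩
      have hp : (0:ℝ) < 1/(n+1) := by positivity
      exact ⟨lt_of_lt_of_le hp hn0, hn1⟩
  have hfrac : ∀ n : ℕ, (0:ℝ) < 1/(n+1) ∧ (1/(n+1):ℝ) ≤ 1 := by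
    intro n
    constructor
    · positivity
    · rw [div_le_one (by positivity)]
      have : (0:ℝ) ≤ n := Nat.cast_nonneg n
      linarith
  have hv'meas : AEStronglyMeasurable v' (volume.restrict (Ioc (0:ℝ) 1)) := by
    rw [hIocUnion, aestronglyMeasurable_iUnion_iff]
    intro n
    exact (hv'contIcc _ (hfrac n).1 (hfrac n).2).aestronglyMeasurable measurableSet_Icc
  have hv''meas : AEStronglyMeasurable v'' (volume.restrict (Ioc (0:ℝ) 1)) := by
    rw [hIocUnion, aestronglyMeasurable_iUnion_iff]
    intro n
    exact (hv''loc _ ⟨(hfrac n).1, (hfrac n).2⟩).aestronglyMeasurable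
  have hv'sqIoc : IntegrableOn (fun x => v' x ^ 2) (Ioc (0:ℝ) 1) :=
    (integrableOn_Ioc_iff_integrableOn_Ioo enorm_ne_top).2 hv'L2
  have hv'Ioc : IntegrableOn v' (Ioc (0:ℝ) 1) := by
    refine Integrable.mono' (g := fun x => 1 + v' x ^ 2)
      (by exact (integrableOn_const measure_Ioc_lt_top.ne).add hv'sqIoc) hv'meas ?_
    refine ae_of_all _ fun x => ?_
    rw [Real.norm_eq_abs]
    show |v' x| ≤ 1 + v' x ^ 2
    nlinarith [sq_nonneg (|v' x| - 1), sq_abs (v' x), abs_nonneg (v' x)]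
  have hv'Icc : IntegrableOn v' (Icc (0:ℝ) 1) := (integrableOn_Icc_iff_integrableOn_Ioc enorm_ne_top).2 hv'Ioc
  -- v facts
  have hvrep : ∀ x ∈ Icc (0:ℝ) 1, v x = v 0 + ∫ t in (0:ℝ)..x, v' t := by
    intro x hx
    have h := hvAC 0 ⟨le_rfl, h01⟩ x hx
    linarith
  have hvcont : ContinuousOn v (Icc 0 1) := by
    have hc : ContinuousOn (fun x => v 0 + ∫ t in Ioc (0:ℝ) x, v' t) (Icc 0 1) :=
      continuousOn_const.add (intervalIntegral.continuousOn_primitive hv'Icc)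
    refine hc.congr ?_
    intro x hx
    rw [hvrep x hx, intervalIntegral.integral_of_le hx.1]
  obtain ⟨M2, hM2⟩ := isCompact_Icc.exists_bound_of_continuousOn hvcont
  -- measurability on `Ioc 0 1`
  have hresmono := Measure.restrict_mono (Ioc_subset_Icc_self (a := (0:ℝ)) (b := 1))
    (le_refl volume)
  have hGmeas : AEStronglyMeasurable G (volume.restrict (Ioc (0:ℝ) 1)) :=
    (hGcont.aestronglyMeasurable measurableSet_Icc).mono_measure hresmono
  have hG'meas : AEStronglyMeasurable G' (volume.restrict (Ioc (0:ℝ) 1)) :=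
    (hG'cont.aestronglyMeasurable measurableSet_Icc).mono_measure hresmono
  have hvmeas : AEStronglyMeasurable v (volume.restrict (Ioc (0:ℝ) 1)) :=
    (hvcont.aestronglyMeasurable measurableSet_Icc).mono_measure hresmono
  -- integrability of products
  have hG'v' : IntegrableOn (fun x => G' x * v' x) (Ioc (0:ℝ) 1) := by
    refine Integrable.mono' (hv'Ioc.abs.const_mul M1) (hG'meas.mul hv'meas) ?_
    refine (ae_restrict_iff' measurableSet_Ioc).2 (ae_of_all _ fun x hx => ?_)
    rw [Real.norm_eq_abs, abs_mul]
    refine mul_le_mul_of_nonneg_right ?_ (abs_nonneg _)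
    simpa [Real.norm_eq_abs] using hM1 x (Ioc_subset_Icc_self hx)
  have hG''v : IntegrableOn (fun x => G'' x * v x) (Ioc (0:ℝ) 1) := by
    refine Integrable.mono' (hG''Ioc.abs.mul_const M2) (hG''Ioc.aestronglyMeasurable.mul hvmeas) ?_
    refine (ae_restrict_iff' measurableSet_Ioc).2 (ae_of_all _ fun x hx => ?_)
    rw [Real.norm_eq_abs, abs_mul]
    refine mul_le_mul_of_nonneg_left ?_ (abs_nonneg _)
    simpa [Real.norm_eq_abs] using hM2 x (Ioc_subset_Icc_self hx)
  have hau''sqIoc : IntegrableOn (fun x => a x * u'' x ^ 2) (Ioc (0:ℝ) 1) :=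
    (integrableOn_Ioc_iff_integrableOn_Ioo enorm_ne_top).2 hau''L2
  have hav''sqIoc : IntegrableOn (fun x => a x * v'' x ^ 2) (Ioc (0:ℝ) 1) :=
    (integrableOn_Ioc_iff_integrableOn_Ioo enorm_ne_top).2 hav''L2
  have hGv'' : IntegrableOn (fun x => G x * v'' x) (Ioc (0:ℝ) 1) := by
    refine Integrable.mono' ((hau''sqIoc.add hav''sqIoc).div_const 2) (hGmeas.mul hv''meas) ?_
    refine (ae_restrict_iff' measurableSet_Ioc).2 (ae_of_all _ fun x hx => ?_)
    have hax := hapos x hx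
    rw [Real.norm_eq_abs, hG_eq x hx, abs_mul, abs_mul, abs_of_nonneg hax.le]
    have h1 : |u'' x| * |v'' x| ≤ (u'' x ^ 2 + v'' x ^ 2)/2 := by
      nlinarith [sq_nonneg (|u'' x| - |v'' x|), sq_abs (u'' x), sq_abs (v'' x)]
    simp only [Pi.add_apply]
    nlinarith [mul_le_mul_of_nonneg_left h1 hax.le]
  have hauv'' : IntegrableOn (fun x => a x * u'' x * v'' x) (Ioc (0:ℝ) 1) := by
    refine IntegrableOn.congr_fun hGv'' (fun x hx => ?_) measurableSet_Ioc
    rw [hG_eq x hx]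
  -- Claim A: integration by parts on (0,1]
  have claimA : (∫ x in Ioc (0:ℝ) 1, G' x * v' x) + (∫ x in Ioc (0:ℝ) 1, G'' x * v x) = 0 := by
    have h := gg_ibp 0 1 h01 G' v G'' v' hG''Ioc hv'Ioc hG'rep hvrep
    rw [hv1, hv0, mul_zero, mul_zero, sub_zero] at h
    exact h
  -- Claim B: integration by parts on (δ,1]
  have claimB : ∀ δ ∈ Ioo (0:ℝ) 1, (∫ x in Ioc δ 1, G' x * v' x)
      = -(G δ * v' δ) - ∫ x in Ioc δ 1, a x * u'' x * v'' x := by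
    intro δ hδ
    have hδI : δ ∈ Ioc (0:ℝ) 1 := ⟨hδ.1, hδ.2.le⟩
    have hδIcc : δ ∈ Icc (0:ℝ) 1 := ⟨hδ.1.le, hδ.2.le⟩
    have hG'int : IntegrableOn G' (Ioc δ 1) :=
      ((hG'cont.mono (Icc_subset_Icc hδ.1.le le_rfl)).integrableOn_Icc).mono_set
        Ioc_subset_Icc_self
    have hv''int : IntegrableOn v'' (Ioc δ 1) := (hv''loc δ hδI).mono_set Ioc_subset_Icc_self
    have hGrepδ : ∀ x ∈ Icc δ 1, G x = G δ + ∫ t in δ..x, G' t := by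
      intro x hx
      have hxI : x ∈ Icc (0:ℝ) 1 := ⟨hδ.1.le.trans hx.1, hx.2⟩
      have h1 := hGrep x hxI
      have h2 := hGrep δ hδIcc
      have h3 := intervalIntegral.integral_add_adjacent_intervals
        (hGI 0 ⟨le_rfl, h01⟩ δ hδIcc) (hGI δ hδIcc x hxI)
      linarith
    have hv'repδ : ∀ x ∈ Icc δ 1, v' x = v' δ + ∫ t in δ..x, v'' t := by
      intro x hx
      have h := hv'AC δ hδI x ⟨lt_of_lt_of_le hδ.1 hx.1, hx.2⟩
      linarith
    have h := gg_ibp δ 1 hδ.2.le G v' G' v'' hG'int hv''int hGrepδ hv'repδ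
    rw [hv'1, mul_zero, zero_sub] at h
    have hcong : (∫ x in Ioc δ 1, G x * v'' x) = ∫ x in Ioc δ 1, a x * u'' x * v'' x :=
      setIntegral_congr_fun measurableSet_Ioc fun x hx => by
        rw [hG_eq x ⟨hδ.1.trans hx.1, hx.2⟩]
    rw [hcong] at h
    linarith
  -- tail convergence
  have hC := gg_tendsto_tail _ hG'v'
  have hD := gg_tendsto_tail _ hauv''
  -- v' represented from the right
  have hv'rep1 : ∀ δ ∈ Ioc (0:ℝ) 1, v' δ = - ∫ t in Ioc δ 1, v'' t := by
    intro δ hδ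
    have h := hv'AC δ hδ 1 ⟨zero_lt_one, le_rfl⟩
    rw [hv'1, intervalIntegral.integral_of_le hδ.2] at h
    linarith
  -- Claim E : the boundary term vanishes
  have hE : Tendsto (fun δ => G δ * v' δ) (𝓝[>] (0:ℝ)) (𝓝 0) := by
    rcases hdeg with hWD | hSD
    · -- weakly degenerate case
      obtain ⟨hv'0, hrep0⟩ := hv_WD hWD
      have hGt : Tendsto G (𝓝[>] (0:ℝ)) (𝓝 (G 0)) :=
        (hGcont 0 ⟨le_rfl, h01⟩).mono_left
          (nhdsWithin_le_of_mem (Icc_mem_nhdsGT zero_lt_one))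
      have hv't : Tendsto v' (𝓝[>] (0:ℝ)) (𝓝 0) := by
        by_cases hcase : ∃ ε, ε ∈ Ioc (0:ℝ) 1 ∧ IntegrableOn v'' (Ioc 0 ε)
        · obtain ⟨ε, hε, hint⟩ := hcase
          have hIcc : IntegrableOn v'' (Icc (0:ℝ) ε) :=
            (integrableOn_Icc_iff_integrableOn_Ioc enorm_ne_top).2 hint
          have hprim : ContinuousOn (fun z => ∫ t in Ioc (0:ℝ) z, v'' t) (Icc 0 ε) :=
            intervalIntegral.continuousOn_primitive hIcc
          have h0 : Tendsto (fun z => ∫ t in Ioc (0:ℝ) z, v'' t) (𝓝[>] 0) (𝓝 0) := by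
            have h1 := (hprim 0 ⟨le_rfl, hε.1.le⟩).mono_left
              (nhdsWithin_le_of_mem (Icc_mem_nhdsGT hε.1))
            simpa using h1
          refine Tendsto.congr' ?_ h0
          filter_upwards [Ioc_mem_nhdsGT hε.1] with z hz
          have h2 := hrep0 z ⟨hz.1.le, hz.2.trans hε.2⟩
          rw [hv'0, sub_zero, intervalIntegral.integral_of_le hz.1.le] at h2
          exact h2.symm
        · push_neg at hcase
          have hzero : ∀ z ∈ Ioc (0:ℝ) 1, v' z = 0 := by
            intro z hz
            have h2 := hrep0 z ⟨hz.1.le, hz.2⟩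
            rw [hv'0, sub_zero, intervalIntegral.integral_of_le hz.1.le] at h2
            rw [h2, integral_undef (hcase z hz)]
          refine Tendsto.congr' ?_ (tendsto_const_nhds (x := (0:ℝ)))
          filter_upwards [hIocMem] with z hz
          exact (hzero z hz).symm
      have h := hGt.mul hv't
      simpa using h
    · -- strongly degenerate case
      have hG0 : G 0 = 0 := hu_SD hSD
      have ha1pos : 0 < a 1 := hapos 1 ⟨zero_lt_one, le_rfl⟩
      set K₂ : ℝ := (K + 2)/2 with hK₂def
      have hK₂1 : 1 < K₂ := by rw [hK₂def]; linarith [hSD.K_ge_one]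
      have hK₂2 : K₂ < 2 := by rw [hK₂def]; linarith [hSD.K_lt_two]
      have hKK₂ : K ≤ K₂ := by rw [hK₂def]; linarith [hSD.K_lt_two]
      have haIoc : ∀ x ∈ Ioc (0:ℝ) 1, HasDerivWithinAt a (a' x) (Ioc 0 1) x :=
        fun x hx => (hSD.deriv x (Ioc_subset_Icc_self hx)).mono Ioc_subset_Icc_self
      have hacont : ContinuousOn a (Icc 0 1) := fun x hx => (hSD.deriv x hx).continuousWithinAt
      -- lower bound for a
      have ha_low : ∀ δ ∈ Ioc (0:ℝ) 1, a 1 * δ ^ K ≤ a δ := by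
        intro δ hδ
        set F : ℝ → ℝ := fun x => Real.log (a x) - K * Real.log x with hF
        have hFd : ∀ x ∈ Ioo (0:ℝ) 1, HasDerivAt F (a' x / a x - K * x⁻¹) x := by
          intro x hx
          have hxI : x ∈ Ioc (0:ℝ) 1 := ⟨hx.1, hx.2.le⟩
          have hax : 0 < a x := hapos x hxI
          have hda : HasDerivAt a (a' x) x :=
            (haIoc x hxI).hasDerivAt (Ioc_mem_nhds hx.1 hx.2)
          exact (hda.log hax.ne').sub ((Real.hasDerivAt_log hx.1.ne').const_mul K)
        have hFanti : AntitoneOn F (Ioc 0 1) := by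
          refine antitoneOn_of_deriv_nonpos (convex_Ioc 0 1) ?_ ?_ ?_
          · refine ContinuousOn.sub
              (ContinuousOn.log (hacont.mono Ioc_subset_Icc_self)
                fun x hx => (hapos x hx).ne') ?_
            exact continuousOn_const.mul (Real.continuousOn_log.mono
              fun x hx => by simpa using ne_of_gt hx.1)
          · rw [interior_Ioc]
            intro x hx
            exact (hFd x hx).differentiableAt.differentiableWithinAt
          · rw [interior_Ioc]
            intro x hx
            rw [(hFd x hx).deriv]
            have hxI : x ∈ Ioc (0:ℝ) 1 := ⟨hx.1, hx.2.le⟩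
            have hax := hapos x hxI
            have h1 : x * a' x ≤ K * a x :=
              le_trans (mul_le_mul_of_nonneg_left (le_abs_self _) hx.1.le) (hSD.bound x hxI)
            rw [sub_nonpos, ← div_eq_mul_inv, div_le_div_iff₀ hax hx.1]
            nlinarith [h1]
        have h := hFanti hδ ⟨zero_lt_one, le_rfl⟩ hδ.2
        rw [hF] at h
        simp only [Real.log_one, mul_zero, sub_zero] at h
        have haδ := hapos δ hδ
        have h2 : Real.log (a 1 * δ ^ K) ≤ Real.log (a δ) := by
          rw [Real.log_mul ha1pos.ne' (Real.rpow_pos_of_pos hδ.1 K).ne',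
            Real.log_rpow hδ.1]
          linarith
        exact (Real.log_le_log_iff (mul_pos ha1pos (Real.rpow_pos_of_pos hδ.1 K)) haδ).1 h2
      -- bound for G
      have hGbd : ∀ δ ∈ Ioc (0:ℝ) 1, |G δ| ≤ M1 * δ := by
        intro δ hδ
        have h := hGrep δ (Ioc_subset_Icc_self hδ)
        rw [hG0, zero_add] at h
        rw [h, ← Real.norm_eq_abs]
        have hb := intervalIntegral.norm_integral_le_of_norm_le_const
          (C := M1) (a := (0:ℝ)) (b := δ) (f := G') ?_
        · calc ‖∫ t in (0:ℝ)..δ, G' t‖ ≤ M1 * |δ - 0| := hb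
          _ = M1 * δ := by rw [sub_zero, abs_of_nonneg hδ.1.le]
        · intro x hx
          rw [uIoc_of_le hδ.1.le] at hx
          exact hM1 x ⟨hx.1.le, hx.2.trans hδ.2⟩
      set C₂ : ℝ := ∫ x in Ioc (0:ℝ) 1, a x * v'' x ^ 2 with hC₂def
      have hC₂0 : 0 ≤ C₂ := setIntegral_nonneg measurableSet_Ioc
        fun x hx => mul_nonneg (hapos x hx).le (sq_nonneg _)
      set Q : ℝ := (a 1)⁻¹ / (K₂ - 1) with hQdef
      have hQ0 : 0 ≤ Q := div_nonneg (inv_nonneg.2 ha1pos.le) (by linarith)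
      -- bound for v'
      have hv'bd : ∀ δ ∈ Ioc (0:ℝ) 1, |v' δ| ≤ (Q + C₂)/2 * δ ^ ((1 - K₂)/2) := by
        intro δ hδ
        set lam : ℝ := δ ^ ((1 - K₂)/2) with hlam
        have hlampos : 0 < lam := Real.rpow_pos_of_pos hδ.1 _
        have hsub : Ioc δ 1 ⊆ Ioc (0:ℝ) 1 := Ioc_subset_Ioc hδ.1.le le_rfl
        have hv''int : IntegrableOn v'' (Ioc δ 1) := (hv''loc δ hδ).mono_set Ioc_subset_Icc_self
        have hrpowcont : ContinuousOn (fun t : ℝ => t ^ (-K₂)) (Icc δ 1) := fun t ht =>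
          (Real.continuousAt_rpow_const t (-K₂)
            (Or.inl (ne_of_gt (lt_of_lt_of_le hδ.1 ht.1)))).continuousWithinAt
        have hrpowint : IntegrableOn (fun t : ℝ => t ^ (-K₂)) (Ioc δ 1) :=
          hrpowcont.integrableOn_Icc.mono_set Ioc_subset_Icc_self
        have hainvcont : ContinuousOn (fun t => (a t)⁻¹) (Icc δ 1) :=
          (hacont.mono (Icc_subset_Icc hδ.1.le le_rfl)).inv₀
            fun t ht => (hapos t ⟨lt_of_lt_of_le hδ.1 ht.1, ht.2⟩).ne'
        have hainvint : IntegrableOn (fun t => (a t)⁻¹) (Ioc δ 1) :=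
          hainvcont.integrableOn_Icc.mono_set Ioc_subset_Icc_self
        have hav''int : IntegrableOn (fun t => a t * v'' t ^ 2) (Ioc δ 1) :=
          hav''sqIoc.mono_set hsub
        have h1 : |v' δ| ≤ ∫ t in Ioc δ 1, |v'' t| := by
          rw [hv'rep1 δ hδ, abs_neg]
          simpa [Real.norm_eq_abs] using
            norm_integral_le_integral_norm (μ := volume.restrict (Ioc δ 1)) v''
        have h2 : ∀ t ∈ Ioc δ 1, |v'' t| ≤ (2*lam)⁻¹ * (a t)⁻¹ + lam/2 * (a t * v'' t ^ 2) := by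
          intro t ht
          have hat : 0 < a t := hapos t (hsub ht)
          have key : 2*lam*(a t)*|v'' t| ≤ 1 + (lam * a t)^2 * v'' t ^ 2 := by
            nlinarith [sq_nonneg (1 - lam * a t * |v'' t|), sq_abs (v'' t)]
          have hpos : 0 < 2 * lam * a t := by positivity
          calc |v'' t| = (2*lam*a t)⁻¹ * (2*lam*(a t)*|v'' t|) := by field_simp
          _ ≤ (2*lam*a t)⁻¹ * (1 + (lam * a t)^2 * v'' t ^ 2) :=
              mul_le_mul_of_nonneg_left key (inv_nonneg.2 hpos.le)
          _ = (2*lam)⁻¹ * (a t)⁻¹ + lam/2 * (a t * v'' t ^ 2) := by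
              field_simp
        have h3 : (∫ t in Ioc δ 1, |v'' t|)
            ≤ (2*lam)⁻¹ * (∫ t in Ioc δ 1, (a t)⁻¹)
              + lam/2 * (∫ t in Ioc δ 1, a t * v'' t ^ 2) := by
          have h3a := setIntegral_mono_on (μ := volume)
            (g := fun t => (2*lam)⁻¹ * (a t)⁻¹ + lam/2 * (a t * v'' t ^ 2))
            hv''int.abs
            (by exact (hainvint.const_mul _).add (hav''int.const_mul _))
            measurableSet_Ioc h2
          rwa [integral_add (hainvint.const_mul _) (hav''int.const_mul _),
            integral_const_mul, integral_const_mul] at h3a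
        have h4 : (∫ t in Ioc δ 1, (a t)⁻¹) ≤ Q * δ ^ (1 - K₂) := by
          have h4a : ∀ t ∈ Ioc δ 1, (a t)⁻¹ ≤ (a 1)⁻¹ * t ^ (-K₂) := by
            intro t ht
            have htI : t ∈ Ioc (0:ℝ) 1 := hsub ht
            have ht0 : 0 < t := htI.1
            have hrp : t ^ K₂ ≤ t ^ K := Real.rpow_le_rpow_of_exponent_ge ht0 htI.2 hKK₂
            have hlow : a 1 * t ^ K₂ ≤ a t :=
              le_trans (mul_le_mul_of_nonneg_left hrp ha1pos.le) (ha_low t htI)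
            have hpos2 : 0 < a 1 * t ^ K₂ := mul_pos ha1pos (Real.rpow_pos_of_pos ht0 _)
            have hi := inv_anti₀ hpos2 hlow
            rwa [mul_inv, ← Real.rpow_neg ht0.le] at hi
          have h4b : (∫ t in Ioc δ 1, (a t)⁻¹) ≤ ∫ t in Ioc δ 1, (a 1)⁻¹ * t ^ (-K₂) :=
            setIntegral_mono_on hainvint (hrpowint.const_mul _) measurableSet_Ioc h4a
          have h4c : (∫ t in Ioc δ 1, (t:ℝ) ^ (-K₂)) = (1 - δ ^ (-K₂+1)) / (-K₂+1) := by
            rw [← intervalIntegral.integral_of_le hδ.2,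
              integral_rpow (Or.inr ⟨by intro hc; rw [neg_eq_iff_eq_neg] at hc; linarith,
                by rw [uIcc_of_le hδ.2]; intro hc; exact absurd hc.1 (not_le.2 hδ.1)⟩),
              Real.one_rpow]
          have hr1 : 1 ≤ δ ^ (1 - K₂) :=
            Real.one_le_rpow_of_pos_of_le_one_of_nonpos hδ.1 hδ.2 (by linarith)
          have hexp : -K₂ + 1 = 1 - K₂ := by ring
          have h4d : (1 - δ ^ (1-K₂)) / (1-K₂) ≤ δ ^ (1-K₂) / (K₂ - 1) := by
            have heq : (1 - δ ^ (1-K₂)) / (1-K₂) = (δ ^ (1-K₂) - 1) / (K₂-1) := by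
              rw [div_eq_div_iff (by linarith) (by linarith)]
              ring
            rw [heq]
            gcongr
            · linarith
          calc (∫ t in Ioc δ 1, (a t)⁻¹) ≤ ∫ t in Ioc δ 1, (a 1)⁻¹ * t ^ (-K₂) := h4b
          _ = (a 1)⁻¹ * ((1 - δ ^ (-K₂+1)) / (-K₂+1)) := by rw [integral_const_mul, h4c]
          _ = (a 1)⁻¹ * ((1 - δ ^ (1-K₂)) / (1-K₂)) := by rw [hexp]
          _ ≤ (a 1)⁻¹ * (δ ^ (1-K₂) / (K₂-1)) :=
              mul_le_mul_of_nonneg_left h4d (inv_nonneg.2 ha1pos.le)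
          _ = Q * δ ^ (1-K₂) := by rw [hQdef]; ring
        have hC₂mono : (∫ t in Ioc δ 1, a t * v'' t ^ 2) ≤ C₂ := by
          rw [hC₂def]
          refine setIntegral_mono_set hav''sqIoc ?_ (HasSubset.Subset.eventuallyLE hsub)
          refine (ae_restrict_iff' measurableSet_Ioc).2 (ae_of_all _ fun x hx => ?_)
          exact mul_nonneg (hapos x hx).le (sq_nonneg _)
        have hlamsq : δ ^ ((1:ℝ) - K₂) = lam * lam := by
          rw [hlam, ← Real.rpow_add hδ.1]
          norm_num
        calc |v' δ| ≤ ∫ t in Ioc δ 1, |v'' t| := h1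
        _ ≤ (2*lam)⁻¹ * (∫ t in Ioc δ 1, (a t)⁻¹)
            + lam/2 * (∫ t in Ioc δ 1, a t * v'' t ^ 2) := h3
        _ ≤ (2*lam)⁻¹ * (Q * δ ^ (1-K₂)) + lam/2 * C₂ := by
            refine add_le_add (mul_le_mul_of_nonneg_left h4 (by positivity))
              (mul_le_mul_of_nonneg_left hC₂mono (by positivity))
        _ = (Q + C₂)/2 * lam := by
            have hne : lam ≠ 0 := hlampos.ne'
            rw [hlamsq]
            field_simp
      -- squeeze
      have hp : 0 < (3 - K₂)/2 := by linarith
      have htz : Tendsto (fun δ : ℝ => (M1 * ((Q + C₂)/2)) * δ ^ ((3-K₂)/2))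
          (𝓝[>] (0:ℝ)) (𝓝 0) := by
        have hcA : ContinuousAt (fun x : ℝ => x ^ ((3-K₂)/2)) 0 :=
          Real.continuousAt_rpow_const 0 _ (Or.inr hp.le)
        have h0 : (0:ℝ) ^ ((3-K₂)/2) = 0 := Real.zero_rpow hp.ne'
        have h1 := (hcA.tendsto.mono_left (nhdsWithin_le_nhds (s := Ioi (0:ℝ)))).const_mul (M1 * ((Q + C₂)/2))
        rw [h0, mul_zero] at h1
        exact h1
      rw [tendsto_zero_iff_abs_tendsto_zero]
      refine squeeze_zero' (Eventually.of_forall fun δ => abs_nonneg _) ?_ htz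
      filter_upwards [hIocMem] with δ hδ
      have hcomb : |G δ| * |v' δ| ≤ (M1 * δ) * ((Q + C₂)/2 * δ ^ ((1-K₂)/2)) :=
        mul_le_mul (hGbd δ hδ) (hv'bd δ hδ) (abs_nonneg _)
          (mul_nonneg hM1_0 hδ.1.le)
      have hδpow : δ * δ ^ ((1-K₂)/2) = δ ^ ((3-K₂)/2) := by
        nth_rewrite 1 [← Real.rpow_one δ]
        rw [← Real.rpow_add hδ.1]
        congr 1
        ring
      calc |G δ * v' δ| = |G δ| * |v' δ| := abs_mul _ _
      _ ≤ (M1 * δ) * ((Q + C₂)/2 * δ ^ ((1-K₂)/2)) := hcomb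
      _ = (M1 * ((Q + C₂)/2)) * (δ * δ ^ ((1-K₂)/2)) := by ring
      _ = (M1 * ((Q + C₂)/2)) * δ ^ ((3-K₂)/2) := by rw [hδpow]
  -- assemble
  have hEG : Tendsto (fun δ => -(G δ * v' δ) - ∫ x in Ioc δ 1, a x * u'' x * v'' x)
      (𝓝[>] (0:ℝ))
      (𝓝 (-(0:ℝ) - ∫ x in Ioc (0:ℝ) 1, a x * u'' x * v'' x)) := hE.neg.sub hD
  have hC' : Tendsto (fun δ => ∫ x in Ioc δ 1, G' x * v' x) (𝓝[>] (0:ℝ))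
      (𝓝 (-(0:ℝ) - ∫ x in Ioc (0:ℝ) 1, a x * u'' x * v'' x)) := by
    refine Tendsto.congr' ?_ hEG
    filter_upwards [hIooMem] with δ hδ
    exact (claimB δ hδ).symm
  have huniq := tendsto_nhds_unique hC hC'
  constructor
  · have e1 : (∫ x in Ioo (0:ℝ) 1, G'' x * v x) = ∫ x in Ioc (0:ℝ) 1, G'' x * v x :=
      setIntegral_congr_set Ioo_ae_eq_Ioc
    have e2 : (∫ x in Ioo (0:ℝ) 1, a x * u'' x * v'' x)
        = ∫ x in Ioc (0:ℝ) 1, a x * u'' x * v'' x :=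
      setIntegral_congr_set Ioo_ae_eq_Ioc
    rw [e1, e2]
    linarith
  · refine Tendsto.congr' ?_ hE
    filter_upwards [hIocMem] with δ hδ
    rw [hG_eq δ hδ]
end
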